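/- arXiv:2007.15623 — 2 statements merged into one kernel-verified Lean document; each statement's English description precedes it below -/
import Mathlib

section
/- Let ℙ be a probability measure on ℝ^d with support contained in the ball B_R(0), let L ≥ 1, f ∈ W^L(spt ℙ), and m ∈ ℕ. Then there exists a finite ReLU network f_m with L hidden layers of widths m, m², …, m^L (outermost to innermost), f_m(x) = Σ_{i_L=1}^{m} a^L_{i_L} σ( Σ_{i_{L−1}=1}^{m²} a^{L−1}_{i_L i_{L−1}} σ( ⋯ σ( Σ_{i_1=1}^{m^L} a¹_{i_2 i_1} σ( Σ_{i_0=1}^{d+1} a⁰_{i_1 i_0} x_{i_0} ) ) ⋯ ) ) ), such that (1) ‖f_m − f‖_{L²(ℙ)} ≤ L(2+R)‖f‖_{W^L}/√m and (2) the path-norm proxy satisfies Σ_{i_L=1}^{m} ⋯ Σ_{i_1=1}^{m^L} Σ_{i_0=1}^{d+1} |a^L_{i_L} a^{L−1}_{i_L i_{L−1}} ⋯ a⁰_{i_1 i_0}| ≤ ‖f‖_{W^L}. -/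
open MeasureTheory Set Filter Topology
open scoped ENNReal NNReal Classical

noncomputable section

/-- The rectified linear unit. -/
def relu (z : ℝ) : ℝ := max z 0

/-- The Borel σ-algebra on `C(K, ℝ)` for the topology of uniform convergence
(= compact-open topology for compact `K`). -/
instance ctsMeasurableSpace {d : ℕ} (K : Set (Fin d → ℝ)) : MeasurableSpace C(K, ℝ) := borel _

/-- `(μp, μn)` is a (Jordan-decomposed) signed-measure representation of `f` over the
class `H ⊆ C(K, ℝ)`: both parts are finite measures concentrated on `H`, and
`f x = ∫ relu (g x) dμp - ∫ relu (g x) dμn` for every `x ∈ K`. -/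
def IsBarronRep {d : ℕ} (K : Set (Fin d → ℝ)) (H : Set C(K, ℝ)) (f : C(K, ℝ))
    (μp μn : Measure C(K, ℝ)) : Prop :=
  IsFiniteMeasure μp ∧ IsFiniteMeasure μn ∧ μp Hᶜ = 0 ∧ μn Hᶜ = 0 ∧
    ∀ x : K, f x = (∫ g : C(K, ℝ), relu (g x) ∂μp) - ∫ g : C(K, ℝ), relu (g x) ∂μn

/-- The generalized Barron norm `‖f‖_{X,K}`, where `H` plays the role of the closed unit
ball `B^X` (realized inside `C(K,ℝ)`): the infimum of the total variation mass over all
signed-measure representations of `f`. -/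
def barronNorm {d : ℕ} (K : Set (Fin d → ℝ)) (H : Set C(K, ℝ)) (f : C(K, ℝ)) : ℝ≥0∞ :=
  ⨅ p : {p : Measure C(K, ℝ) × Measure C(K, ℝ) // IsBarronRep K H f p.1 p.2},
    p.1.1 Set.univ + p.1.2 Set.univ

/-- The neural tree norm `‖·‖_{W^L(K)}`. For `L = 0` it is the norm `‖w‖_{ℓ¹} + |b|` of the
space of affine functions `x ↦ wᵀx + b`; for `L ≥ 1`, `W^L(K) = B_{W^{L-1}(K), K}` is the
generalized Barron space modelled on `X = W^{L-1}(K)`, whose unit ball is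
`{g : treeNorm K (L-1) g ≤ 1}`.  A continuous function `f` belongs to `W^L(K)` iff
`treeNorm K L f ≠ ∞`. -/
def treeNorm {d : ℕ} (K : Set (Fin d → ℝ)) : ℕ → C(K, ℝ) → ℝ≥0∞
  | 0, f =>
    ⨅ p : {p : (Fin d → ℝ) × ℝ //
        ∀ x : K, f x = (∑ i : Fin d, p.1 i * (x : Fin d → ℝ) i) + p.2},
      ENNReal.ofReal ((∑ i : Fin d, |p.1.1 i|) + |p.1.2|)
  | (L + 1), f => barronNorm K {g : C(K, ℝ) | treeNorm K L g ≤ 1} f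

/-- Hidden unit values of a fully connected ReLU network: `hiddenLayer d m a x ℓ j` is the
output of the `j`-th unit in the `(ℓ+1)`-th hidden layer (of width `m (ℓ+1)`), on input `x`
(with the convention `x_{d+1} = 1` handled by the bias weight `a 0 j d`). -/
def hiddenLayer (d : ℕ) (m : ℕ → ℕ) (a : ℕ → ℕ → ℕ → ℝ) (x : Fin d → ℝ) : ℕ → ℕ → ℝ
  | 0, j => relu ((∑ i : Fin d, a 0 j i.val * x i) + a 0 j d)
  | (ℓ + 1), j => relu (∑ i ∈ Finset.range (m (ℓ + 1)), a (ℓ + 1) j i * hiddenLayer d m a x ℓ i)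

/-- Realization of a finite fully connected ReLU network with `L ≥ 1` hidden layers,
hidden-layer widths `m 1, …, m L`, outer coefficients `c` and weights `a`. -/
def netRealize (d L : ℕ) (m : ℕ → ℕ) (c : ℕ → ℝ) (a : ℕ → ℕ → ℕ → ℝ) (x : Fin d → ℝ) : ℝ :=
  ∑ i ∈ Finset.range (m L), c i * hiddenLayer d m a x (L - 1) i

/-- Sum over all paths below a given hidden unit of the products of absolute weights. -/
def pathBelow (d : ℕ) (m : ℕ → ℕ) (a : ℕ → ℕ → ℕ → ℝ) : ℕ → ℕ → ℝ
  | 0, j => ∑ i ∈ Finset.range (d + 1), |a 0 j i|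
  | (ℓ + 1), j => ∑ i ∈ Finset.range (m (ℓ + 1)), |a (ℓ + 1) j i| * pathBelow d m a ℓ i

/-- The path-norm proxy `Σ_{i_L,…,i_0} |a^L_{i_L} a^{L-1}_{i_L i_{L-1}} ⋯ a⁰_{i_1 i_0}|`
of a finite ReLU network with `L ≥ 1` hidden layers. -/
def pathProxy (d L : ℕ) (m : ℕ → ℕ) (c : ℕ → ℝ) (a : ℕ → ℕ → ℕ → ℝ) : ℝ :=
  ∑ i ∈ Finset.range (m L), |c i| * pathBelow d m a (L - 1) i

/-- The support of a measure: all points whose every open neighbourhood has positive mass. -/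
def msupport {d : ℕ} (P : Measure (Fin d → ℝ)) : Set (Fin d → ℝ) :=
  {x | ∀ U : Set (Fin d → ℝ), IsOpen U → x ∈ U → 0 < P U}


namespace DirectApprox
noncomputable section

lemma relu_nonneg (z : ℝ) : 0 ≤ relu z := le_max_right _ _
lemma relu_le_abs (z : ℝ) : relu z ≤ |z| := max_le (le_abs_self _) (abs_nonneg _)
lemma abs_relu (z : ℝ) : |relu z| ≤ |z| := by
  rw [abs_of_nonneg (relu_nonneg z)]; exact relu_le_abs z
lemma abs_relu_sub (a b : ℝ) : |relu a - relu b| ≤ |a - b| :=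
  abs_max_sub_max_le_abs a b 0
lemma continuous_relu : Continuous relu := continuous_id.max continuous_const

/-- Finite trees for tree-structured ReLU networks. -/
inductive TNet (d : ℕ) : Type
  | leaf : (Fin d → ℝ) → ℝ → TNet d
  | node : (ℕ → ℝ) → (ℕ → TNet d) → TNet d

variable {d : ℕ}

/-- Pre-activation value computed by a tree network (branching `m`). -/
def preReal (m : ℕ) : TNet d → (Fin d → ℝ) → ℝ
  | .leaf w b, x => (∑ i, w i * x i) + b
  | .node c kids, x => ∑ i ∈ Finset.range m, c i * relu (preReal m (kids i) x)

/-- Path norm of a tree network. -/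
def pathW (m : ℕ) : TNet d → ℝ
  | .leaf w b => (∑ i, |w i|) + |b|
  | .node c kids => ∑ i ∈ Finset.range m, |c i| * pathW m (kids i)

inductive IsDepth (m : ℕ) : ℕ → TNet d → Prop
  | leaf (w b) : IsDepth m 0 (.leaf w b)
  | node (c kids ℓ) : (∀ i, IsDepth m ℓ (kids i)) → IsDepth m (ℓ + 1) (.node c kids)

def zeroTree (d : ℕ) : ℕ → TNet d
  | 0 => .leaf 0 0
  | (ℓ + 1) => .node 0 (fun _ => zeroTree d (ℓ))

lemma zeroTree_depth (m ℓ : ℕ) : IsDepth (d := d) m ℓ (zeroTree d ℓ) := by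
  induction ℓ with
  | zero => exact .leaf 0 0
  | succ n ih => exact .node _ _ n (fun _ => ih)

@[simp] lemma preReal_zeroTree (m ℓ : ℕ) (x : Fin d → ℝ) : preReal m (zeroTree d ℓ) x = 0 := by
  cases ℓ with
  | zero => simp [zeroTree, preReal]
  | succ n => simp [zeroTree, preReal]

@[simp] lemma pathW_zeroTree (m ℓ : ℕ) : pathW m (zeroTree d ℓ) = 0 := by
  cases ℓ with
  | zero => simp [zeroTree, pathW]
  | succ n => simp [zeroTree, pathW]

def child : TNet d → ℕ → TNet d
  | .leaf w b, _ => .leaf w b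
  | .node _ kids, i => kids i

def nodeCoef : TNet d → ℕ → ℝ
  | .leaf _ _, _ => 0
  | .node c _, i => c i

def leafW : TNet d → (Fin d → ℝ)
  | .leaf w _ => w
  | .node _ _ => 0

def leafB : TNet d → ℝ
  | .leaf _ b => b
  | .node _ _ => 0

/-- Subtree at depth `k` below the root, at position `j` (base-`m` indexing). -/
def subAt (m : ℕ) : ℕ → TNet d → ℕ → TNet d
  | 0, t, _ => t
  | (k + 1), t, j => child (subAt m k t (j / m)) (j % m)

lemma isDepth_zero_elim {m : ℕ} {t : TNet d} (h : IsDepth m 0 t) :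
    ∃ w b, t = .leaf w b := by
  cases h with
  | leaf w b => exact ⟨w, b, rfl⟩

lemma isDepth_succ_elim {m ℓ : ℕ} {t : TNet d} (h : IsDepth m (ℓ + 1) t) :
    ∃ c kids, t = .node c kids ∧ ∀ i, IsDepth m ℓ (kids i) := by
  cases h with
  | node c kids _ hkids => exact ⟨c, kids, rfl, hkids⟩

lemma isDepth_subAt {m n : ℕ} {t : TNet d} (h : IsDepth m n t) :
    ∀ k, k ≤ n → ∀ j, IsDepth m (n - k) (subAt m k t j) := by
  intro k
  induction k with
  | zero => intro _ j; simpa [subAt] using h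
  | succ k ih =>
    intro hk j
    have h1 : IsDepth m (n - k) (subAt m k t (j / m)) := ih (by omega) (j / m)
    have h2 : n - k = (n - (k + 1)) + 1 := by omega
    rw [h2] at h1
    obtain ⟨c, kids, heq, hkids⟩ := isDepth_succ_elim h1
    rw [subAt, heq, child]
    exact hkids (j % m)

/-- Flattened weight arrays of a tree network of depth `L`. -/
def aOf (m L : ℕ) (T : TNet d) : ℕ → ℕ → ℕ → ℝ
  | 0, j, i => if h : i < d then leafW (subAt m L T j) ⟨i, h⟩ else leafB (subAt m L T j)
  | (ℓ + 1), j, i =>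
      if j * m ≤ i ∧ i < j * m + m then nodeCoef (subAt m (L - (ℓ + 1)) T j) (i - j * m) else 0

lemma subAt_child {m : ℕ} (k : ℕ) (T : TNet d) (j r : ℕ) (hr : r < m) :
    subAt m (k + 1) T (j * m + r) = child (subAt m k T j) r := by
  have h1 : (j * m + r) / m = j := by
    rw [add_comm, mul_comm, Nat.add_mul_div_left _ _ (by omega : 0 < m), Nat.div_eq_of_lt hr,
      zero_add]
  have h2 : (j * m + r) % m = r := by
    rw [add_comm, mul_comm, Nat.add_mul_mod_self_left, Nat.mod_eq_of_lt hr]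
  rw [subAt, h1, h2]

lemma flatten_eval {m L : ℕ} (hm : 0 < m) {T : TNet d} (hT : IsDepth m L T)
    (x : Fin d → ℝ) : ∀ ℓ, ℓ < L → ∀ j, j < m ^ (L - ℓ) →
    hiddenLayer d (fun ℓ' => m ^ (L + 1 - ℓ')) (aOf m L T) x ℓ j
      = relu (preReal m (subAt m (L - ℓ) T j) x) := by
  intro ℓ
  induction ℓ with
  | zero =>
    intro hℓ j hj
    obtain ⟨w, b, hleaf⟩ := isDepth_zero_elim (by simpa using isDepth_subAt hT L le_rfl j)
    rw [hiddenLayer]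
    congr 1
    rw [Nat.sub_zero, hleaf, preReal]
    congr 1
    · apply Finset.sum_congr rfl
      intro i _
      rw [aOf, dif_pos i.isLt, hleaf, leafW, Fin.eta]
    · rw [aOf, dif_neg (lt_irrefl d), hleaf, leafB]
  | succ ℓ ih =>
    intro hℓ j hj
    rw [hiddenLayer]
    congr 1
    have hsub : IsDepth m (ℓ + 1) (subAt m (L - (ℓ + 1)) T j) := by
      have := isDepth_subAt hT (L - (ℓ + 1)) (by omega) j
      rwa [show L - (L - (ℓ + 1)) = ℓ + 1 by omega] at this
    obtain ⟨c, kids, hnode, hkids⟩ := isDepth_succ_elim hsub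
    have hblock : j * m + m ≤ m ^ (L - ℓ) := by
      have h1 : j + 1 ≤ m ^ (L - (ℓ + 1)) := hj
      calc j * m + m = (j + 1) * m := by ring
      _ ≤ m ^ (L - (ℓ + 1)) * m := Nat.mul_le_mul_right m h1
      _ = m ^ (L - ℓ) := by rw [← pow_succ]; congr 1; omega
    have hw : L + 1 - (ℓ + 1) = L - ℓ := by omega
    have hzero : ∀ i ∈ Finset.range (m ^ (L - ℓ)), i ∉ Finset.Ico (j * m) (j * m + m) →
        aOf m L T (ℓ + 1) j i * hiddenLayer d (fun ℓ' => m ^ (L + 1 - ℓ')) (aOf m L T) x ℓ i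
          = 0 := by
      intro i _ hi
      rw [Finset.mem_Ico] at hi
      have : aOf m L T (ℓ + 1) j i = 0 := by
        rw [aOf, if_neg (by omega)]
      rw [this, zero_mul]
    have hss : Finset.Ico (j * m) (j * m + m) ⊆ Finset.range (m ^ (L - ℓ)) := by
      intro i hi
      rw [Finset.mem_Ico] at hi
      rw [Finset.mem_range]
      omega
    rw [hw, ← Finset.sum_subset hss hzero, Finset.sum_Ico_eq_sum_range]
    rw [hnode, preReal]
    apply Finset.sum_congr (by congr 1; omega)
    intro k hk
    rw [Finset.mem_range] at hk
    have hk' : k < m := by omega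
    have e1 : aOf m L T (ℓ + 1) j (j * m + k) = c k := by
      rw [aOf, if_pos (by constructor <;> omega)]
      rw [show j * m + k - j * m = k by omega, hnode, nodeCoef]
    have e2 : subAt m (L - ℓ) T (j * m + k) = kids k := by
      rw [show L - ℓ = (L - (ℓ + 1)) + 1 by omega, subAt_child _ _ _ _ hk', hnode, child]
    have e3 : hiddenLayer d (fun ℓ' => m ^ (L + 1 - ℓ')) (aOf m L T) x ℓ (j * m + k)
        = relu (preReal m (kids k) x) := by
      rw [ih (by omega) (j * m + k) (by omega), e2]
    rw [e1, e3]

lemma flatten_path {m L : ℕ} (hm : 0 < m) {T : TNet d} (hT : IsDepth m L T) :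
    ∀ ℓ, ℓ < L → ∀ j, j < m ^ (L - ℓ) →
    pathBelow d (fun ℓ' => m ^ (L + 1 - ℓ')) (aOf m L T) ℓ j
      = pathW m (subAt m (L - ℓ) T j) := by
  intro ℓ
  induction ℓ with
  | zero =>
    intro hℓ j hj
    obtain ⟨w, b, hleaf⟩ := isDepth_zero_elim (by simpa using isDepth_subAt hT L le_rfl j)
    rw [pathBelow, Nat.sub_zero, hleaf, pathW, Finset.sum_range_succ]
    congr 1
    · rw [← Fin.sum_univ_eq_sum_range (fun i => |aOf m L T 0 j i|) d]
      apply Finset.sum_congr rfl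
      intro i _
      rw [aOf, dif_pos i.isLt, hleaf, leafW, Fin.eta]
    · rw [aOf, dif_neg (lt_irrefl d), hleaf, leafB]
  | succ ℓ ih =>
    intro hℓ j hj
    rw [pathBelow]
    have hsub : IsDepth m (ℓ + 1) (subAt m (L - (ℓ + 1)) T j) := by
      have := isDepth_subAt hT (L - (ℓ + 1)) (by omega) j
      rwa [show L - (L - (ℓ + 1)) = ℓ + 1 by omega] at this
    obtain ⟨c, kids, hnode, hkids⟩ := isDepth_succ_elim hsub
    have hblock : j * m + m ≤ m ^ (L - ℓ) := by
      have h1 : j + 1 ≤ m ^ (L - (ℓ + 1)) := hj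
      calc j * m + m = (j + 1) * m := by ring
      _ ≤ m ^ (L - (ℓ + 1)) * m := Nat.mul_le_mul_right m h1
      _ = m ^ (L - ℓ) := by rw [← pow_succ]; congr 1; omega
    have hw : L + 1 - (ℓ + 1) = L - ℓ := by omega
    have hzero : ∀ i ∈ Finset.range (m ^ (L - ℓ)), i ∉ Finset.Ico (j * m) (j * m + m) →
        |aOf m L T (ℓ + 1) j i| * pathBelow d (fun ℓ' => m ^ (L + 1 - ℓ')) (aOf m L T) ℓ i
          = 0 := by
      intro i _ hi
      rw [Finset.mem_Ico] at hi
      have : aOf m L T (ℓ + 1) j i = 0 := by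
        rw [aOf, if_neg (by omega)]
      rw [this, abs_zero, zero_mul]
    have hss : Finset.Ico (j * m) (j * m + m) ⊆ Finset.range (m ^ (L - ℓ)) := by
      intro i hi
      rw [Finset.mem_Ico] at hi
      rw [Finset.mem_range]
      omega
    rw [hw, ← Finset.sum_subset hss hzero, Finset.sum_Ico_eq_sum_range]
    rw [hnode, pathW]
    apply Finset.sum_congr (by congr 1; omega)
    intro k hk
    rw [Finset.mem_range] at hk
    have hk' : k < m := by omega
    have e1 : aOf m L T (ℓ + 1) j (j * m + k) = c k := by
      rw [aOf, if_pos (by constructor <;> omega)]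
      rw [show j * m + k - j * m = k by omega, hnode, nodeCoef]
    have e2 : subAt m (L - ℓ) T (j * m + k) = kids k := by
      rw [show L - ℓ = (L - (ℓ + 1)) + 1 by omega, subAt_child _ _ _ _ hk', hnode, child]
    rw [e1, ih (by omega) (j * m + k) (by omega), e2]

/-! ### Basic properties of the tree norm -/

lemma exists_rep {K : Set (Fin d → ℝ)} {ℓ : ℕ} {g : C(K, ℝ)} {c : ℝ≥0∞}
    (h : treeNorm K (ℓ + 1) g < c) :
    ∃ μp μn : Measure C(K, ℝ), IsBarronRep K {g' : C(K, ℝ) | treeNorm K ℓ g' ≤ 1} g μp μn ∧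
      μp Set.univ + μn Set.univ < c := by
  rw [treeNorm, barronNorm, iInf_lt_iff] at h
  obtain ⟨⟨⟨μp, μn⟩, hrep⟩, hlt⟩ := h
  exact ⟨μp, μn, hrep, hlt⟩

lemma exists_affine_rep {K : Set (Fin d → ℝ)} {g : C(K, ℝ)} {c : ℝ≥0∞}
    (h : treeNorm K 0 g < c) :
    ∃ (w : Fin d → ℝ) (b : ℝ), (∀ x : K, g x = (∑ i, w i * (x : Fin d → ℝ) i) + b) ∧
      ENNReal.ofReal ((∑ i, |w i|) + |b|) < c := by
  rw [treeNorm, iInf_lt_iff] at h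
  obtain ⟨⟨⟨w, b⟩, hp⟩, hlt⟩ := h
  exact ⟨w, b, hp, hlt⟩

lemma treeNorm_zero_fn (K : Set (Fin d → ℝ)) (ℓ : ℕ) : treeNorm K ℓ (0 : C(K, ℝ)) ≤ 1 := by
  cases ℓ with
  | zero =>
    refine le_trans (iInf_le _ ⟨(0, 0), fun x => by simp⟩) ?_
    simp
  | succ ℓ =>
    have hrep : IsBarronRep K {g' : C(K, ℝ) | treeNorm K ℓ g' ≤ 1} 0 0 0 :=
      ⟨inferInstance, inferInstance, by simp, by simp, fun x => by simp⟩
    rw [treeNorm, barronNorm]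
    refine le_trans (iInf_le_of_le ⟨(0, 0), hrep⟩ ?_) zero_le_one
    simp

lemma ae_mem_of_compl_null {α : Type*} [MeasurableSpace α] {μ : Measure α} {s : Set α}
    (h : μ sᶜ = 0) : ∀ᵐ g ∂μ, g ∈ s :=
  MeasureTheory.ae_iff.mpr (by exact h)

lemma integrable_relu_eval {K : Set (Fin d → ℝ)} [CompactSpace K] (μ : Measure C(K, ℝ))
    [IsFiniteMeasure μ] (x : K) (β : ℝ) (hb : ∀ᵐ g ∂μ, |(g : C(K, ℝ)) x| ≤ β) :
    Integrable (fun g : C(K, ℝ) => relu (g x)) μ := by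
  haveI : BorelSpace C(K, ℝ) := ⟨rfl⟩
  have hc : Continuous (fun g : C(K, ℝ) => relu (g x)) :=
    continuous_relu.comp (ContinuousEvalConst.continuous_eval_const x)
  refine (integrable_const β).mono' hc.aestronglyMeasurable ?_
  filter_upwards [hb] with g hg
  rw [Real.norm_eq_abs]
  exact le_trans (abs_relu _) hg

/-- Uniform bound and Lipschitz bound for functions of finite tree norm. -/
lemma tree_bound {K : Set (Fin d → ℝ)} [CompactSpace K] (R : ℝ) (hR : 0 < R)
    (hKR : ∀ (x : K) (i : Fin d), |(x : Fin d → ℝ) i| ≤ R) :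
    ∀ (ℓ : ℕ) (g : C(K, ℝ)) (τ : ℝ), 0 ≤ τ → treeNorm K ℓ g ≤ ENNReal.ofReal τ →
      (∀ x : K, |g x| ≤ (R + 1) * τ) ∧ ∀ x y : K, |g x - g y| ≤ τ * dist x y := by
  intro ℓ
  induction ℓ with
  | zero =>
    intro g τ hτ hg
    have key : ∀ ε, 0 < ε → ∃ (w : Fin d → ℝ) (b : ℝ),
        (∀ x : K, g x = (∑ i, w i * (x : Fin d → ℝ) i) + b) ∧
        (∑ i, |w i|) + |b| < τ + ε := by
      intro ε hε
      have hlt : treeNorm K 0 g < ENNReal.ofReal (τ + ε) :=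
        lt_of_le_of_lt hg ((ENNReal.ofReal_lt_ofReal_iff (by linarith)).mpr (by linarith))
      obtain ⟨w, b, hrep, hN⟩ := exists_affine_rep hlt
      refine ⟨w, b, hrep, ?_⟩
      have h0 : (0:ℝ) ≤ (∑ i, |w i|) + |b| := by positivity
      exact (ENNReal.ofReal_lt_ofReal_iff_of_nonneg h0).mp hN
    constructor
    · intro x
      refine le_of_forall_pos_le_add fun ε hε => ?_
      obtain ⟨w, b, hrep, hN⟩ := key (ε / (R + 1)) (by positivity)
      have hw0 : (0:ℝ) ≤ ∑ i, |w i| := Finset.sum_nonneg fun i _ => abs_nonneg _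
      have h1 : |g x| ≤ (R + 1) * ((∑ i, |w i|) + |b|) := by
        rw [hrep x]
        calc |(∑ i, w i * (x : Fin d → ℝ) i) + b|
            ≤ |∑ i, w i * (x : Fin d → ℝ) i| + |b| := abs_add_le _ _
          _ ≤ (∑ i, |w i * (x : Fin d → ℝ) i|) + |b| := by
              gcongr
              exact Finset.abs_sum_le_sum_abs _ _
          _ ≤ (∑ i, |w i| * R) + |b| := by
              gcongr with i hi
              rw [abs_mul]
              exact mul_le_mul_of_nonneg_left (hKR x i) (abs_nonneg _)
          _ = (∑ i, |w i|) * R + |b| := by rw [Finset.sum_mul]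
          _ ≤ (R + 1) * ((∑ i, |w i|) + |b|) := by nlinarith [abs_nonneg b]
      calc |g x| ≤ (R + 1) * ((∑ i, |w i|) + |b|) := h1
        _ ≤ (R + 1) * (τ + ε / (R + 1)) := by nlinarith [hN]
        _ = (R + 1) * τ + ε := by field_simp
    · intro x y
      refine le_of_forall_pos_le_add fun ε hε => ?_
      obtain ⟨w, b, hrep, hN⟩ := key (ε / (dist x y + 1)) (by positivity)
      have hw0 : (0:ℝ) ≤ ∑ i, |w i| := Finset.sum_nonneg fun i _ => abs_nonneg _
      have hd : ∀ i, |(x : Fin d → ℝ) i - (y : Fin d → ℝ) i| ≤ dist x y := by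
        intro i
        rw [Subtype.dist_eq]
        have := dist_le_pi_dist (x : Fin d → ℝ) (y : Fin d → ℝ) i
        rwa [Real.dist_eq] at this
      have h1 : |g x - g y| ≤ (∑ i, |w i|) * dist x y := by
        rw [hrep x, hrep y]
        have e : (∑ i, w i * (x : Fin d → ℝ) i) + b - ((∑ i, w i * (y : Fin d → ℝ) i) + b)
            = ∑ i, (w i * (x : Fin d → ℝ) i - w i * (y : Fin d → ℝ) i) := by
          rw [Finset.sum_sub_distrib]
          ring
        rw [e]
        calc |∑ i, (w i * (x : Fin d → ℝ) i - w i * (y : Fin d → ℝ) i)|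
            ≤ ∑ i, |w i * (x : Fin d → ℝ) i - w i * (y : Fin d → ℝ) i| :=
              Finset.abs_sum_le_sum_abs _ _
          _ ≤ ∑ i, |w i| * dist x y := by
              refine Finset.sum_le_sum fun i _ => ?_
              rw [← mul_sub, abs_mul]
              exact mul_le_mul_of_nonneg_left (hd i) (abs_nonneg _)
          _ = (∑ i, |w i|) * dist x y := by rw [Finset.sum_mul]
      have hdist : (0:ℝ) ≤ dist x y := dist_nonneg
      calc |g x - g y| ≤ (∑ i, |w i|) * dist x y := h1
        _ ≤ (τ + ε / (dist x y + 1)) * dist x y := by nlinarith [abs_nonneg b]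
        _ ≤ τ * dist x y + ε := by
            rw [add_mul]
            have : ε / (dist x y + 1) * dist x y ≤ ε := by
              rw [div_mul_eq_mul_div, div_le_iff₀ (by linarith)]
              nlinarith
            linarith
  | succ ℓ ih =>
    intro g τ hτ hg
    have key : ∀ ε, 0 < ε → (∀ x : K, |g x| ≤ (R + 1) * (τ + ε)) ∧
        ∀ x y : K, |g x - g y| ≤ (τ + ε) * dist x y := by
      intro ε hε
      have hlt : treeNorm K (ℓ + 1) g < ENNReal.ofReal (τ + ε) :=
        lt_of_le_of_lt hg ((ENNReal.ofReal_lt_ofReal_iff (by linarith)).mpr (by linarith))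
      obtain ⟨μp, μn, hrep, hmass⟩ := exists_rep hlt
      obtain ⟨hfp, hfn, hnullp, hnulln, heq⟩ := hrep
      haveI := hfp; haveI := hfn
      have hMsum : (μp Set.univ).toReal + (μn Set.univ).toReal ≤ τ + ε := by
        have h2 := ENNReal.toReal_le_of_le_ofReal (by linarith) hmass.le
        rwa [ENNReal.toReal_add (measure_ne_top _ _) (measure_ne_top _ _)] at h2
      have bd : ∀ (μ : Measure C(K, ℝ)), IsFiniteMeasure μ →
          μ {g' : C(K, ℝ) | treeNorm K ℓ g' ≤ 1}ᶜ = 0 →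
          (∀ x : K, 0 ≤ (∫ g' : C(K, ℝ), relu (g' x) ∂μ) ∧
            (∫ g' : C(K, ℝ), relu (g' x) ∂μ) ≤ (R + 1) * (μ Set.univ).toReal) ∧
          ∀ x y : K, |(∫ g' : C(K, ℝ), relu (g' x) ∂μ) - ∫ g' : C(K, ℝ), relu (g' y) ∂μ|
            ≤ (μ Set.univ).toReal * dist x y := by
        intro μ hfin hnull
        haveI := hfin
        have hae : ∀ᵐ g' ∂μ, g' ∈ {g' : C(K, ℝ) | treeNorm K ℓ g' ≤ 1} :=
          ae_mem_of_compl_null hnull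
        have haeB : ∀ x : K, ∀ᵐ g' ∂μ, |(g' : C(K, ℝ)) x| ≤ R + 1 := by
          intro x
          filter_upwards [hae] with g' hg'
          have h1 : treeNorm K ℓ g' ≤ ENNReal.ofReal 1 := by
            rw [ENNReal.ofReal_one]; exact hg'
          have := (ih g' 1 zero_le_one h1).1 x
          simpa using this
        have hint : ∀ x : K, Integrable (fun g' : C(K, ℝ) => relu (g' x)) μ :=
          fun x => integrable_relu_eval μ x (R + 1) (haeB x)
        constructor
        · intro x
          refine ⟨integral_nonneg fun g' => relu_nonneg _, ?_⟩
          calc (∫ g' : C(K, ℝ), relu (g' x) ∂μ) ≤ ∫ _ : C(K, ℝ), (R + 1) ∂μ := by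
                refine integral_mono_ae (hint x) (integrable_const _) ?_
                filter_upwards [haeB x] with g' h
                exact le_trans (relu_le_abs _) h
            _ = (R + 1) * (μ Set.univ).toReal := by
                rw [integral_const, smul_eq_mul, mul_comm, measureReal_def]
        · intro x y
          have haeL : ∀ᵐ g' ∂μ, |(g' : C(K, ℝ)) x - g' y| ≤ dist x y := by
            filter_upwards [hae] with g' hg'
            have h1 : treeNorm K ℓ g' ≤ ENNReal.ofReal 1 := by
              rw [ENNReal.ofReal_one]; exact hg'
            have := (ih g' 1 zero_le_one h1).2 x y
            simpa using this
          rw [← integral_sub (hint x) (hint y)]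
          calc |∫ g' : C(K, ℝ), (relu (g' x) - relu (g' y)) ∂μ|
              ≤ ∫ g' : C(K, ℝ), |relu (g' x) - relu (g' y)| ∂μ := by
                simpa [Real.norm_eq_abs] using
                  norm_integral_le_integral_norm (μ := μ)
                    (fun g' : C(K, ℝ) => relu (g' x) - relu (g' y))
            _ ≤ ∫ _ : C(K, ℝ), dist x y ∂μ := by
                refine integral_mono_ae ((hint x).sub (hint y)).abs (integrable_const _) ?_
                filter_upwards [haeL] with g' h
                exact le_trans (abs_relu_sub _ _) h
            _ = (μ Set.univ).toReal * dist x y := by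
                rw [integral_const, smul_eq_mul, measureReal_def]
      obtain ⟨bp, lp⟩ := bd μp hfp hnullp
      obtain ⟨bn, ln⟩ := bd μn hfn hnulln
      constructor
      · intro x
        rw [heq x]
        have h1 := bp x
        have h2 := bn x
        have := abs_sub (∫ g' : C(K, ℝ), relu (g' x) ∂μp) (∫ g' : C(K, ℝ), relu (g' x) ∂μn)
        rw [abs_of_nonneg h1.1, abs_of_nonneg h2.1] at this
        calc |(∫ g' : C(K, ℝ), relu (g' x) ∂μp) - ∫ g' : C(K, ℝ), relu (g' x) ∂μn|
            ≤ (∫ g' : C(K, ℝ), relu (g' x) ∂μp) + ∫ g' : C(K, ℝ), relu (g' x) ∂μn := this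
          _ ≤ (R + 1) * (μp Set.univ).toReal + (R + 1) * (μn Set.univ).toReal :=
              add_le_add h1.2 h2.2
          _ = (R + 1) * ((μp Set.univ).toReal + (μn Set.univ).toReal) := by ring
          _ ≤ (R + 1) * (τ + ε) := by nlinarith [hMsum]
      · intro x y
        rw [heq x, heq y]
        have e : (∫ g' : C(K, ℝ), relu (g' x) ∂μp) - (∫ g' : C(K, ℝ), relu (g' x) ∂μn)
            - ((∫ g' : C(K, ℝ), relu (g' y) ∂μp) - ∫ g' : C(K, ℝ), relu (g' y) ∂μn)
            = ((∫ g' : C(K, ℝ), relu (g' x) ∂μp) - ∫ g' : C(K, ℝ), relu (g' y) ∂μp)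
            - ((∫ g' : C(K, ℝ), relu (g' x) ∂μn) - ∫ g' : C(K, ℝ), relu (g' y) ∂μn) := by ring
        rw [e]
        have hμp0 : (0:ℝ) ≤ (μp Set.univ).toReal := ENNReal.toReal_nonneg
        have hμn0 : (0:ℝ) ≤ (μn Set.univ).toReal := ENNReal.toReal_nonneg
        calc |((∫ g' : C(K, ℝ), relu (g' x) ∂μp) - ∫ g' : C(K, ℝ), relu (g' y) ∂μp)
            - ((∫ g' : C(K, ℝ), relu (g' x) ∂μn) - ∫ g' : C(K, ℝ), relu (g' y) ∂μn)|
            ≤ |(∫ g' : C(K, ℝ), relu (g' x) ∂μp) - ∫ g' : C(K, ℝ), relu (g' y) ∂μp|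
            + |(∫ g' : C(K, ℝ), relu (g' x) ∂μn) - ∫ g' : C(K, ℝ), relu (g' y) ∂μn| :=
              abs_sub _ _
          _ ≤ (μp Set.univ).toReal * dist x y + (μn Set.univ).toReal * dist x y :=
              add_le_add (lp x y) (ln x y)
          _ ≤ (τ + ε) * dist x y := by nlinarith [dist_nonneg (x := x) (y := y), hMsum]
    constructor
    · intro x
      refine le_of_forall_pos_le_add fun ε hε => ?_
      have := (key (ε / (R + 1)) (by positivity)).1 x
      calc |g x| ≤ (R + 1) * (τ + ε / (R + 1)) := this
        _ = (R + 1) * τ + ε := by field_simp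
    · intro x y
      refine le_of_forall_pos_le_add fun ε hε => ?_
      have := (key (ε / (dist x y + 1)) (by positivity)).2 x y
      have hdist : (0:ℝ) ≤ dist x y := dist_nonneg
      calc |g x - g y| ≤ (τ + ε / (dist x y + 1)) * dist x y := this
        _ ≤ τ * dist x y + ε := by
            rw [add_mul]
            have : ε / (dist x y + 1) * dist x y ≤ ε := by
              rw [div_mul_eq_mul_div, div_le_iff₀ (by linarith)]
              nlinarith
            linarith

/-! ### Integration helpers on the compact base set -/

section KInt

variable {K : Set (Fin d → ℝ)} [CompactSpace K] (P' : Measure K) [IsFiniteMeasure P']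

lemma cont_integrable {u : K → ℝ} (hu : Continuous u) : Integrable u P' := by
  rcases isEmpty_or_nonempty K with h | h
  · exact Integrable.of_finite
  obtain ⟨C, hC⟩ := (isCompact_range hu).isBounded.subset_ball 0
  refine (integrable_const C).mono' hu.aestronglyMeasurable (ae_of_all _ fun x => ?_)
  have := hC ⟨x, rfl⟩
  rw [Metric.mem_ball, Real.dist_eq, sub_zero] at this
  simpa using this.le

lemma int_sq_nonneg (u : K → ℝ) : 0 ≤ ∫ x, u x ^ 2 ∂P' :=
  integral_nonneg fun x => sq_nonneg _

lemma int_expand {u v : K → ℝ} (hu : Continuous u) (hv : Continuous v) (s t : ℝ) :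
    ∫ x, (s * u x + t * v x) ^ 2 ∂P'
      = s ^ 2 * ∫ x, u x ^ 2 ∂P' + (2 * s * t) * (∫ x, u x * v x ∂P')
        + t ^ 2 * ∫ x, v x ^ 2 ∂P' := by
  have e : (fun x => (s * u x + t * v x) ^ 2)
      = fun x => s ^ 2 * u x ^ 2 + ((2 * s * t) * (u x * v x) + t ^ 2 * v x ^ 2) :=
    funext fun x => by ring
  have i1 : Integrable (fun x => s ^ 2 * u x ^ 2) P' :=
    cont_integrable P' (continuous_const.mul (hu.pow 2))
  have i2 : Integrable (fun x => (2 * s * t) * (u x * v x)) P' :=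
    cont_integrable P' (continuous_const.mul (hu.mul hv))
  have i3 : Integrable (fun x => t ^ 2 * v x ^ 2) P' :=
    cont_integrable P' (continuous_const.mul (hv.pow 2))
  have i23 : Integrable (fun x => (2 * s * t) * (u x * v x) + t ^ 2 * v x ^ 2) P' := i2.add i3
  rw [e, integral_add i1 i23, integral_add i2 i3, integral_const_mul, integral_const_mul,
    integral_const_mul]
  ring

lemma integral_CS {u v : K → ℝ} (hu : Continuous u) (hv : Continuous v) :
    (∫ x, u x * v x ∂P') ^ 2 ≤ (∫ x, u x ^ 2 ∂P') * ∫ x, v x ^ 2 ∂P' := by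
  have key : ∀ t : ℝ, 0 ≤ (∫ x, u x ^ 2 ∂P') * (t * t) + (2 * ∫ x, u x * v x ∂P') * t
      + ∫ x, v x ^ 2 ∂P' := by
    intro t
    have h0 : 0 ≤ ∫ x, (t * u x + 1 * v x) ^ 2 ∂P' := integral_nonneg fun x => sq_nonneg _
    rw [int_expand P' hu hv t 1] at h0
    nlinarith [h0]
  have := discrim_le_zero key
  rw [discrim] at this
  nlinarith [this]

lemma nrm_triangle {u v : K → ℝ} (hu : Continuous u) (hv : Continuous v) :
    Real.sqrt (∫ x, (u x + v x) ^ 2 ∂P')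
      ≤ Real.sqrt (∫ x, u x ^ 2 ∂P') + Real.sqrt (∫ x, v x ^ 2 ∂P') := by
  set A := ∫ x, u x ^ 2 ∂P' with hA
  set B := ∫ x, v x ^ 2 ∂P' with hB
  have hA0 : 0 ≤ A := int_sq_nonneg P' u
  have hB0 : 0 ≤ B := int_sq_nonneg P' v
  have hC : (∫ x, u x * v x ∂P') ≤ Real.sqrt A * Real.sqrt B := by
    calc (∫ x, u x * v x ∂P') ≤ |∫ x, u x * v x ∂P'| := le_abs_self _
      _ = Real.sqrt ((∫ x, u x * v x ∂P') ^ 2) := (Real.sqrt_sq_eq_abs _).symm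
      _ ≤ Real.sqrt (A * B) := Real.sqrt_le_sqrt (integral_CS P' hu hv)
      _ = Real.sqrt A * Real.sqrt B := Real.sqrt_mul hA0 B
  have hsum : ∫ x, (u x + v x) ^ 2 ∂P' = A + 2 * (∫ x, u x * v x ∂P') + B := by
    have := int_expand P' hu hv 1 1
    simpa using this
  calc Real.sqrt (∫ x, (u x + v x) ^ 2 ∂P')
      ≤ Real.sqrt ((Real.sqrt A + Real.sqrt B) ^ 2) := by
        apply Real.sqrt_le_sqrt
        rw [hsum]
        nlinarith [Real.sq_sqrt hA0, Real.sq_sqrt hB0, Real.sqrt_nonneg A, Real.sqrt_nonneg B]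
    _ = Real.sqrt A + Real.sqrt B := Real.sqrt_sq (by positivity)

lemma nrm_le_bound (hmass : P' Set.univ ≤ 1) {u : K → ℝ} (hu : Continuous u) {C : ℝ}
    (hC : 0 ≤ C) (h : ∀ x, |u x| ≤ C) : Real.sqrt (∫ x, u x ^ 2 ∂P') ≤ C := by
  have h1 : ∫ x, u x ^ 2 ∂P' ≤ C ^ 2 := by
    calc ∫ x, u x ^ 2 ∂P' ≤ ∫ _, C ^ 2 ∂P' := by
          refine integral_mono (cont_integrable P' (hu.pow 2)) (integrable_const _) fun x => ?_
          have := abs_le.mp (h x)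
          exact sq_le_sq' (by linarith [this.1]) this.2
      _ = (P' Set.univ).toReal * C ^ 2 := by rw [integral_const, smul_eq_mul, measureReal_def]
      _ ≤ C ^ 2 := by
          have h2 : (P' Set.univ).toReal ≤ 1 :=
            ENNReal.toReal_le_of_le_ofReal zero_le_one (by simpa [ENNReal.ofReal_one] using hmass)
          nlinarith [sq_nonneg C, ENNReal.toReal_nonneg (a := P' Set.univ)]
  calc Real.sqrt (∫ x, u x ^ 2 ∂P') ≤ Real.sqrt (C ^ 2) := Real.sqrt_le_sqrt h1
    _ = C := Real.sqrt_sq hC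

lemma int_sq_mono {u v : K → ℝ} (hu : Continuous u) (hv : Continuous v)
    (h : ∀ x, |u x| ≤ |v x|) : ∫ x, u x ^ 2 ∂P' ≤ ∫ x, v x ^ 2 ∂P' := by
  refine integral_mono (cont_integrable P' (hu.pow 2)) (cont_integrable P' (hv.pow 2)) fun x => ?_
  rw [← sq_abs (u x), ← sq_abs (v x)]
  exact pow_le_pow_left₀ (abs_nonneg _) (h x) 2

lemma nrm_sum_le (s : Finset ℕ) (u : ℕ → K → ℝ) (hu : ∀ i, Continuous (u i)) :
    Real.sqrt (∫ x, (∑ i ∈ s, u i x) ^ 2 ∂P')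
      ≤ ∑ i ∈ s, Real.sqrt (∫ x, u i x ^ 2 ∂P') := by
  classical
  induction s using Finset.cons_induction with
  | empty => simp
  | cons a s ha ih =>
    simp only [Finset.sum_cons]
    calc Real.sqrt (∫ x, (u a x + ∑ i ∈ s, u i x) ^ 2 ∂P')
        ≤ Real.sqrt (∫ x, u a x ^ 2 ∂P') + Real.sqrt (∫ x, (∑ i ∈ s, u i x) ^ 2 ∂P') :=
          nrm_triangle P' (hu a) (continuous_finset_sum s fun i _ => hu i)
      _ ≤ _ := by
          exact add_le_add le_rfl ih

/-- Finite-dictionary Maurey sampling. -/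
lemma maurey (hmass : P' Set.univ ≤ 1) (N : ℕ) (p : ℕ → ℝ) (hp : ∀ k, 0 ≤ p k)
    (hp1 : ∑ k ∈ Finset.range N, p k = 1)
    (u : ℕ → K → ℝ) (hu : ∀ k, Continuous (u k)) (b : ℝ)
    (hub : ∀ k, k < N → ∀ x, |u k x| ≤ b) (n : ℕ) :
    ∃ φ : ℕ → ℕ, (∀ j, φ j < N) ∧
      ∫ x, (∑ j ∈ Finset.range n, u (φ j) x
        - n * ∑ k ∈ Finset.range N, p k * u k x) ^ 2 ∂P' ≤ b ^ 2 * n := by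
  have hN : 0 < N := by
    by_contra h
    rw [show N = 0 by omega] at hp1
    simp at hp1
  have hmassR : (P' Set.univ).toReal ≤ 1 :=
    ENNReal.toReal_le_of_le_ofReal zero_le_one (by simpa [ENNReal.ofReal_one] using hmass)
  set F : K → ℝ := fun x => ∑ k ∈ Finset.range N, p k * u k x with hF
  have hFc : Continuous F :=
    continuous_finset_sum _ fun k _ => continuous_const.mul (hu k)
  induction n with
  | zero =>
    exact ⟨fun _ => 0, fun _ => hN, by simp⟩
  | succ n ihn =>
    obtain ⟨φ, hφ, herr⟩ := ihn
    set e : K → ℝ := fun x => ∑ j ∈ Finset.range n, u (φ j) x - n * F x with he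
    have hec : Continuous e :=
      (continuous_finset_sum _ fun j _ => hu (φ j)).sub (continuous_const.mul hFc)
    have hukc : ∀ k, Continuous (fun x => u k x - F x) := fun k => (hu k).sub hFc
    set Q : ℕ → ℝ := fun k =>
      2 * (∫ x, e x * (u k x - F x) ∂P') + ∫ x, (u k x - F x) ^ 2 ∂P' with hQ
    -- first moment vanishes
    have s1 : ∑ k ∈ Finset.range N, p k * (∫ x, e x * (u k x - F x) ∂P') = 0 := by
      have e2 : ∀ k ∈ Finset.range N, p k * (∫ x, e x * (u k x - F x) ∂P')
          = ∫ x, p k * (e x * (u k x - F x)) ∂P' :=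
        fun k _ => (integral_const_mul _ _).symm
      rw [Finset.sum_congr rfl e2,
        ← integral_finset_sum _ (fun k _ => (cont_integrable P'
          (continuous_const.mul (hec.mul (hukc k))) :
            Integrable (fun x => p k * (e x * (u k x - F x))) P'))]
      have hzero : (fun x : K => ∑ k ∈ Finset.range N, p k * (e x * (u k x - F x)))
          = fun _ => (0 : ℝ) := by
        funext x
        have e3 : ∀ k ∈ Finset.range N, p k * (e x * (u k x - F x))
            = e x * (p k * u k x) - e x * F x * p k := fun k _ => by ring
        rw [Finset.sum_congr rfl e3, Finset.sum_sub_distrib, ← Finset.mul_sum, ← Finset.mul_sum,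
          hp1]
        have e4 : ∑ k ∈ Finset.range N, p k * u k x = F x := rfl
        rw [e4]
        ring
      rw [hzero, integral_zero]
    -- second moment bound
    have hpt : ∀ x : K, ∑ k ∈ Finset.range N, p k * (u k x - F x) ^ 2 ≤ b ^ 2 := by
      intro x
      have e1 : ∑ k ∈ Finset.range N, p k * (u k x - F x) ^ 2
          = (∑ k ∈ Finset.range N, p k * u k x ^ 2) - F x ^ 2 := by
        have e3 : ∀ k ∈ Finset.range N, p k * (u k x - F x) ^ 2
            = p k * u k x ^ 2 - 2 * F x * (p k * u k x) + F x ^ 2 * p k := fun k _ => by ring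
        rw [Finset.sum_congr rfl e3, Finset.sum_add_distrib, Finset.sum_sub_distrib,
          ← Finset.mul_sum, ← Finset.mul_sum, hp1]
        have e4 : ∑ k ∈ Finset.range N, p k * u k x = F x := rfl
        rw [e4]
        ring
      have h2 : ∑ k ∈ Finset.range N, p k * u k x ^ 2 ≤ b ^ 2 := by
        calc ∑ k ∈ Finset.range N, p k * u k x ^ 2 ≤ ∑ k ∈ Finset.range N, p k * b ^ 2 := by
              refine Finset.sum_le_sum fun k hk => ?_
              have h3 := abs_le.mp (hub k (Finset.mem_range.mp hk) x)
              have h4 : u k x ^ 2 ≤ b ^ 2 := sq_le_sq' (by linarith [h3.1]) h3.2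
              nlinarith [hp k]
          _ = b ^ 2 := by rw [← Finset.sum_mul, hp1, one_mul]
      rw [e1]
      nlinarith [sq_nonneg (F x)]
    have t2 : ∑ k ∈ Finset.range N, p k * (∫ x, (u k x - F x) ^ 2 ∂P') ≤ b ^ 2 := by
      have e2 : ∀ k ∈ Finset.range N, p k * (∫ x, (u k x - F x) ^ 2 ∂P')
          = ∫ x, p k * (u k x - F x) ^ 2 ∂P' := fun k _ => (integral_const_mul _ _).symm
      rw [Finset.sum_congr rfl e2,
        ← integral_finset_sum _ (fun k _ => (cont_integrable P'
          (continuous_const.mul ((hukc k).pow 2)) :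
            Integrable (fun x => p k * (u k x - F x) ^ 2) P'))]
      calc ∫ x, ∑ k ∈ Finset.range N, p k * (u k x - F x) ^ 2 ∂P' ≤ ∫ _, b ^ 2 ∂P' := by
            refine integral_mono (cont_integrable P' (continuous_finset_sum _
              fun k _ => continuous_const.mul ((hukc k).pow 2))) (integrable_const _) hpt
        _ = (P' Set.univ).toReal * b ^ 2 := by rw [integral_const, smul_eq_mul, measureReal_def]
        _ ≤ b ^ 2 := by nlinarith [sq_nonneg b, ENNReal.toReal_nonneg (a := P' Set.univ)]
    -- a good dictionary element exists
    have havg : ∑ k ∈ Finset.range N, p k * Q k ≤ b ^ 2 := by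
      calc ∑ k ∈ Finset.range N, p k * Q k
          = 2 * (∑ k ∈ Finset.range N, p k * (∫ x, e x * (u k x - F x) ∂P'))
            + ∑ k ∈ Finset.range N, p k * (∫ x, (u k x - F x) ^ 2 ∂P') := by
            rw [Finset.mul_sum, ← Finset.sum_add_distrib]
            exact Finset.sum_congr rfl fun k _ => by simp only [hQ]; ring
        _ ≤ b ^ 2 := by rw [s1]; simpa using t2
    have exk : ∃ k, k < N ∧ Q k ≤ b ^ 2 := by
      by_contra hcon
      push_neg at hcon
      set S := (Finset.range N).filter (fun k => 0 < p k) with hS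
      have hSsum : ∑ k ∈ S, p k = 1 := by
        rw [hS, Finset.sum_filter_of_ne, hp1]
        intro k _ hk
        exact lt_of_le_of_ne (hp k) (Ne.symm hk)
      have hSne : S.Nonempty := by
        rw [Finset.nonempty_iff_ne_empty]
        intro hemp
        rw [hemp, Finset.sum_empty] at hSsum
        norm_num at hSsum
      have hQS : ∑ k ∈ S, p k * Q k = ∑ k ∈ Finset.range N, p k * Q k := by
        rw [hS, Finset.sum_filter_of_ne]
        intro k _ hk
        rcases (hp k).lt_or_eq with h | h
        · exact h
        · exfalso; rw [← h, zero_mul] at hk; exact hk rfl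
      have hlt : ∑ k ∈ S, p k * b ^ 2 < ∑ k ∈ S, p k * Q k := by
        refine Finset.sum_lt_sum_of_nonempty hSne fun k hk => ?_
        rw [hS, Finset.mem_filter, Finset.mem_range] at hk
        exact mul_lt_mul_of_pos_left (hcon k hk.1) hk.2
      rw [← Finset.sum_mul, hSsum, one_mul] at hlt
      rw [hQS] at hlt
      linarith [havg]
    obtain ⟨k, hkN, hQk⟩ := exk
    refine ⟨fun j => if j = n then k else φ j, fun j => by by_cases h : j = n <;> simp [h, hkN, hφ j], ?_⟩
    have hsum : ∀ x : K, ∑ j ∈ Finset.range (n + 1), u ((fun j => if j = n then k else φ j) j) x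
        = (∑ j ∈ Finset.range n, u (φ j) x) + u k x := by
      intro x
      rw [Finset.sum_range_succ]
      simp only [if_pos rfl]
      congr 1
      refine Finset.sum_congr rfl fun j hj => ?_
      rw [Finset.mem_range] at hj
      rw [if_neg (by omega)]
    have hpoint : (fun x : K => (∑ j ∈ Finset.range (n + 1),
          u ((fun j => if j = n then k else φ j) j) x
          - ((n : ℝ) + 1) * ∑ k' ∈ Finset.range N, p k' * u k' x) ^ 2)
        = fun x => (1 * e x + 1 * (u k x - F x)) ^ 2 := by
      funext x
      rw [hsum x]
      have e4 : ∑ k' ∈ Finset.range N, p k' * u k' x = F x := rfl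
      rw [e4, he]
      ring
    have goalcast : ∫ x, (∑ j ∈ Finset.range (n + 1),
          u ((fun j => if j = n then k else φ j) j) x
          - ((n + 1 : ℕ) : ℝ) * ∑ k' ∈ Finset.range N, p k' * u k' x) ^ 2 ∂P'
        ≤ b ^ 2 * ((n + 1 : ℕ) : ℝ) := by
      push_cast
      rw [hpoint, int_expand P' hec (hukc k) 1 1]
      have hherr : ∫ x, e x ^ 2 ∂P' ≤ b ^ 2 * n := herr
      simp only [one_pow, one_mul, mul_one]
      simp only [hQ] at hQk
      linarith [hherr, hQk]
    exact goalcast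


end KInt

/-- Discretization of a Barron-type representation into a finite convex-type combination. -/
lemma disc {K : Set (Fin d → ℝ)} [CompactSpace K] (μ : Measure C(K, ℝ)) [IsFiniteMeasure μ]
    (S : Set C(K, ℝ)) (hS0 : (0 : C(K, ℝ)) ∈ S) (β : ℝ) (hβ : 0 < β)
    (hSb : ∀ g ∈ S, ∀ x : K, |g x| ≤ β)
    (hSl : ∀ g ∈ S, ∀ x y : K, |g x - g y| ≤ dist x y)
    (hμS : μ Sᶜ = 0) (δ : ℝ) (hδ : 0 < δ) :
    ∃ (N : ℕ) (lam : ℕ → ℝ) (v : ℕ → C(K, ℝ)),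
      (∀ k, 0 ≤ lam k) ∧ (∑ k ∈ Finset.range N, lam k ≤ (μ Set.univ).toReal) ∧
      (∀ k, v k ∈ S) ∧
      ∀ x : K, |(∫ g : C(K, ℝ), relu (g x) ∂μ)
        - ∑ k ∈ Finset.range N, lam k * relu (v k x)| ≤ δ := by
  haveI : BorelSpace C(K, ℝ) := ⟨rfl⟩
  set M := (μ Set.univ).toReal with hM
  have hM0 : 0 ≤ M := ENNReal.toReal_nonneg
  set δ1 : ℝ := δ / (8 * (M + 1)) with hδ1
  have hδ1pos : 0 < δ1 := by positivity
  set δ2 : ℝ := δ / (2 * β) with hδ2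
  have hδ2pos : 0 < δ2 := by positivity
  -- a finite δ1-net of K
  obtain ⟨tset, _, htfin, htcov⟩ :=
    (isCompact_univ : IsCompact (Set.univ : Set K)).finite_cover_balls hδ1pos
  set T := htfin.toFinset with hT
  have hcov' : ∀ y : K, ∃ z : ↥T, dist y (z : K) < δ1 := by
    intro y
    have := htcov (Set.mem_univ y)
    rw [Set.mem_iUnion₂] at this
    obtain ⟨z, hz1, hz2⟩ := this
    exact ⟨⟨z, htfin.mem_toFinset.mpr hz1⟩, by rwa [Metric.mem_ball] at hz2⟩
  set Φ : C(K, ℝ) → (↥T → ℝ) := fun g z => g (z : K) with hΦ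
  have hΦc : Continuous Φ :=
    continuous_pi fun z => ContinuousEvalConst.continuous_eval_const _
  set zs := TopologicalSpace.denseSeq (↥T → ℝ) with hzs
  set SB : ℕ → Set C(K, ℝ) := fun i => Φ ⁻¹' Metric.ball (zs i) δ1 with hSB
  have hSmeas : ∀ i, MeasurableSet (SB i) :=
    fun i => (Metric.isOpen_ball.preimage hΦc).measurableSet
  have hScov : ∀ g, ∃ i, g ∈ SB i := by
    intro g
    obtain ⟨i, hi⟩ :=
      (TopologicalSpace.denseRange_denseSeq (↥T → ℝ)).exists_dist_lt (Φ g) hδ1pos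
    exact ⟨i, by rwa [hSB, Set.mem_preimage, Metric.mem_ball]⟩
  -- measurable core of S
  obtain ⟨D, hSD, hDmeas, hDnull⟩ := exists_measurable_superset_of_null hμS
  set G := Dᶜ with hG
  have hGmeas : MeasurableSet G := hDmeas.compl
  have hGS : G ⊆ S := by
    rw [hG, Set.compl_subset_comm]
    exact hSD
  have hGc : μ Gᶜ = 0 := by rw [hG, compl_compl]; exact hDnull
  -- the disjointified cells
  set A : ℕ → Set C(K, ℝ) := fun i => (SB i \ ⋃ (j : ℕ) (_ : j < i), SB j) ∩ G with hA
  have hAmeas : ∀ i, MeasurableSet (A i) := by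
    intro i
    exact (((hSmeas i).diff (MeasurableSet.iUnion fun j =>
      MeasurableSet.iUnion fun _ => hSmeas j)).inter hGmeas)
  have hAS : ∀ i, A i ⊆ S := fun i => le_trans (Set.inter_subset_right) hGS
  have hASB : ∀ i, A i ⊆ SB i :=
    fun i => le_trans (Set.inter_subset_left) Set.diff_subset
  have hdisj : ∀ i j, i < j → Disjoint (A i) (A j) := by
    intro i j hij
    rw [Set.disjoint_left]
    intro g hgi hgj
    have h1 : g ∈ SB i := hASB i hgi
    have h2 : g ∉ ⋃ (j' : ℕ) (_ : j' < j), SB j' := fun hmem => hgj.1.2 hmem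
    exact h2 (Set.mem_iUnion₂.mpr ⟨i, hij, h1⟩)
  have hUcov : G ⊆ ⋃ i, A i := by
    intro g hg
    have hex := hScov g
    refine Set.mem_iUnion.mpr ⟨Nat.find hex, ⟨⟨Nat.find_spec hex, ?_⟩, hg⟩⟩
    intro hmem
    obtain ⟨j, hj, hmemj⟩ := Set.mem_iUnion₂.mp hmem
    exact Nat.find_min hex hj hmemj
  set U : ℕ → Set C(K, ℝ) := fun n => ⋃ i ∈ Finset.range n, A i with hU
  have hUmeas : ∀ n, MeasurableSet (U n) :=
    fun n => (Finset.range n).measurableSet_biUnion fun i _ => hAmeas i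
  have hVanti : Antitone fun n => (U n)ᶜ := by
    intro a b hab
    apply Set.compl_subset_compl.mpr
    intro g hg
    obtain ⟨i, hi, hgi⟩ := Set.mem_iUnion₂.mp hg
    exact Set.mem_iUnion₂.mpr ⟨i, Finset.mem_range.mpr (lt_of_lt_of_le
      (Finset.mem_range.mp hi) hab), hgi⟩
  have hVinter : μ (⋂ n, (U n)ᶜ) = 0 := by
    refine measure_mono_null ?_ hGc
    intro g hg
    intro hgG
    have := hUcov hgG
    obtain ⟨i, hgi⟩ := Set.mem_iUnion.mp this
    have := (Set.mem_iInter.mp hg) (i + 1)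
    exact this (Set.mem_iUnion₂.mpr ⟨i, Finset.mem_range.mpr (Nat.lt_succ_self i), hgi⟩)
  have htend : Filter.Tendsto (fun n => μ (U n)ᶜ) Filter.atTop (nhds 0) := by
    have := MeasureTheory.tendsto_measure_iInter_atTop
      (μ := μ) (s := fun n => (U n)ᶜ)
      (fun n => ((hUmeas n).compl).nullMeasurableSet) hVanti ⟨0, measure_ne_top _ _⟩
    rwa [hVinter] at this
  have hev : ∃ N, μ (U N)ᶜ < ENNReal.ofReal δ2 := by
    have h0 : (0 : ℝ≥0∞) < ENNReal.ofReal δ2 := ENNReal.ofReal_pos.mpr hδ2pos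
    exact (htend.eventually_lt_const h0).exists
  obtain ⟨N, hNtail⟩ := hev
  set lam : ℕ → ℝ := fun i => (μ (A i)).toReal with hlam
  set v : ℕ → C(K, ℝ) := fun i => if h : (A i).Nonempty then h.choose else 0 with hv
  have hveq : ∀ i, v i = if h : (A i).Nonempty then h.choose else 0 := fun i => rfl
  have hvS : ∀ i, v i ∈ S := by
    intro i
    rw [hveq i]
    by_cases h : (A i).Nonempty
    · rw [dif_pos h]
      exact hAS i h.choose_spec
    · rw [dif_neg h]
      exact hS0
  have hvA : ∀ i, (A i).Nonempty → v i ∈ A i := by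
    intro i h
    rw [hveq i, dif_pos h]
    exact h.choose_spec
  have hdisjP : (↑(Finset.range N) : Set ℕ).Pairwise (Function.onFun Disjoint A) := by
    intro i _ j _ hij
    rcases lt_or_gt_of_ne hij with h | h
    · exact hdisj i j h
    · exact (hdisj j i h).symm
  have hsum : ∑ k ∈ Finset.range N, lam k ≤ M := by
    have h1 : ∑ k ∈ Finset.range N, μ (A k) = μ (U N) :=
      (measure_biUnion_finset hdisjP fun i _ => hAmeas i).symm
    have h2 : ∑ k ∈ Finset.range N, lam k = (μ (U N)).toReal := by
      rw [hlam, ← h1, ENNReal.toReal_sum fun a _ => measure_ne_top _ _]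
    rw [h2, hM]
    exact ENNReal.toReal_mono (measure_ne_top _ _) (measure_mono (Set.subset_univ _))
  refine ⟨N, lam, v, fun k => ENNReal.toReal_nonneg, hsum, hvS, ?_⟩
  intro x
  have haeS : ∀ᵐ g ∂μ, g ∈ S := ae_mem_of_compl_null hμS
  have haeB : ∀ᵐ g ∂μ, |(g : C(K, ℝ)) x| ≤ β := by
    filter_upwards [haeS] with g hg
    exact hSb g hg x
  have hint : Integrable (fun g : C(K, ℝ) => relu (g x)) μ := integrable_relu_eval μ x β haeB
  -- decomposition of the integral
  have hdecomp : (∫ g : C(K, ℝ), relu (g x) ∂μ)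
      = (∑ i ∈ Finset.range N, ∫ g in A i, relu (g x) ∂μ) + ∫ g in (U N)ᶜ, relu (g x) ∂μ := by
    rw [← integral_add_compl (hUmeas N) hint]
    congr 1
    rw [hU]
    exact integral_biUnion_finset _ (fun i _ => hAmeas i) hdisjP
      fun i _ => hint.integrableOn
  -- per-cell error
  have hcell : ∀ i, |(∫ g in A i, relu (g x) ∂μ) - lam i * relu (v i x)| ≤ 4 * δ1 * lam i := by
    intro i
    rcases (A i).eq_empty_or_nonempty with h | h
    · rw [h]
      simp [hlam, h]
    · have hvAi := hvA i h
      have hvSB := hASB i hvAi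
      have hkey : ∀ g ∈ A i, |relu (g x) - relu (v i x)| ≤ 4 * δ1 := by
        intro g hg
        have hgS : g ∈ S := hAS i hg
        have hvS' : v i ∈ S := hvS i
        obtain ⟨z, hz⟩ := hcov' x
        have l1 : |g x - g (z : K)| ≤ dist x (z : K) := by
          have := hSl g hgS x (z : K)
          simpa [Subtype.dist_eq] using this
        have l2 : |v i x - v i (z : K)| ≤ dist x (z : K) := by
          have := hSl (v i) hvS' x (z : K)
          simpa [Subtype.dist_eq] using this
        have l3 : |g (z : K) - v i (z : K)| ≤ 2 * δ1 := by
          have h1 : dist (Φ g) (zs i) < δ1 := by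
            have := hASB i hg
            rwa [hSB, Set.mem_preimage, Metric.mem_ball] at this
          have h2 : dist (Φ (v i)) (zs i) < δ1 := by
            have := hvSB
            rwa [hSB, Set.mem_preimage, Metric.mem_ball] at this
          have h3 : dist (Φ g z) (Φ (v i) z) ≤ dist (Φ g) (Φ (v i)) :=
            dist_le_pi_dist (Φ g) (Φ (v i)) z
          have h4 : dist (Φ g) (Φ (v i)) ≤ dist (Φ g) (zs i) + dist (zs i) (Φ (v i)) :=
            dist_triangle _ _ _
          have h5 : dist (zs i) (Φ (v i)) = dist (Φ (v i)) (zs i) := dist_comm _ _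
          have h6 : Φ g z = g (z : K) := rfl
          have h7 : Φ (v i) z = v i (z : K) := rfl
          rw [← Real.dist_eq, ← h6, ← h7]
          calc dist (Φ g z) (Φ (v i) z) ≤ dist (Φ g) (Φ (v i)) := h3
            _ ≤ dist (Φ g) (zs i) + dist (zs i) (Φ (v i)) := h4
            _ ≤ 2 * δ1 := by rw [h5]; linarith
        have habs : |g x - v i x| ≤ 4 * δ1 := by
          have e : g x - v i x = (g x - g (z : K)) + (g (z : K) - v i (z : K))
              + (v i (z : K) - v i x) := by ring
          rw [e]
          have l2' : |v i (z : K) - v i x| = |v i x - v i (z : K)| := abs_sub_comm _ _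
          calc |(g x - g (z : K)) + (g (z : K) - v i (z : K)) + (v i (z : K) - v i x)|
              ≤ |g x - g (z : K)| + |g (z : K) - v i (z : K)| + |v i (z : K) - v i x| := by
                exact le_trans (abs_add_le _ _) (by gcongr; exact abs_add_le _ _)
            _ ≤ dist x (z : K) + 2 * δ1 + dist x (z : K) := by
                rw [l2']
                gcongr
            _ ≤ 4 * δ1 := by linarith [hz]
        exact le_trans (abs_relu_sub _ _) habs
      have hconst : lam i * relu (v i x) = ∫ _ in A i, relu (v i x) ∂μ := by
        rw [setIntegral_const, smul_eq_mul, measureReal_def, hlam]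
      rw [hconst, ← integral_sub hint.integrableOn (integrable_const _).integrableOn]
      have := norm_setIntegral_le_of_norm_le_const (μ := μ) (s := A i)
        (C := 4 * δ1) (measure_lt_top _ _)
        (fun g hg => by rw [Real.norm_eq_abs]; exact hkey g hg)
      rw [Real.norm_eq_abs] at this
      calc |∫ g in A i, (relu (g x) - relu (v i x)) ∂μ| ≤ 4 * δ1 * (μ (A i)).toReal := this
        _ = 4 * δ1 * lam i := rfl
  -- tail bound
  have htail : |∫ g in (U N)ᶜ, relu (g x) ∂μ| ≤ β * δ2 := by
    have h1 : |∫ g in (U N)ᶜ, relu (g x) ∂μ| ≤ ∫ g in (U N)ᶜ, β ∂μ := by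
      rw [← Real.norm_eq_abs]
      refine le_trans (norm_integral_le_integral_norm _) ?_
      refine integral_mono_ae (hint.abs.restrict) (integrable_const _).integrableOn ?_
      refine ae_restrict_of_ae ?_
      filter_upwards [haeB] with g hg
      rw [Real.norm_eq_abs]
      exact le_trans (abs_relu _) hg
    have h2 : ∫ g in (U N)ᶜ, β ∂μ = (μ (U N)ᶜ).toReal * β := by
      rw [setIntegral_const, smul_eq_mul, measureReal_def]
    have h3 : (μ (U N)ᶜ).toReal < δ2 := ENNReal.toReal_lt_of_lt_ofReal hNtail
    calc |∫ g in (U N)ᶜ, relu (g x) ∂μ| ≤ (μ (U N)ᶜ).toReal * β := by rw [← h2]; exact h1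
      _ ≤ β * δ2 := by nlinarith [ENNReal.toReal_nonneg (a := μ (U N)ᶜ), h3]
  -- combine
  have hfinal : |(∫ g : C(K, ℝ), relu (g x) ∂μ)
      - ∑ k ∈ Finset.range N, lam k * relu (v k x)| ≤ 4 * δ1 * M + β * δ2 := by
    rw [hdecomp]
    have e : (∑ i ∈ Finset.range N, ∫ g in A i, relu (g x) ∂μ) + (∫ g in (U N)ᶜ, relu (g x) ∂μ)
        - ∑ k ∈ Finset.range N, lam k * relu (v k x)
        = (∑ i ∈ Finset.range N, ((∫ g in A i, relu (g x) ∂μ) - lam i * relu (v i x)))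
          + ∫ g in (U N)ᶜ, relu (g x) ∂μ := by
      rw [Finset.sum_sub_distrib]
      ring
    rw [e]
    calc |(∑ i ∈ Finset.range N, ((∫ g in A i, relu (g x) ∂μ) - lam i * relu (v i x)))
          + ∫ g in (U N)ᶜ, relu (g x) ∂μ|
        ≤ |∑ i ∈ Finset.range N, ((∫ g in A i, relu (g x) ∂μ) - lam i * relu (v i x))|
          + |∫ g in (U N)ᶜ, relu (g x) ∂μ| := abs_add_le _ _
      _ ≤ (∑ i ∈ Finset.range N, 4 * δ1 * lam i) + β * δ2 := by
          gcongr
          exact le_trans (Finset.abs_sum_le_sum_abs _ _) (Finset.sum_le_sum fun i _ => hcell i)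
      _ ≤ 4 * δ1 * M + β * δ2 := by
          have : ∑ i ∈ Finset.range N, 4 * δ1 * lam i = 4 * δ1 * ∑ i ∈ Finset.range N, lam i := by
            rw [Finset.mul_sum]
          rw [this]
          nlinarith [hsum, hδ1pos.le]
  refine le_trans hfinal ?_
  have e1 : 4 * δ1 * M ≤ δ / 2 := by
    have hδ1' : δ1 * (8 * (M + 1)) = δ := by
      rw [hδ1]; field_simp
    nlinarith [hδ1pos.le, hM0, mul_nonneg hδ1pos.le hM0]
  have e2 : β * δ2 = δ / 2 := by
    rw [hδ2]
    field_simp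
  linarith


lemma preReal_cont (m : ℕ) (t : TNet d) : Continuous fun x : Fin d → ℝ => preReal m t x := by
  induction t with
  | leaf w b =>
    simp only [preReal]
    exact (continuous_finset_sum _ fun i _ =>
      continuous_const.mul (continuous_apply i)).add continuous_const
  | node c kids ih =>
    simp only [preReal]
    exact continuous_finset_sum _ fun i _ =>
      continuous_const.mul (continuous_relu.comp (ih i))

section KInt2

variable {K : Set (Fin d → ℝ)} [CompactSpace K] (P' : Measure K) [IsFiniteMeasure P']

lemma nrm_scaled_relu_diff (c : ℝ) {a v : K → ℝ} (ha : Continuous a) (hv : Continuous v) :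
    Real.sqrt (∫ x, (c * (relu (a x) - relu (v x))) ^ 2 ∂P')
      ≤ |c| * Real.sqrt (∫ x, (a x - v x) ^ 2 ∂P') := by
  have e : (fun x : K => (c * (relu (a x) - relu (v x))) ^ 2)
      = fun x => c ^ 2 * (relu (a x) - relu (v x)) ^ 2 := funext fun x => by ring
  rw [e, integral_const_mul]
  have h2 : ∫ x, (relu (a x) - relu (v x)) ^ 2 ∂P' ≤ ∫ x, (a x - v x) ^ 2 ∂P' :=
    int_sq_mono P' ((continuous_relu.comp ha).sub (continuous_relu.comp hv)) (ha.sub hv)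
      fun x => abs_relu_sub _ _
  calc Real.sqrt (c ^ 2 * ∫ x, (relu (a x) - relu (v x)) ^ 2 ∂P')
      ≤ Real.sqrt (c ^ 2 * ∫ x, (a x - v x) ^ 2 ∂P') :=
        Real.sqrt_le_sqrt (mul_le_mul_of_nonneg_left h2 (sq_nonneg c))
    _ = |c| * Real.sqrt (∫ x, (a x - v x) ^ 2 ∂P') := by
        rw [Real.sqrt_mul (sq_nonneg c), Real.sqrt_sq_eq_abs]

lemma nrm_const_mul (c : ℝ) {w : K → ℝ} (hw : Continuous w) :
    Real.sqrt (∫ x, (c * w x) ^ 2 ∂P') = |c| * Real.sqrt (∫ x, w x ^ 2 ∂P') := by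
  have e : (fun x : K => (c * w x) ^ 2) = fun x => c ^ 2 * w x ^ 2 := funext fun x => by ring
  rw [e, integral_const_mul, Real.sqrt_mul (sq_nonneg c), Real.sqrt_sq_eq_abs]

/-- Combined (signed) discretization of a Barron representation. -/
lemma disc2 {ℓ : ℕ} (R : ℝ) (hR : 0 < R)
    (hKR : ∀ (x : K) (i : Fin d), |(x : Fin d → ℝ) i| ≤ R)
    (g : C(K, ℝ)) (μp μn : Measure C(K, ℝ))
    (hrep : IsBarronRep K {g' : C(K, ℝ) | treeNorm K ℓ g' ≤ 1} g μp μn)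
    (δ : ℝ) (hδ : 0 < δ) :
    ∃ (N : ℕ) (lam : ℕ → ℝ) (sg : ℕ → ℝ) (v : ℕ → C(K, ℝ)),
      (∀ k, 0 ≤ lam k) ∧
      (∑ k ∈ Finset.range N, lam k ≤ (μp Set.univ).toReal + (μn Set.univ).toReal) ∧
      (∀ k, treeNorm K ℓ (v k) ≤ 1) ∧ (∀ k, sg k = 1 ∨ sg k = -1) ∧
      ∀ x : K, |g x - ∑ k ∈ Finset.range N, lam k * (sg k * relu (v k x))| ≤ δ := by
  obtain ⟨hfp, hfn, hnullp, hnulln, heq⟩ := hrep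
  haveI := hfp; haveI := hfn
  set S : Set C(K, ℝ) := {g' : C(K, ℝ) | treeNorm K ℓ g' ≤ 1} with hSdef
  have hS0 : (0 : C(K, ℝ)) ∈ S := treeNorm_zero_fn K ℓ
  have hSb : ∀ g' ∈ S, ∀ x : K, |g' x| ≤ R + 1 := by
    intro g' hg' x
    have h1 : treeNorm K ℓ g' ≤ ENNReal.ofReal 1 := by
      rw [ENNReal.ofReal_one]; exact hg'
    have := (tree_bound R hR hKR ℓ g' 1 zero_le_one h1).1 x
    simpa using this
  have hSl : ∀ g' ∈ S, ∀ x y : K, |g' x - g' y| ≤ dist x y := by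
    intro g' hg' x y
    have h1 : treeNorm K ℓ g' ≤ ENNReal.ofReal 1 := by
      rw [ENNReal.ofReal_one]; exact hg'
    have := (tree_bound R hR hKR ℓ g' 1 zero_le_one h1).2 x y
    simpa using this
  obtain ⟨Np, lamp, vp, hp0, hpsum, hpS, hpapx⟩ :=
    disc μp S hS0 (R + 1) (by linarith) hSb hSl hnullp (δ / 2) (by linarith)
  obtain ⟨Nn, lamn, vn, hn0, hnsum, hnS, hnapx⟩ :=
    disc μn S hS0 (R + 1) (by linarith) hSb hSl hnulln (δ / 2) (by linarith)
  refine ⟨Np + Nn, fun k => if k < Np then lamp k else lamn (k - Np),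
    fun k => if k < Np then 1 else -1,
    fun k => if k < Np then vp k else vn (k - Np), ?_, ?_, ?_, ?_, ?_⟩
  · intro k
    by_cases h : k < Np <;> simp [h, hp0 _, hn0 _]
  · rw [Finset.sum_range_add]
    have e1 : ∑ k ∈ Finset.range Np, (if k < Np then lamp k else lamn (k - Np))
        = ∑ k ∈ Finset.range Np, lamp k :=
      Finset.sum_congr rfl fun k hk => if_pos (Finset.mem_range.mp hk)
    have e2 : ∑ k ∈ Finset.range Nn, (if Np + k < Np then lamp (Np + k) else lamn (Np + k - Np))
        = ∑ k ∈ Finset.range Nn, lamn k :=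
      Finset.sum_congr rfl fun k hk => by
        rw [if_neg (by omega), Nat.add_sub_cancel_left]
    rw [e1, e2]
    exact add_le_add hpsum hnsum
  · intro k
    by_cases h : k < Np
    · simpa [h, hSdef] using hpS k
    · simpa [h, hSdef] using hnS (k - Np)
  · intro k
    by_cases h : k < Np <;> simp [h]
  · intro x
    rw [Finset.sum_range_add]
    have e1 : ∑ k ∈ Finset.range Np, ((if k < Np then lamp k else lamn (k - Np))
          * ((if k < Np then (1:ℝ) else -1) * relu ((if k < Np then vp k else vn (k - Np)) x)))
        = ∑ k ∈ Finset.range Np, lamp k * relu (vp k x) :=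
      Finset.sum_congr rfl fun k hk => by
        rw [if_pos (Finset.mem_range.mp hk), if_pos (Finset.mem_range.mp hk),
          if_pos (Finset.mem_range.mp hk), one_mul]
    have e2 : ∑ k ∈ Finset.range Nn, ((if Np + k < Np then lamp (Np + k) else lamn (Np + k - Np))
          * ((if Np + k < Np then (1:ℝ) else -1)
            * relu ((if Np + k < Np then vp (Np + k) else vn (Np + k - Np)) x)))
        = -∑ k ∈ Finset.range Nn, lamn k * relu (vn k x) := by
      rw [← Finset.sum_neg_distrib]
      refine Finset.sum_congr rfl fun k hk => ?_
      rw [if_neg (by omega), if_neg (by omega), if_neg (by omega), Nat.add_sub_cancel_left]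
      ring
    rw [e1, e2, heq x]
    have happ : (∫ g' : C(K, ℝ), relu (g' x) ∂μp) - (∫ g' : C(K, ℝ), relu (g' x) ∂μn)
        - ((∑ k ∈ Finset.range Np, lamp k * relu (vp k x))
          + -(∑ k ∈ Finset.range Nn, lamn k * relu (vn k x)))
        = ((∫ g' : C(K, ℝ), relu (g' x) ∂μp) - ∑ k ∈ Finset.range Np, lamp k * relu (vp k x))
          - ((∫ g' : C(K, ℝ), relu (g' x) ∂μn)
            - ∑ k ∈ Finset.range Nn, lamn k * relu (vn k x)) := by ring
    rw [happ]
    calc |((∫ g' : C(K, ℝ), relu (g' x) ∂μp) - ∑ k ∈ Finset.range Np, lamp k * relu (vp k x))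
          - ((∫ g' : C(K, ℝ), relu (g' x) ∂μn)
            - ∑ k ∈ Finset.range Nn, lamn k * relu (vn k x))|
        ≤ |(∫ g' : C(K, ℝ), relu (g' x) ∂μp) - ∑ k ∈ Finset.range Np, lamp k * relu (vp k x)|
          + |(∫ g' : C(K, ℝ), relu (g' x) ∂μn)
            - ∑ k ∈ Finset.range Nn, lamn k * relu (vn k x)| := abs_sub _ _
      _ ≤ δ / 2 + δ / 2 := add_le_add (hpapx x) (hnapx x)
      _ = δ := by ring

/-- The `τ = 0` (zero function) case. -/
lemma claim_tau_zero (R : ℝ) (hR : 0 < R)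
    (hKR : ∀ (x : K) (i : Fin d), |(x : Fin d → ℝ) i| ≤ R) (m : ℕ)
    (ℓ : ℕ) (g : C(K, ℝ)) (hg : treeNorm K ℓ g ≤ ENNReal.ofReal 0) :
    ∃ t : TNet d, IsDepth m ℓ t ∧ pathW m t = 0 ∧
      (∫ x : K, (preReal m t (x : Fin d → ℝ) - g x) ^ 2 ∂P') = 0 := by
  have hg0 : ∀ x : K, g x = 0 := by
    intro x
    have := (tree_bound R hR hKR ℓ g 0 le_rfl hg).1 x
    rw [mul_zero] at this
    have h2 := abs_nonneg (g x)
    have := abs_eq_zero.mp (le_antisymm this h2)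
    exact this
  refine ⟨zeroTree d ℓ, zeroTree_depth m ℓ, pathW_zeroTree m ℓ, ?_⟩
  have e : (fun x : K => (preReal m (zeroTree d ℓ) (x : Fin d → ℝ) - g x) ^ 2)
      = fun _ => (0 : ℝ) := by
    funext x
    rw [preReal_zeroTree, hg0 x]
    ring
  rw [e, integral_zero]

set_option maxHeartbeats 1000000 in
/-- Main recursive approximation claim. -/
lemma claim (hmass : P' Set.univ ≤ 1) (R : ℝ) (hR : 0 < R)
    (hKR : ∀ (x : K) (i : Fin d), |(x : Fin d → ℝ) i| ≤ R)
    (m : ℕ) (hm : 0 < m) :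
    ∀ (ℓ : ℕ) (g : C(K, ℝ)) (τ η : ℝ), 0 ≤ τ → 0 < η → η ≤ 1 →
      treeNorm K ℓ g ≤ ENNReal.ofReal τ →
      ∃ t : TNet d, IsDepth m ℓ t ∧ pathW m t ≤ τ * (1 + η) ∧
        Real.sqrt (∫ x : K, (preReal m t (x : Fin d → ℝ) - g x) ^ 2 ∂P')
          ≤ τ * (1 + η) ^ 3 * (R + 1) * ℓ / Real.sqrt m := by
  have hsm : (0:ℝ) < Real.sqrt m := Real.sqrt_pos.mpr (by exact_mod_cast hm)
  intro ℓ
  induction ℓ with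
  | zero =>
    intro g τ η hτ hη hη1 hg
    by_cases hτ0 : τ = 0
    · subst hτ0
      obtain ⟨t, ht1, ht2, ht3⟩ := claim_tau_zero P' R hR hKR m 0 g hg
      refine ⟨t, ht1, by rw [ht2, zero_mul], ?_⟩
      rw [ht3, Real.sqrt_zero]
      simp
    · have hτpos : 0 < τ := lt_of_le_of_ne hτ (Ne.symm hτ0)
      have hlt : treeNorm K 0 g < ENNReal.ofReal (τ * (1 + η)) :=
        lt_of_le_of_lt hg ((ENNReal.ofReal_lt_ofReal_iff (by positivity)).mpr (by nlinarith))
      obtain ⟨w, b, hrepr, hN⟩ := exists_affine_rep hlt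
      have hN' : (∑ i, |w i|) + |b| ≤ τ * (1 + η) :=
        le_of_lt ((ENNReal.ofReal_lt_ofReal_iff_of_nonneg (by positivity)).mp hN)
      refine ⟨.leaf w b, .leaf w b, ?_, ?_⟩
      · rw [pathW]
        exact hN'
      · have e : (fun x : K => (preReal m (TNet.leaf w b) (x : Fin d → ℝ) - g x) ^ 2)
            = fun _ => (0 : ℝ) := by
          funext x
          rw [preReal, hrepr x]
          ring
        rw [e, integral_zero, Real.sqrt_zero]
        simp
  | succ ℓ ih =>
    intro g τ η hτ hη hη1 hg
    by_cases hτ0 : τ = 0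
    · subst hτ0
      obtain ⟨t, ht1, ht2, ht3⟩ := claim_tau_zero P' R hR hKR m (ℓ + 1) g hg
      refine ⟨t, ht1, by rw [ht2, zero_mul], ?_⟩
      rw [ht3, Real.sqrt_zero]
      rw [zero_mul, zero_mul, zero_mul, zero_div]
    have hτpos : 0 < τ := lt_of_le_of_ne hτ (Ne.symm hτ0)
    have hη4 : 0 < η / 4 := by linarith
    -- extract a representation with small mass
    have hlt : treeNorm K (ℓ + 1) g < ENNReal.ofReal (τ * (1 + η / 4)) :=
      lt_of_le_of_lt hg ((ENNReal.ofReal_lt_ofReal_iff (by positivity)).mpr (by nlinarith))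
    obtain ⟨μp, μn, hrep, hmasslt⟩ := exists_rep hlt
    haveI := hrep.1
    haveI := hrep.2.1
    have hmass' : (μp Set.univ).toReal + (μn Set.univ).toReal ≤ τ * (1 + η / 4) := by
      have h2 := ENNReal.toReal_le_of_le_ofReal (by positivity) hmasslt.le
      rwa [ENNReal.toReal_add (measure_ne_top _ _) (measure_ne_top _ _)] at h2
    -- discretize
    have hδd : 0 < τ * (η / 4) * (R + 1) / Real.sqrt m :=
      div_pos (mul_pos (mul_pos hτpos hη4) (by linarith)) hsm
    obtain ⟨N, lam, sg, v, hlam0, hlamsum, hvnorm, hsgn, happrox⟩ :=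
      disc2 R hR hKR g μp μn hrep (τ * (η / 4) * (R + 1) / Real.sqrt m) hδd
    set M'' := ∑ k ∈ Finset.range N, lam k with hM''
    have hM''0 : 0 ≤ M'' := Finset.sum_nonneg fun k _ => hlam0 k
    have hM''le : M'' ≤ τ * (1 + η / 4) := le_trans hlamsum hmass'
    set F : K → ℝ := fun x => ∑ k ∈ Finset.range N, lam k * (sg k * relu (v k x)) with hF
    have hvc : ∀ k, Continuous fun x : K => relu (v k x) :=
      fun k => continuous_relu.comp (v k).continuous
    have hFc : Continuous F := continuous_finset_sum _ fun k _ =>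
      continuous_const.mul (continuous_const.mul (hvc k))
    have hgF : ∀ x : K, |F x - g x| ≤ τ * (η / 4) * (R + 1) / Real.sqrt m := by
      intro x
      rw [abs_sub_comm]
      exact happrox x
    have hvb : ∀ k, ∀ x : K, |relu (v k x)| ≤ R + 1 := by
      intro k x
      have h1 : treeNorm K ℓ (v k) ≤ ENNReal.ofReal 1 := by
        rw [ENNReal.ofReal_one]; exact hvnorm k
      have h2 := (tree_bound R hR hKR ℓ (v k) 1 zero_le_one h1).1 x
      rw [mul_one] at h2
      exact le_trans (abs_relu _) h2
    by_cases hM''z : M'' = 0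
    · -- degenerate: the discretization mass vanishes, g is uniformly small
      have hlamz : ∀ k ∈ Finset.range N, lam k = 0 := by
        refine (Finset.sum_eq_zero_iff_of_nonneg fun k _ => hlam0 k).mp ?_
        rw [← hM'']
        exact hM''z
      have hFz : ∀ x : K, F x = 0 := by
        intro x
        rw [hF]
        exact Finset.sum_eq_zero fun k hk => by rw [hlamz k hk, zero_mul]
      have hgsmall : ∀ x : K, |g x| ≤ τ * (η / 4) * (R + 1) / Real.sqrt m := by
        intro x
        have := hgF x
        rw [hFz x] at this
        rwa [zero_sub, abs_neg] at this
      refine ⟨zeroTree d (ℓ + 1), zeroTree_depth m (ℓ + 1), ?_, ?_⟩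
      · rw [pathW_zeroTree]
        nlinarith
      · have e : (fun x : K => (preReal m (zeroTree d (ℓ + 1)) (x : Fin d → ℝ) - g x) ^ 2)
            = fun x : K => (g x) ^ 2 := by
          funext x
          rw [preReal_zeroTree]
          ring
        rw [e]
        have h1 := nrm_le_bound P' hmass (map_continuous g) hδd.le hgsmall
        refine le_trans h1 ?_
        have h3 : (1:ℝ) ≤ (1 + η) ^ 3 := one_le_pow₀ (by linarith)
        have h4 : (1:ℝ) ≤ ((ℓ:ℝ) + 1) := by
          have := Nat.cast_nonneg (α := ℝ) ℓ
          linarith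
        push_cast
        rw [div_le_div_iff₀ hsm hsm]
        have h7 : (1:ℝ) ≤ (1 + η) ^ 3 * ((ℓ:ℝ) + 1) := by nlinarith [h3, h4]
        have hnum : τ * (η / 4) * (R + 1) ≤ τ * (1 + η) ^ 3 * (R + 1) * ((ℓ:ℝ) + 1) := by
          calc τ * (η / 4) * (R + 1) = (τ * (R + 1)) * (η / 4) := by ring
            _ ≤ (τ * (R + 1)) * ((1 + η) ^ 3 * ((ℓ:ℝ) + 1)) := by
                refine mul_le_mul_of_nonneg_left ?_ (mul_nonneg hτpos.le (by linarith))
                linarith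
            _ = τ * (1 + η) ^ 3 * (R + 1) * ((ℓ:ℝ) + 1) := by ring
        exact mul_le_mul_of_nonneg_right hnum hsm.le
    · have hM''pos : 0 < M'' := lt_of_le_of_ne hM''0 (Ne.symm hM''z)
      -- Maurey sampling
      set p : ℕ → ℝ := fun k => lam k / M'' with hp
      have hp0 : ∀ k, 0 ≤ p k := fun k => div_nonneg (hlam0 k) hM''0
      have hp1 : ∑ k ∈ Finset.range N, p k = 1 := by
        rw [hp, ← Finset.sum_div, ← hM'', div_self hM''z]
      set u : ℕ → K → ℝ := fun k x => M'' * (sg k * relu (v k x)) with hu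
      have huc : ∀ k, Continuous (u k) := fun k =>
        continuous_const.mul (continuous_const.mul (hvc k))
      have hub : ∀ k, k < N → ∀ x : K, |u k x| ≤ M'' * (R + 1) := by
        intro k _ x
        rw [hu]
        rw [abs_mul, abs_mul, abs_of_nonneg hM''0]
        rcases hsgn k with h | h <;>
          · rw [h]
            simp only [abs_one, abs_neg, one_mul]
            have := hvb k x
            nlinarith
      obtain ⟨φ, hφ, herr⟩ := maurey P' hmass N p hp0 hp1 u huc (M'' * (R + 1)) hub m
      -- mixture equals F
      have hpu : ∀ x : K, ∑ k ∈ Finset.range N, p k * u k x = F x := by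
        intro x
        refine Finset.sum_congr rfl fun k _ => ?_
        rw [hp, hu]
        field_simp
      -- children networks
      have hch : ∀ j : ℕ, ∃ t : TNet d, IsDepth m ℓ t ∧ pathW m t ≤ 1 * (1 + η / 4) ∧
          Real.sqrt (∫ x : K, (preReal m t (x : Fin d → ℝ) - (v (φ j)) x) ^ 2 ∂P')
            ≤ 1 * (1 + η / 4) ^ 3 * (R + 1) * ℓ / Real.sqrt m :=
        fun j => ih (v (φ j)) 1 (η / 4) zero_le_one hη4 (by linarith)
          (by rw [ENNReal.ofReal_one]; exact hvnorm (φ j))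
      choose tc htcd htcp htce using hch
      set cf : ℕ → ℝ := fun j => if j < m then M'' * sg (φ j) / m else 0 with hcf
      refine ⟨TNet.node cf tc, .node cf tc ℓ htcd, ?_, ?_⟩
      · -- path norm bound
        rw [pathW]
        have hterm : ∀ i ∈ Finset.range m, |cf i| * pathW m (tc i)
            ≤ (M'' / m) * (1 + η / 4) := by
          intro i hi
          have hcfi : |cf i| = M'' / m := by
            simp only [hcf]
            rw [if_pos (Finset.mem_range.mp hi), abs_div, abs_mul, abs_of_nonneg hM''0,
              Nat.abs_cast]
            rcases hsgn (φ i) with h | h <;> rw [h] <;> simp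
          rw [hcfi]
          have h2 := htcp i
          rw [one_mul] at h2
          exact mul_le_mul_of_nonneg_left h2 (div_nonneg hM''0 (Nat.cast_nonneg m))
        calc ∑ i ∈ Finset.range m, |cf i| * pathW m (tc i)
            ≤ ∑ _i ∈ Finset.range m, (M'' / m) * (1 + η / 4) := Finset.sum_le_sum hterm
          _ = m * ((M'' / m) * (1 + η / 4)) := by
              rw [Finset.sum_const, Finset.card_range, nsmul_eq_mul]
          _ = M'' * (1 + η / 4) := by
              field_simp
          _ ≤ τ * (1 + η) := by
              have b1 : M'' * (1 + η / 4) ≤ τ * (1 + η / 4) * (1 + η / 4) :=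
                mul_le_mul_of_nonneg_right hM''le (by linarith)
              have b2 : τ * (1 + η / 4) * (1 + η / 4) ≤ τ * (1 + η) := by
                nlinarith [mul_pos hτpos hη, hη1,
                  mul_nonneg (mul_pos hτpos hη).le (by linarith : (0:ℝ) ≤ 1 - η)]
              linarith
      · -- L² error bound
        set Fex : K → ℝ := fun x => ∑ i ∈ Finset.range m, cf i * relu (v (φ i) x) with hFex
        have hFexc : Continuous Fex := continuous_finset_sum _ fun i _ =>
          continuous_const.mul (hvc (φ i))
        have hprec : Continuous fun x : K => preReal m (TNet.node cf tc) (x : Fin d → ℝ) :=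
          (preReal_cont m (TNet.node cf tc)).comp continuous_subtype_val
        have htcc : ∀ i, Continuous fun x : K => preReal m (tc i) (x : Fin d → ℝ) :=
          fun i => (preReal_cont m (tc i)).comp continuous_subtype_val
        -- triangle split
        have hsplit : ∀ x : K, preReal m (TNet.node cf tc) (x : Fin d → ℝ) - g x
            = (preReal m (TNet.node cf tc) (x : Fin d → ℝ) - Fex x)
              + ((Fex x - F x) + (F x - g x)) := fun x => by ring
        have htri : Real.sqrt (∫ x : K,
              (preReal m (TNet.node cf tc) (x : Fin d → ℝ) - g x) ^ 2 ∂P')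
            ≤ Real.sqrt (∫ x : K,
                (preReal m (TNet.node cf tc) (x : Fin d → ℝ) - Fex x) ^ 2 ∂P')
              + (Real.sqrt (∫ x : K, (Fex x - F x) ^ 2 ∂P')
                + Real.sqrt (∫ x : K, (F x - g x) ^ 2 ∂P')) := by
          have e : (fun x : K => (preReal m (TNet.node cf tc) (x : Fin d → ℝ) - g x) ^ 2)
              = fun x : K => ((preReal m (TNet.node cf tc) (x : Fin d → ℝ) - Fex x)
                + ((Fex x - F x) + (F x - g x))) ^ 2 := funext fun x => by rw [hsplit x]
          rw [e]
          refine le_trans (nrm_triangle P' (hprec.sub hFexc)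
            ((hFexc.sub hFc).add (hFc.sub (map_continuous g)))) ?_
          gcongr
          exact nrm_triangle P' (hFexc.sub hFc) (hFc.sub (map_continuous g))
        -- term 3
        have hT3 : Real.sqrt (∫ x : K, (F x - g x) ^ 2 ∂P')
            ≤ τ * (η / 4) * (R + 1) / Real.sqrt m :=
          nrm_le_bound P' hmass (hFc.sub (map_continuous g)) hδd.le hgF
        -- term 2 : Maurey error
        have hueq : ∀ k (x : K), u k x = M'' * (sg k * relu (v k x)) := fun k x => rfl
        have hcfeq : ∀ i, i < m → cf i = M'' * sg (φ i) / m := fun i h => if_pos h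
        have hmne : (m:ℝ) ≠ 0 := by positivity
        have hT2 : Real.sqrt (∫ x : K, (Fex x - F x) ^ 2 ∂P')
            ≤ M'' * (R + 1) / Real.sqrt m := by
          have hFex2 : ∀ x : K, Fex x - F x
              = (1 / (m:ℝ)) * (∑ j ∈ Finset.range m, u (φ j) x
                - m * ∑ k ∈ Finset.range N, p k * u k x) := by
            intro x
            have e1 : Fex x = (1 / (m:ℝ)) * ∑ j ∈ Finset.range m, u (φ j) x := by
              simp only [hFex, Finset.mul_sum]
              refine Finset.sum_congr rfl fun i hi => ?_
              rw [hcfeq i (Finset.mem_range.mp hi), hueq]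
              ring
            rw [hpu x, e1]
            field_simp
          have e2 : (fun x : K => (Fex x - F x) ^ 2)
              = fun x : K => (1 / (m:ℝ)) ^ 2 * (∑ j ∈ Finset.range m, u (φ j) x
                - m * ∑ k ∈ Finset.range N, p k * u k x) ^ 2 := by
            funext x
            rw [hFex2 x]
            ring
          rw [e2, integral_const_mul]
          have hb0 : (0:ℝ) ≤ M'' * (R + 1) := mul_nonneg hM''0 (by linarith)
          calc Real.sqrt ((1 / (m:ℝ)) ^ 2 * ∫ x : K, (∑ j ∈ Finset.range m, u (φ j) x
                - m * ∑ k ∈ Finset.range N, p k * u k x) ^ 2 ∂P')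
              ≤ Real.sqrt ((1 / (m:ℝ)) ^ 2 * ((M'' * (R + 1)) ^ 2 * m)) :=
                Real.sqrt_le_sqrt (mul_le_mul_of_nonneg_left herr (by positivity))
            _ = M'' * (R + 1) / Real.sqrt m := by
                have e3 : (1 / (m:ℝ)) ^ 2 * ((M'' * (R + 1)) ^ 2 * m)
                    = (M'' * (R + 1)) ^ 2 / m := by
                  field_simp
                rw [e3, Real.sqrt_div (sq_nonneg _), Real.sqrt_sq hb0]
        -- term 1 : children replacement error
        have hcfabs : ∀ i, i < m → |cf i| = M'' / m := by
          intro i hi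
          rw [hcfeq i hi, abs_div, abs_mul, abs_of_nonneg hM''0, Nat.abs_cast]
          rcases hsgn (φ i) with h | h <;> rw [h] <;> simp
        have hT1 : Real.sqrt (∫ x : K,
              (preReal m (TNet.node cf tc) (x : Fin d → ℝ) - Fex x) ^ 2 ∂P')
            ≤ M'' * (1 + η / 4) ^ 3 * (R + 1) * ℓ / Real.sqrt m := by
          have hP1 : (fun x : K => preReal m (TNet.node cf tc) (x : Fin d → ℝ) - Fex x)
              = fun x : K => ∑ i ∈ Finset.range m,
                (cf i * (relu (preReal m (tc i) (x : Fin d → ℝ)) - relu (v (φ i) x))) := by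
            funext x
            rw [preReal, hFex, ← Finset.sum_sub_distrib]
            exact Finset.sum_congr rfl fun i _ => by ring
          have e4 : (fun x : K =>
                (preReal m (TNet.node cf tc) (x : Fin d → ℝ) - Fex x) ^ 2)
              = fun x : K => (∑ i ∈ Finset.range m,
                (cf i * (relu (preReal m (tc i) (x : Fin d → ℝ)) - relu (v (φ i) x)))) ^ 2 := by
            funext x
            rw [congrFun hP1 x]
          rw [e4]
          have hterm : ∀ i ∈ Finset.range m,
              Real.sqrt (∫ x : K, (cf i * (relu (preReal m (tc i) (x : Fin d → ℝ))
                - relu (v (φ i) x))) ^ 2 ∂P')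
              ≤ (M'' / m) * ((1 + η / 4) ^ 3 * (R + 1) * ℓ / Real.sqrt m) := by
            intro i hi
            have h1 := nrm_scaled_relu_diff P' (cf i) (htcc i) (v (φ i)).continuous
            refine le_trans h1 ?_
            rw [hcfabs i (Finset.mem_range.mp hi)]
            have h2 := htce i
            rw [one_mul] at h2
            exact mul_le_mul_of_nonneg_left h2 (by positivity)
          calc Real.sqrt (∫ x : K, (∑ i ∈ Finset.range m,
                (cf i * (relu (preReal m (tc i) (x : Fin d → ℝ)) - relu (v (φ i) x)))) ^ 2 ∂P')
              ≤ ∑ i ∈ Finset.range m, Real.sqrt (∫ x : K,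
                (cf i * (relu (preReal m (tc i) (x : Fin d → ℝ)) - relu (v (φ i) x))) ^ 2 ∂P') :=
                nrm_sum_le P' (Finset.range m)
                  (fun i x => cf i * (relu (preReal m (tc i) (x : Fin d → ℝ))
                    - relu (v (φ i) x)))
                  fun i => continuous_const.mul (((continuous_relu.comp (htcc i))).sub
                    (continuous_relu.comp (v (φ i)).continuous))
            _ ≤ ∑ _i ∈ Finset.range m, (M'' / m) * ((1 + η / 4) ^ 3 * (R + 1) * ℓ / Real.sqrt m) :=
                Finset.sum_le_sum hterm
            _ = m * ((M'' / m) * ((1 + η / 4) ^ 3 * (R + 1) * ℓ / Real.sqrt m)) := by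
                rw [Finset.sum_const, Finset.card_range, nsmul_eq_mul]
            _ = M'' * (1 + η / 4) ^ 3 * (R + 1) * ℓ / Real.sqrt m := by
                field_simp
        -- combine the three error terms
        have hcube : ∀ a : ℝ, (1 + a) ^ 3 = 1 + 3*a + 3*a^2 + a^3 := fun a => by ring
        have c1 : ((1:ℝ) + η / 4) ^ 4 ≤ (1 + η) ^ 3 := by
          have hη4' : η^4 ≤ η := by
            nlinarith [hη.le, hη1, sq_nonneg η, sq_nonneg (η - 1), mul_nonneg (mul_nonneg hη.le hη.le) hη.le]
          nlinarith [hη4', hη.le, sq_nonneg η, mul_nonneg hη.le (sq_nonneg η)]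
        have c2 : (1:ℝ) + η / 2 ≤ (1 + η) ^ 3 := by
          nlinarith [hη.le, sq_nonneg η, mul_nonneg (mul_nonneg hη.le hη.le) hη.le]
        have hRp : (0:ℝ) < R + 1 := by linarith
        have hl0 : (0:ℝ) ≤ (ℓ:ℝ) := Nat.cast_nonneg ℓ
        have n1 : M'' * (1 + η / 4) ^ 3 ≤ τ * (1 + η) ^ 3 := by
          have a1 : M'' * (1 + η / 4) ^ 3 ≤ (τ * (1 + η / 4)) * (1 + η / 4) ^ 3 :=
            mul_le_mul_of_nonneg_right hM''le (pow_nonneg (by linarith) 3)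
          have a2 : (τ * (1 + η / 4)) * (1 + η / 4) ^ 3 = τ * (1 + η / 4) ^ 4 := by ring
          have a3 : τ * (1 + η / 4) ^ 4 ≤ τ * (1 + η) ^ 3 :=
            mul_le_mul_of_nonneg_left c1 hτpos.le
          linarith
        have n2 : M'' + τ * (η / 4) ≤ τ * (1 + η) ^ 3 := by
          have a1 : M'' + τ * (η / 4) ≤ τ * (1 + η / 4) + τ * (η / 4) := by linarith
          have a2 : τ * (1 + η / 4) + τ * (η / 4) = τ * (1 + η / 2) := by ring
          have a3 : τ * (1 + η / 2) ≤ τ * (1 + η) ^ 3 :=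
            mul_le_mul_of_nonneg_left c2 hτpos.le
          linarith
        have numer : M'' * (1 + η / 4) ^ 3 * (R + 1) * ℓ + (M'' * (R + 1)
            + τ * (η / 4) * (R + 1)) ≤ τ * (1 + η) ^ 3 * (R + 1) * ((ℓ:ℝ) + 1) := by
          have m1 : M'' * (1 + η / 4) ^ 3 * (R + 1) * ℓ ≤ τ * (1 + η) ^ 3 * (R + 1) * ℓ := by
            have h := mul_le_mul_of_nonneg_right
              (mul_le_mul_of_nonneg_right n1 hRp.le) hl0
            calc M'' * (1 + η / 4) ^ 3 * (R + 1) * (ℓ:ℝ)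
                = M'' * (1 + η / 4) ^ 3 * (R + 1) * (ℓ:ℝ) := rfl
              _ ≤ τ * (1 + η) ^ 3 * (R + 1) * (ℓ:ℝ) := h
          have m2 : M'' * (R + 1) + τ * (η / 4) * (R + 1) ≤ τ * (1 + η) ^ 3 * (R + 1) := by
            have h := mul_le_mul_of_nonneg_right n2 hRp.le
            calc M'' * (R + 1) + τ * (η / 4) * (R + 1) = (M'' + τ * (η / 4)) * (R + 1) := by ring
              _ ≤ (τ * (1 + η) ^ 3) * (R + 1) := h
              _ = τ * (1 + η) ^ 3 * (R + 1) := by ring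
          calc M'' * (1 + η / 4) ^ 3 * (R + 1) * ℓ + (M'' * (R + 1) + τ * (η / 4) * (R + 1))
              ≤ τ * (1 + η) ^ 3 * (R + 1) * ℓ + τ * (1 + η) ^ 3 * (R + 1) :=
                add_le_add m1 m2
            _ = τ * (1 + η) ^ 3 * (R + 1) * ((ℓ:ℝ) + 1) := by ring
        refine le_trans htri ?_
        refine le_trans (add_le_add hT1 (add_le_add hT2 hT3)) ?_
        push_cast
        have efrac : M'' * (1 + η / 4) ^ 3 * (R + 1) * (ℓ:ℝ) / Real.sqrt m
            + (M'' * (R + 1) / Real.sqrt m + τ * (η / 4) * (R + 1) / Real.sqrt m)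
            = (M'' * (1 + η / 4) ^ 3 * (R + 1) * (ℓ:ℝ)
              + (M'' * (R + 1) + τ * (η / 4) * (R + 1))) / Real.sqrt m := by
          ring
        rw [efrac]
        gcongr


end KInt2

end
end DirectApprox


open DirectApprox in
set_option maxHeartbeats 1000000 in
/-- **Direct approximation theorem.** Let `ℙ` be a probability measure with
support contained in `B_R(0)` (for the `ℓ∞` norm), `L ≥ 1`, `f ∈ W^L(spt ℙ)`, `m ≥ 1`.
Then there is a finite ReLU network `f_m` with `L` hidden layers of widths
`m, m², …, m^L` (outermost to innermost) such that
`‖f_m − f‖_{L²(ℙ)} ≤ L(2+R)‖f‖_{W^L}/√m` and whose path-norm proxy is at most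
`‖f‖_{W^L}`. -/
theorem direct_approximation {d : ℕ} (P : Measure (Fin d → ℝ)) [IsProbabilityMeasure P]
    (R : ℝ) (hR : 0 < R) (hsupp : msupport P ⊆ Metric.closedBall 0 R)
    (L : ℕ) (hL : 1 ≤ L)
    (F : C(msupport P, ℝ)) (hF : treeNorm (msupport P) L F ≠ ⊤)
    (m : ℕ) (hm : 0 < m) :
    ∃ (c : ℕ → ℝ) (a : ℕ → ℕ → ℕ → ℝ),
      Real.sqrt (∫ x : msupport P,
          (netRealize d L (fun ℓ => m ^ (L + 1 - ℓ)) c a (x : Fin d → ℝ) - F x) ^ 2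
          ∂(P.comap Subtype.val))
        ≤ L * (2 + R) * (treeNorm (msupport P) L F).toReal / Real.sqrt m ∧
      pathProxy d L (fun ℓ => m ^ (L + 1 - ℓ)) c a ≤ (treeNorm (msupport P) L F).toReal := by
  classical
  -- the support is closed, compact and measurable
  have hKclosed : IsClosed (msupport P) := by
    rw [← isOpen_compl_iff]
    refine isOpen_iff_forall_mem_open.mpr fun x hx => ?_
    simp only [msupport, Set.mem_compl_iff, Set.mem_setOf_eq] at hx
    push_neg at hx
    obtain ⟨U, hUopen, hxU, hU0⟩ := hx
    refine ⟨U, fun y hy hymem => ?_, hUopen, hxU⟩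
    exact absurd (hymem U hUopen hy) (not_lt.mpr hU0)
  have hKcomp : IsCompact (msupport P) :=
    (isCompact_closedBall (0 : Fin d → ℝ) R).of_isClosed_subset hKclosed hsupp
  haveI : CompactSpace ↥(msupport P) := isCompact_iff_compactSpace.mp hKcomp
  have hKmeas : MeasurableSet (msupport P) := hKclosed.measurableSet
  have hemb : MeasurableEmbedding (Subtype.val : ↥(msupport P) → (Fin d → ℝ)) :=
    MeasurableEmbedding.subtype_coe hKmeas
  haveI : IsFiniteMeasure (P.comap (Subtype.val : ↥(msupport P) → (Fin d → ℝ))) := by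
    constructor
    rw [hemb.comap_apply]
    exact measure_lt_top _ _
  have hmass : (P.comap (Subtype.val : ↥(msupport P) → (Fin d → ℝ))) Set.univ ≤ 1 := by
    rw [hemb.comap_apply]
    exact prob_le_one
  have hKR : ∀ (x : ↥(msupport P)) (i : Fin d), |(x : Fin d → ℝ) i| ≤ R := by
    intro x i
    have h1 : (x : Fin d → ℝ) ∈ Metric.closedBall 0 R := hsupp x.2
    rw [Metric.mem_closedBall] at h1
    have h2 := dist_le_pi_dist (x : Fin d → ℝ) 0 i
    rw [Real.dist_eq] at h2
    simpa using le_trans h2 h1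
  set τ₀ := (treeNorm (msupport P) L F).toReal with hτ₀def
  have hτ₀le : treeNorm (msupport P) L F ≤ ENNReal.ofReal τ₀ := (ENNReal.ofReal_toReal hF).ge
  have hτ₀0 : 0 ≤ τ₀ := ENNReal.toReal_nonneg
  have hsm : (0:ℝ) < Real.sqrt m := Real.sqrt_pos.mpr (by exact_mod_cast hm)
  obtain ⟨L', rfl⟩ : ∃ L', L = L' + 1 := ⟨L - 1, by omega⟩
  set Lr : ℝ := ((L' + 1 : ℕ) : ℝ) with hLrdef
  have hLr1 : (1:ℝ) ≤ Lr := by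
    rw [hLrdef]
    exact_mod_cast Nat.succ_le_succ (Nat.zero_le L')
  have hLr0 : (0:ℝ) ≤ Lr := by linarith
  set η₀ : ℝ := Lr / ((1 + R) * (7 * Lr + Real.sqrt m)) with hη₀def
  have hden : (0:ℝ) < (1 + R) * (7 * Lr + Real.sqrt m) := by
    apply mul_pos (by linarith)
    nlinarith [hsm]
  have hη₀pos : 0 < η₀ := div_pos (by linarith) hden
  have hη₀le1 : η₀ ≤ 1 := by
    rw [hη₀def, div_le_one hden]
    nlinarith [hsm]
  have hkey : η₀ * ((1 + R) * (7 * Lr + Real.sqrt m)) = Lr := by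
    rw [hη₀def]
    field_simp
  -- apply the recursive approximation claim
  obtain ⟨t, hdepth, hpath, herr⟩ :=
    claim (P.comap (Subtype.val : ↥(msupport P) → (Fin d → ℝ))) hmass R hR hKR m hm
      (L' + 1) F τ₀ η₀ hτ₀0 hη₀pos hη₀le1 hτ₀le
  obtain ⟨c₀, kids, hteq, hkids⟩ := isDepth_succ_elim hdepth
  refine ⟨fun i => c₀ i / (1 + η₀), aOf m (L' + 1) t, ?_, ?_⟩
  · -- the L² error bound
    have hnet : ∀ x : Fin d → ℝ,
        netRealize d (L' + 1) (fun ℓ => m ^ (L' + 1 + 1 - ℓ)) (fun i => c₀ i / (1 + η₀))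
          (aOf m (L' + 1) t) x = preReal m t x / (1 + η₀) := by
      intro x
      rw [netRealize]
      simp only [Nat.add_sub_cancel]
      have hm1 : m ^ (L' + 1 + 1 - (L' + 1)) = m := by
        rw [show L' + 1 + 1 - (L' + 1) = 1 by omega, pow_one]
      rw [hm1]
      have hpre : preReal m t x = ∑ i ∈ Finset.range m, c₀ i * relu (preReal m (kids i) x) := by
        rw [hteq, preReal]
      rw [hpre, Finset.sum_div]
      refine Finset.sum_congr rfl fun i hi => ?_
      rw [Finset.mem_range] at hi
      have hiw : i < m ^ (L' + 1 - L') := by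
        rw [show L' + 1 - L' = 1 by omega, pow_one]
        exact hi
      have he := flatten_eval hm hdepth x L' (Nat.lt_succ_self L') i hiw
      have hsub : subAt m (L' + 1 - L') t i = kids i := by
        rw [show L' + 1 - L' = 1 by omega]
        have h1 : subAt m 1 t i = child (subAt m 0 t (i / m)) (i % m) := rfl
        rw [h1]
        have h2 : subAt m 0 t (i / m) = t := rfl
        rw [h2, hteq, child, Nat.mod_eq_of_lt hi]
      rw [he, hsub]
      ring
    have heqfun : (fun x : ↥(msupport P) =>
          (netRealize d (L' + 1) (fun ℓ => m ^ (L' + 1 + 1 - ℓ)) (fun i => c₀ i / (1 + η₀))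
            (aOf m (L' + 1) t) (x : Fin d → ℝ) - F x) ^ 2)
        = fun x : ↥(msupport P) =>
          ((1 / (1 + η₀)) * (preReal m t (x : Fin d → ℝ) - F x)
            + (1 / (1 + η₀) - 1) * F x) ^ 2 := by
      funext x
      rw [hnet]
      have h1η : (1:ℝ) + η₀ ≠ 0 := by positivity
      field_simp
      ring
    rw [heqfun]
    have hprec : Continuous fun x : ↥(msupport P) => preReal m t (x : Fin d → ℝ) :=
      (preReal_cont m t).comp continuous_subtype_val
    have htri := nrm_triangle (P.comap (Subtype.val : ↥(msupport P) → (Fin d → ℝ)))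
      (u := fun x : ↥(msupport P) => (1 / (1 + η₀)) * (preReal m t (x : Fin d → ℝ) - F x))
      (v := fun x : ↥(msupport P) => (1 / (1 + η₀) - 1) * F x)
      (continuous_const.mul (hprec.sub (map_continuous F)))
      (continuous_const.mul (map_continuous F))
    refine le_trans htri ?_
    -- first summand
    have hA := nrm_const_mul (P.comap (Subtype.val : ↥(msupport P) → (Fin d → ℝ)))
      (1 / (1 + η₀)) (w := fun x => preReal m t ↑x - F x) (hprec.sub (map_continuous F))
    have hB := nrm_const_mul (P.comap (Subtype.val : ↥(msupport P) → (Fin d → ℝ)))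
      (1 / (1 + η₀) - 1) (map_continuous F)
    rw [hA, hB]
    have habs1 : |1 / (1 + η₀)| ≤ 1 := by
      rw [abs_of_pos (by positivity)]
      rw [div_le_one (by positivity)]
      linarith
    have habs2 : |1 / (1 + η₀) - 1| ≤ η₀ := by
      have h1 : 1 / (1 + η₀) - 1 = -(η₀ / (1 + η₀)) := by
        field_simp
        ring
      rw [h1, abs_neg, abs_of_pos (by positivity)]
      rw [div_le_iff₀ (by positivity)]
      nlinarith [hη₀pos.le]
    -- sup-norm of F
    have hFsup : ∀ x : ↥(msupport P), |F x| ≤ (R + 1) * τ₀ :=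
      (tree_bound R hR hKR (L' + 1) F τ₀ hτ₀0 hτ₀le).1
    have hFnrm : Real.sqrt (∫ x : ↥(msupport P), (F x) ^ 2
          ∂(P.comap (Subtype.val : ↥(msupport P) → (Fin d → ℝ)))) ≤ (R + 1) * τ₀ :=
      nrm_le_bound _ hmass (map_continuous F) (by positivity) hFsup
    have herr' : Real.sqrt (∫ x : ↥(msupport P), (preReal m t (x : Fin d → ℝ) - F x) ^ 2
          ∂(P.comap (Subtype.val : ↥(msupport P) → (Fin d → ℝ))))
        ≤ τ₀ * (1 + η₀) ^ 3 * (R + 1) * Lr / Real.sqrt m := herr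
    have hs0 : 0 ≤ Real.sqrt (∫ x : ↥(msupport P), (preReal m t (x : Fin d → ℝ) - F x) ^ 2
          ∂(P.comap (Subtype.val : ↥(msupport P) → (Fin d → ℝ)))) := Real.sqrt_nonneg _
    have hs1 : 0 ≤ Real.sqrt (∫ x : ↥(msupport P), (F x) ^ 2
          ∂(P.comap (Subtype.val : ↥(msupport P) → (Fin d → ℝ)))) := Real.sqrt_nonneg _
    have hstep : |1 / (1 + η₀)| * Real.sqrt (∫ x : ↥(msupport P),
          (preReal m t (x : Fin d → ℝ) - F x) ^ 2
          ∂(P.comap (Subtype.val : ↥(msupport P) → (Fin d → ℝ))))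
        + |1 / (1 + η₀) - 1| * Real.sqrt (∫ x : ↥(msupport P), (F x) ^ 2
          ∂(P.comap (Subtype.val : ↥(msupport P) → (Fin d → ℝ))))
        ≤ τ₀ * (1 + η₀) ^ 3 * (R + 1) * Lr / Real.sqrt m + η₀ * ((R + 1) * τ₀) := by
      have t1 := mul_le_mul habs1 herr' hs0 zero_le_one
      rw [one_mul] at t1
      have t2 := mul_le_mul habs2 hFnrm hs1 (le_trans hη₀pos.le (le_refl _))
      exact add_le_add t1 t2
    refine le_trans hstep ?_
    -- the final numeric inequality
    have hcube : (1 + η₀) ^ 3 ≤ 1 + 7 * η₀ := by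
      nlinarith [hη₀pos.le, hη₀le1, sq_nonneg η₀, mul_nonneg (mul_nonneg hη₀pos.le hη₀pos.le) hη₀pos.le]
    have hpos1 : (0:ℝ) ≤ τ₀ * (1 + R) * Lr := by
      apply mul_nonneg (mul_nonneg hτ₀0 (by linarith)) hLr0
    have s1 : τ₀ * (1 + η₀) ^ 3 * (R + 1) * Lr ≤ τ₀ * (1 + 7 * η₀) * (R + 1) * Lr := by
      have h := mul_le_mul_of_nonneg_right hcube hpos1
      nlinarith [h]
    have s2 : η₀ * (1 + R) * Real.sqrt m = Lr - 7 * η₀ * (1 + R) * Lr := by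
      linear_combination hkey
    have hnum : τ₀ * (1 + η₀) ^ 3 * (R + 1) * Lr + η₀ * ((R + 1) * τ₀) * Real.sqrt m
        ≤ Lr * (2 + R) * τ₀ := by
      have e1 : η₀ * ((R + 1) * τ₀) * Real.sqrt m = τ₀ * (η₀ * (1 + R) * Real.sqrt m) := by ring
      rw [e1, s2]
      have e2 : τ₀ * (1 + 7 * η₀) * (R + 1) * Lr + τ₀ * (Lr - 7 * η₀ * (1 + R) * Lr)
          = Lr * (2 + R) * τ₀ := by ring
      linarith [s1]
    have hconv : η₀ * ((R + 1) * τ₀)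
        = η₀ * ((R + 1) * τ₀) * Real.sqrt m / Real.sqrt m := by
      field_simp
    rw [hconv, ← add_div]
    rw [div_le_div_iff₀ hsm hsm]
    calc (τ₀ * (1 + η₀) ^ 3 * (R + 1) * Lr + η₀ * ((R + 1) * τ₀) * Real.sqrt m) * Real.sqrt m
        ≤ (Lr * (2 + R) * τ₀) * Real.sqrt m := mul_le_mul_of_nonneg_right hnum hsm.le
      _ = Lr * (2 + R) * τ₀ * Real.sqrt m := by ring
  · -- the path-norm proxy bound
    rw [pathProxy]
    simp only [Nat.add_sub_cancel]
    have hm1 : m ^ (L' + 1 + 1 - (L' + 1)) = m := by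
      rw [show L' + 1 + 1 - (L' + 1) = 1 by omega, pow_one]
    rw [hm1]
    have hterm : ∀ i ∈ Finset.range m, |c₀ i / (1 + η₀)|
          * pathBelow d (fun ℓ => m ^ (L' + 1 + 1 - ℓ)) (aOf m (L' + 1) t) L' i
        = |c₀ i| * pathW m (kids i) / (1 + η₀) := by
      intro i hi
      rw [Finset.mem_range] at hi
      have hiw : i < m ^ (L' + 1 - L') := by
        rw [show L' + 1 - L' = 1 by omega, pow_one]
        exact hi
      have hp := flatten_path hm hdepth L' (Nat.lt_succ_self L') i hiw
      have hsub : subAt m (L' + 1 - L') t i = kids i := by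
        rw [show L' + 1 - L' = 1 by omega]
        have h1 : subAt m 1 t i = child (subAt m 0 t (i / m)) (i % m) := rfl
        rw [h1]
        have h2 : subAt m 0 t (i / m) = t := rfl
        rw [h2, hteq, child, Nat.mod_eq_of_lt hi]
      rw [hp, hsub, abs_div, abs_of_pos (by positivity : (0:ℝ) < 1 + η₀)]
      ring
    rw [Finset.sum_congr rfl hterm]
    have hsum : ∑ i ∈ Finset.range m, |c₀ i| * pathW m (kids i) / (1 + η₀)
        = pathW m t / (1 + η₀) := by
      rw [hteq, pathW, Finset.sum_div]
    rw [hsum]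
    rw [div_le_iff₀ (by positivity : (0:ℝ) < 1 + η₀)]
    calc pathW m t ≤ τ₀ * (1 + η₀) := hpath
      _ = τ₀ * (1 + η₀) := rfl
end
end

section
/- For every compact set K ⊆ ℝ^d, every L ≥ 1 and every f ∈ W^L(K), there exists a sequence of finite ReLU networks f_n with L hidden layers such that ‖f_n‖_{W^L(K)} ≤ ‖f‖_{W^L(K)} for all n and f_n → f in C^{0,α}(K) for every α < 1. -/
open MeasureTheory Set Filter Topology
open scoped ENNReal NNReal Classical

noncomputable section

/-- The Hölder norm `‖u‖_{C^{0,α}(K)} = ‖u‖_{C⁰(K)} + [u]_{C^{0,α}(K)}` (valued in `ℝ≥0∞`),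
for functions on `K ⊆ ℝ^d` with the `ℓ∞` norm on `ℝ^d`. -/
def holderNorm {d : ℕ} (K : Set (Fin d → ℝ)) (α : ℝ) (u : K → ℝ) : ℝ≥0∞ :=
  (⨆ x : K, (‖u x‖₊ : ℝ≥0∞)) +
    ⨆ x : K, ⨆ y : K, if x = y then 0 else (‖u x - u y‖₊ : ℝ≥0∞) / edist x y ^ α

end
section Dev
set_option synthInstance.maxHeartbeats 400000
open MeasureTheory Set Filter Topology
open scoped ENNReal NNReal Classical
variable {d : ℕ} {K : Set (Fin d → ℝ)}

lemma relu_nonneg (a : ℝ) : 0 ≤ relu a := le_max_right _ _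
lemma relu_abs_le (a : ℝ) : |relu a| ≤ |a| := by
  rw [relu, abs_of_nonneg (le_max_right a 0)]
  exact max_le (le_abs_self a) (abs_nonneg a)
lemma relu_sub_relu (a b : ℝ) : |relu a - relu b| ≤ |a - b| :=
  abs_max_sub_max_le_abs a b 0

instance : BorelSpace C(K, ℝ) := ⟨rfl⟩
instance : MeasurableSingletonClass C(K, ℝ) :=
  ⟨fun _ => isClosed_singleton.measurableSet⟩

lemma measurable_eval_relu (x : K) : Measurable fun g : C(K, ℝ) => relu (g x) :=
  ((continuous_max.comp (Continuous.prodMk (continuous_eval_const x) continuous_const))).measurable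

lemma treeNorm_succ (ℓ : ℕ) (f : C(K, ℝ)) :
    treeNorm K (ℓ+1) f = barronNorm K {g : C(K, ℝ) | treeNorm K ℓ g ≤ 1} f := by
  simp [treeNorm]

lemma barronNorm_le {H : Set C(K, ℝ)} {f : C(K, ℝ)} {μp μn : Measure C(K, ℝ)}
    (h : IsBarronRep K H f μp μn) : barronNorm K H f ≤ μp univ + μn univ :=
  iInf_le (fun p : {p : Measure C(K, ℝ) × Measure C(K, ℝ) // IsBarronRep K H f p.1 p.2} =>
    p.1.1 univ + p.1.2 univ) ⟨(μp, μn), h⟩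

lemma treeNorm_zero_fun (ℓ : ℕ) : treeNorm K ℓ (0 : C(K, ℝ)) = 0 := by
  refine le_antisymm ?_ zero_le
  cases ℓ with
  | zero =>
    refine le_trans (iInf_le _ ⟨(0, 0), by simp⟩) (by simp)
  | succ ℓ =>
    rw [treeNorm_succ]
    refine le_trans (barronNorm_le (μp := 0) (μn := 0) ?_) (by simp)
    exact ⟨MeasureTheory.isFiniteMeasureZero, MeasureTheory.isFiniteMeasureZero, rfl, rfl, fun x => by simp⟩

lemma exists_rep {H : Set C(K, ℝ)} {f : C(K, ℝ)} (hf : barronNorm K H f ≠ ⊤)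
    {ε : ℝ≥0∞} (hε : ε ≠ 0) :
    ∃ μp μn : Measure C(K, ℝ), IsBarronRep K H f μp μn ∧
      μp univ + μn univ < barronNorm K H f + ε := by
  have h : barronNorm K H f < barronNorm K H f + ε := ENNReal.lt_add_right hf hε
  rw [barronNorm] at h
  obtain ⟨⟨⟨μp, μn⟩, hrep⟩, hlt⟩ := iInf_lt_iff.mp h
  exact ⟨μp, μn, hrep, hlt⟩

lemma le_of_forall_delta {A C t : ℝ} (hC : 0 ≤ C) (h : ∀ δ : ℝ, 0 < δ → A ≤ (t + δ) * C) :
    A ≤ t * C := by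
  refine le_of_forall_pos_le_add fun ε hε => ?_
  have h' := h (ε / (C + 1)) (by positivity)
  have h2 : ε / (C + 1) * (C + 1) = ε := div_mul_cancel₀ _ (by positivity)
  nlinarith
end Dev
section Dev2
open MeasureTheory Set Filter Topology
open scoped ENNReal NNReal Classical
variable {d : ℕ} {K : Set (Fin d → ℝ)}

lemma ae_mem_of_compl_zero {H : Set C(K, ℝ)} {μ : Measure C(K, ℝ)} (hμ : μ Hᶜ = 0) :
    ∀ᵐ g ∂μ, g ∈ H := by
  rw [ae_iff]; simpa [Set.compl_def] using hμ

lemma integrable_eval_relu {H : Set C(K, ℝ)} {μ : Measure C(K, ℝ)} [IsFiniteMeasure μ]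
    (hμ : μ Hᶜ = 0) {B : ℝ} (hH : ∀ g ∈ H, ∀ x : K, |g x| ≤ B) (x : K) :
    Integrable (fun g : C(K, ℝ) => relu (g x)) μ := by
  refine Integrable.mono' (integrable_const B) (measurable_eval_relu x).aestronglyMeasurable ?_
  filter_upwards [ae_mem_of_compl_zero hμ] with g hg
  calc ‖relu (g x)‖ = |relu (g x)| := rfl
    _ ≤ |g x| := relu_abs_le _
    _ ≤ B := hH g hg x

/-- Pointwise and Lipschitz bounds for functions with a Barron representation over a
uniformly bounded, uniformly 1-Lipschitz class `H`. -/
lemma rep_bounds {H : Set C(K, ℝ)} {B : ℝ} (hB1 : 1 ≤ B)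
    (hH : ∀ g ∈ H, (∀ x : K, |g x| ≤ B) ∧ (∀ x y : K, |g x - g y| ≤ dist x y))
    (f : C(K, ℝ)) (hf : barronNorm K H f ≠ ⊤) :
    (∀ x : K, |f x| ≤ (barronNorm K H f).toReal * B) ∧
    (∀ x y : K, |f x - f y| ≤ (barronNorm K H f).toReal * dist x y) := by
  set t := barronNorm K H f with ht
  have key : ∀ δ : ℝ, 0 < δ →
      (∀ x : K, |f x| ≤ (t.toReal + δ) * B) ∧
      (∀ x y : K, |f x - f y| ≤ (t.toReal + δ) * dist x y) := by
    intro δ hδ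
    obtain ⟨μp, μn, ⟨hfp, hfn, hcp, hcn, heq⟩, hmass⟩ :=
      exists_rep hf (ε := ENNReal.ofReal δ) (by simp [hδ])
    haveI := hfp; haveI := hfn
    have hμp := (ae_mem_of_compl_zero hcp)
    have hμn := (ae_mem_of_compl_zero hcn)
    have hmass' : (μp univ).toReal + (μn univ).toReal ≤ t.toReal + δ := by
      have h1 : μp univ + μn univ ≤ t + ENNReal.ofReal δ := le_of_lt hmass
      have h2 : (μp univ + μn univ).toReal ≤ (t + ENNReal.ofReal δ).toReal := by
        refine ENNReal.toReal_mono ?_ h1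
        exact ENNReal.add_ne_top.2 ⟨hf, ENNReal.ofReal_ne_top⟩
      rw [ENNReal.toReal_add (measure_ne_top _ _) (measure_ne_top _ _)] at h2
      rwa [ENNReal.toReal_add hf ENNReal.ofReal_ne_top, ENNReal.toReal_ofReal hδ.le] at h2
    constructor
    · intro x
      have h1 : ‖∫ g : C(K, ℝ), relu (g x) ∂μp‖ ≤ B * (μp univ).toReal := by
        refine norm_integral_le_of_norm_le_const ?_
        filter_upwards [hμp] with g hg
        exact le_trans (relu_abs_le _) ((hH g hg).1 x)
      have h2 : ‖∫ g : C(K, ℝ), relu (g x) ∂μn‖ ≤ B * (μn univ).toReal := by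
        refine norm_integral_le_of_norm_le_const ?_
        filter_upwards [hμn] with g hg
        exact le_trans (relu_abs_le _) ((hH g hg).1 x)
      rw [heq x]
      calc |(∫ g : C(K, ℝ), relu (g x) ∂μp) - ∫ g : C(K, ℝ), relu (g x) ∂μn|
          ≤ ‖∫ g : C(K, ℝ), relu (g x) ∂μp‖ + ‖∫ g : C(K, ℝ), relu (g x) ∂μn‖ :=
            abs_sub _ _
        _ ≤ B * (μp univ).toReal + B * (μn univ).toReal := add_le_add h1 h2
        _ = ((μp univ).toReal + (μn univ).toReal) * B := by ring
        _ ≤ (t.toReal + δ) * B := by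
            have hB0 : (0:ℝ) ≤ B := le_trans zero_le_one hB1
            exact mul_le_mul_of_nonneg_right hmass' hB0
    · intro x y
      have hint : ∀ (μ : Measure C(K, ℝ)) [IsFiniteMeasure μ], μ Hᶜ = 0 →
          ‖∫ g : C(K, ℝ), (relu (g x) - relu (g y)) ∂μ‖ ≤ dist x y * (μ univ).toReal := by
        intro μ hfin hc
        refine norm_integral_le_of_norm_le_const ?_
        filter_upwards [ae_mem_of_compl_zero hc] with g hg
        calc ‖relu (g x) - relu (g y)‖ = |relu (g x) - relu (g y)| := rfl
          _ ≤ |g x - g y| := relu_sub_relu _ _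
          _ ≤ dist x y := (hH g hg).2 x y
      have hip : Integrable (fun g : C(K, ℝ) => relu (g x)) μp :=
        integrable_eval_relu hcp (fun g hg => (hH g hg).1) x
      have hiy : Integrable (fun g : C(K, ℝ) => relu (g y)) μp :=
        integrable_eval_relu hcp (fun g hg => (hH g hg).1) y
      have hinp : Integrable (fun g : C(K, ℝ) => relu (g x)) μn :=
        integrable_eval_relu hcn (fun g hg => (hH g hg).1) x
      have hiny : Integrable (fun g : C(K, ℝ) => relu (g y)) μn :=
        integrable_eval_relu hcn (fun g hg => (hH g hg).1) y
      have e1 : f x - f y =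
          (∫ g : C(K, ℝ), (relu (g x) - relu (g y)) ∂μp)
            - ∫ g : C(K, ℝ), (relu (g x) - relu (g y)) ∂μn := by
        rw [integral_sub hip hiy, integral_sub hinp hiny, heq x, heq y]; ring
      rw [e1]
      calc |(∫ g : C(K, ℝ), (relu (g x) - relu (g y)) ∂μp)
            - ∫ g : C(K, ℝ), (relu (g x) - relu (g y)) ∂μn|
          ≤ ‖∫ g : C(K, ℝ), (relu (g x) - relu (g y)) ∂μp‖
            + ‖∫ g : C(K, ℝ), (relu (g x) - relu (g y)) ∂μn‖ := abs_sub _ _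
        _ ≤ dist x y * (μp univ).toReal + dist x y * (μn univ).toReal :=
            add_le_add (hint μp hcp) (hint μn hcn)
        _ = ((μp univ).toReal + (μn univ).toReal) * dist x y := by ring
        _ ≤ (t.toReal + δ) * dist x y :=
            mul_le_mul_of_nonneg_right hmass' dist_nonneg
  constructor
  · intro x
    exact le_of_forall_delta (le_trans zero_le_one hB1) (fun δ hδ => (key δ hδ).1 x)
  · intro x y
    exact le_of_forall_delta dist_nonneg (fun δ hδ => (key δ hδ).2 x y)

/-- Elements of the unit ball of `W^ℓ(K)` are bounded by `max R 1` and `1`-Lipschitz. -/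
lemma unitBall_bounds {R : ℝ} (hR0 : 0 ≤ R) (hR : ∀ x : K, ∀ i, |(x : Fin d → ℝ) i| ≤ R) :
    ∀ ℓ : ℕ, ∀ g : C(K, ℝ), treeNorm K ℓ g ≤ 1 →
      (∀ x : K, |g x| ≤ max R 1) ∧ (∀ x y : K, |g x - g y| ≤ dist x y) := by
  intro ℓ
  induction ℓ with
  | zero =>
    intro g hg
    have key : ∀ δ : ℝ, 0 < δ →
        (∀ x : K, |g x| ≤ (1 + δ) * max R 1) ∧
        (∀ x y : K, |g x - g y| ≤ (1 + δ) * dist x y) := by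
      intro δ hδ
      have h1 : treeNorm K 0 g < ENNReal.ofReal (1 + δ) := by
        refine lt_of_le_of_lt hg ?_
        rw [show (1:ℝ≥0∞) = ENNReal.ofReal 1 by simp]
        exact ENNReal.ofReal_lt_ofReal_iff_of_nonneg zero_le_one |>.mpr (by linarith)
      rw [treeNorm] at h1
      obtain ⟨⟨⟨w, b⟩, hrep⟩, hlt⟩ := iInf_lt_iff.mp h1
      simp only at hrep hlt
      have hwb : (∑ i : Fin d, |w i|) + |b| < 1 + δ := by
        by_contra hcon
        push_neg at hcon
        exact absurd (ENNReal.ofReal_le_ofReal hcon) (not_le.mpr hlt)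
      have hsum : (0:ℝ) ≤ (∑ i : Fin d, |w i|) + |b| := by positivity
      constructor
      · intro x
        rw [hrep x]
        have hRx : ∀ i : Fin d, |(x : Fin d → ℝ) i| ≤ max R 1 :=
          fun i => le_trans (hR x i) (le_max_left _ _)
        calc |(∑ i : Fin d, w i * (x : Fin d → ℝ) i) + b|
            ≤ |∑ i : Fin d, w i * (x : Fin d → ℝ) i| + |b| := abs_add_le _ _
          _ ≤ (∑ i : Fin d, |w i * (x : Fin d → ℝ) i|) + |b| :=
              add_le_add (Finset.abs_sum_le_sum_abs _ _) le_rfl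
          _ ≤ (∑ i : Fin d, |w i| * max R 1) + |b| * max R 1 := by
              refine add_le_add (Finset.sum_le_sum fun i _ => ?_) ?_
              · rw [abs_mul]
                exact mul_le_mul_of_nonneg_left (hRx i) (abs_nonneg _)
              · nlinarith [abs_nonneg b, le_max_right R 1]
          _ = ((∑ i : Fin d, |w i|) + |b|) * max R 1 := by rw [← Finset.sum_mul]; ring
          _ ≤ (1 + δ) * max R 1 := by
              have : (0:ℝ) ≤ max R 1 := le_trans zero_le_one (le_max_right R 1)
              nlinarith
      · intro x y
        have hxy : g x - g y = ∑ i : Fin d, w i * ((x : Fin d → ℝ) i - (y : Fin d → ℝ) i) := by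
          rw [hrep x, hrep y]
          simp only [mul_sub]
          rw [Finset.sum_sub_distrib]
          ring
        rw [hxy]
        have hd : ∀ i : Fin d, |(x : Fin d → ℝ) i - (y : Fin d → ℝ) i| ≤ dist x y := by
          intro i
          have h2 : dist ((x : Fin d → ℝ) i) ((y : Fin d → ℝ) i) ≤ dist x y := by
            rw [Subtype.dist_eq]
            exact dist_le_pi_dist _ _ i
          rwa [Real.dist_eq] at h2
        calc |∑ i : Fin d, w i * ((x : Fin d → ℝ) i - (y : Fin d → ℝ) i)|
            ≤ ∑ i : Fin d, |w i * ((x : Fin d → ℝ) i - (y : Fin d → ℝ) i)| :=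
              Finset.abs_sum_le_sum_abs _ _
          _ ≤ ∑ i : Fin d, |w i| * dist x y := by
              refine Finset.sum_le_sum fun i _ => ?_
              rw [abs_mul]
              exact mul_le_mul_of_nonneg_left (hd i) (abs_nonneg _)
          _ = (∑ i : Fin d, |w i|) * dist x y := by rw [Finset.sum_mul]
          _ ≤ (1 + δ) * dist x y := mul_le_mul_of_nonneg_right (by nlinarith [abs_nonneg b]) dist_nonneg
    have hmax : (1:ℝ) ≤ max R 1 := le_max_right _ _
    constructor
    · intro x
      have := le_of_forall_delta (t := 1) (le_trans zero_le_one hmax)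
        (fun δ hδ => (key δ hδ).1 x)
      simpa using this
    · intro x y
      have := le_of_forall_delta (t := 1) dist_nonneg (fun δ hδ => (key δ hδ).2 x y)
      simpa using this
  | succ ℓ ih =>
    intro g hg
    have hfin : treeNorm K (ℓ+1) g ≠ ⊤ := by
      intro h; rw [h] at hg; exact absurd hg (by simp)
    rw [treeNorm_succ] at hg hfin
    have hb := rep_bounds (le_max_right R 1) (fun h hh => ih h hh) g hfin
    have ht1 : (barronNorm K {g : C(K, ℝ) | treeNorm K ℓ g ≤ 1} g).toReal ≤ 1 := by
      have := ENNReal.toReal_mono (by simp) hg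
      simpa using this
    constructor
    · intro x
      refine le_trans (hb.1 x) ?_
      exact mul_le_of_le_one_left (le_trans zero_le_one (le_max_right R 1)) ht1
    · intro x y
      refine le_trans (hb.2 x y) ?_
      exact mul_le_of_le_one_left dist_nonneg ht1

/-- Bounds for a general function of finite tree norm at level `ℓ + 1`. -/
lemma treeNorm_bounds {R : ℝ} (hR0 : 0 ≤ R) (hR : ∀ x : K, ∀ i, |(x : Fin d → ℝ) i| ≤ R)
    (ℓ : ℕ) (f : C(K, ℝ)) (hf : treeNorm K (ℓ+1) f ≠ ⊤) :
    (∀ x : K, |f x| ≤ (treeNorm K (ℓ+1) f).toReal * max R 1) ∧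
    (∀ x y : K, |f x - f y| ≤ (treeNorm K (ℓ+1) f).toReal * dist x y) := by
  rw [treeNorm_succ] at hf ⊢
  exact rep_bounds (le_max_right R 1) (fun h hh => unitBall_bounds hR0 hR ℓ h hh) f hf

end Dev2
section Dev3
open MeasureTheory Set Filter Topology
open scoped ENNReal NNReal Classical
variable {d : ℕ} {K : Set (Fin d → ℝ)}

lemma integrable_relu_dirac (x : K) (h : C(K, ℝ)) :
    Integrable (fun g : C(K, ℝ) => relu (g x)) (Measure.dirac h) :=
  (integrable_const (relu (h x))).congr (ae_eq_dirac (fun g : C(K, ℝ) => relu (g x))).symm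

lemma integral_relu_comb (x : K) (k : ℕ) (h : ℕ → C(K, ℝ)) (c : ℕ → ℝ≥0) :
    ∫ g : C(K, ℝ), relu (g x)
        ∂(∑ i ∈ Finset.range k, ((c i : ℝ≥0∞) • Measure.dirac (h i))) =
      ∑ i ∈ Finset.range k, (c i : ℝ) * relu (h i x) := by
  rw [integral_finset_sum_measure (fun i _ =>
    (integrable_relu_dirac x (h i)).smul_measure ENNReal.coe_ne_top)]
  refine Finset.sum_congr rfl fun i _ => ?_
  rw [integral_smul_measure, integral_dirac]
  simp [ENNReal.coe_toReal]

lemma comb_apply_compl {H : Set C(K, ℝ)} (k : ℕ) (h : ℕ → C(K, ℝ)) (c : ℕ → ℝ≥0)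
    (hmem : ∀ i < k, h i ∈ H) :
    (∑ i ∈ Finset.range k, ((c i : ℝ≥0∞) • Measure.dirac (h i))) Hᶜ = 0 := by
  rw [Measure.finset_sum_apply]
  refine Finset.sum_eq_zero fun i hi => ?_
  rw [Measure.smul_apply, Measure.dirac_apply]
  have : h i ∈ H := hmem i (Finset.mem_range.mp hi)
  simp [Set.indicator_of_notMem, this]

lemma comb_apply_univ (k : ℕ) (h : ℕ → C(K, ℝ)) (c : ℕ → ℝ≥0) :
    (∑ i ∈ Finset.range k, ((c i : ℝ≥0∞) • Measure.dirac (h i))) univ =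
      ∑ i ∈ Finset.range k, (c i : ℝ≥0∞) := by
  rw [Measure.finset_sum_apply]
  refine Finset.sum_congr rfl fun i _ => ?_
  rw [Measure.smul_apply, Measure.dirac_apply]
  simp

/-- Norm bound for a finite combination `x ↦ Σ e i · relu (h i x)` with `h i` in the unit
ball of `W^ℓ(K)`. -/
lemma treeNorm_comb_le {ℓ : ℕ} {k : ℕ} {h : ℕ → C(K, ℝ)} {e : ℕ → ℝ}
    (hh : ∀ i < k, treeNorm K ℓ (h i) ≤ 1) (G : C(K, ℝ))
    (hG : ∀ x : K, G x = ∑ i ∈ Finset.range k, e i * relu (h i x)) :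
    treeNorm K (ℓ+1) G ≤ ENNReal.ofReal (∑ i ∈ Finset.range k, |e i|) := by
  rw [treeNorm_succ]
  set H := {g : C(K, ℝ) | treeNorm K ℓ g ≤ 1} with hH
  set μp : Measure C(K, ℝ) :=
    ∑ i ∈ Finset.range k, (((e i).toNNReal : ℝ≥0∞) • Measure.dirac (h i)) with hμp
  set μn : Measure C(K, ℝ) :=
    ∑ i ∈ Finset.range k, (((-e i).toNNReal : ℝ≥0∞) • Measure.dirac (h i)) with hμn
  have hmem : ∀ i < k, h i ∈ H := fun i hi => hh i hi
  have hfinp : IsFiniteMeasure μp := ⟨by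
    rw [hμp, comb_apply_univ]
    exact ENNReal.sum_lt_top.mpr fun i _ => ENNReal.coe_lt_top⟩
  have hfinn : IsFiniteMeasure μn := ⟨by
    rw [hμn, comb_apply_univ]
    exact ENNReal.sum_lt_top.mpr fun i _ => ENNReal.coe_lt_top⟩
  have heq : ∀ x : K, G x = (∫ g : C(K, ℝ), relu (g x) ∂μp) - ∫ g : C(K, ℝ), relu (g x) ∂μn := by
    intro x
    rw [hμp, hμn, integral_relu_comb, integral_relu_comb, hG x, ← Finset.sum_sub_distrib]
    refine Finset.sum_congr rfl fun i _ => ?_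
    rcases le_or_gt 0 (e i) with h0 | h0
    · rw [Real.coe_toNNReal _ h0, Real.toNNReal_of_nonpos (by linarith : -e i ≤ 0)]
      simp
    · rw [Real.toNNReal_of_nonpos (le_of_lt h0), Real.coe_toNNReal _ (by linarith : (0:ℝ) ≤ -e i)]
      simp
  refine le_trans (barronNorm_le
    ⟨hfinp, hfinn, comb_apply_compl _ _ _ hmem, comb_apply_compl _ _ _ hmem, heq⟩) ?_
  rw [hμp, hμn, comb_apply_univ, comb_apply_univ, ← Finset.sum_add_distrib,
    ENNReal.ofReal_sum_of_nonneg (fun i _ => abs_nonneg _)]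
  refine Finset.sum_le_sum fun i _ => ?_
  rcases le_or_gt 0 (e i) with h0 | h0
  · rw [Real.toNNReal_of_nonpos (by linarith : -e i ≤ 0), abs_of_nonneg h0]
    simp [ENNReal.ofReal]
  · rw [Real.toNNReal_of_nonpos (le_of_lt h0), abs_of_neg h0]
    simp [ENNReal.ofReal]

end Dev3
section Dev4
open MeasureTheory Set Filter Topology
open scoped ENNReal NNReal Classical
variable {d : ℕ} {K : Set (Fin d → ℝ)}

lemma floor_eq_abs_lt {δ a b : ℝ} (hδ : 0 < δ) (h : ⌊a / δ⌋ = ⌊b / δ⌋) : |a - b| < δ := by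
  have h1 : |a / δ - b / δ| < 1 := Int.abs_sub_lt_one_of_floor_eq_floor h
  have h2 : a / δ - b / δ = (a - b) / δ := by ring
  rw [h2, abs_div, abs_of_pos hδ, div_lt_one hδ] at h1
  exact h1

lemma exists_enum {α : Type*} (a0 : α) (S : Finset α) :
    ∃ φ : ℕ → α, (∀ i < S.card, φ i ∈ S) ∧
      ∀ f : α → ℝ, ∑ i ∈ Finset.range S.card, f (φ i) = ∑ v ∈ S, f v := by
  classical
  refine ⟨fun i => if h : i < S.card then (S.equivFin.symm ⟨i, h⟩ : α) else a0, ?_, ?_⟩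
  · intro i hi
    simp only [dif_pos hi]
    exact (S.equivFin.symm ⟨i, hi⟩).2
  · intro f
    rw [← Fin.sum_univ_eq_sum_range]
    have : ∀ i : Fin S.card,
        f (if h : (i : ℕ) < S.card then (S.equivFin.symm ⟨i, h⟩ : α) else a0)
          = f (S.equivFin.symm i) := by
      intro i; rw [dif_pos i.2]
    rw [Finset.sum_congr rfl (fun i _ => this i)]
    calc ∑ i : Fin S.card, f (S.equivFin.symm i)
        = ∑ v : {x // x ∈ S}, f v := Equiv.sum_comp S.equivFin.symm (fun v : S => f (v : α))
      _ = ∑ v ∈ S, f v := Finset.sum_coe_sort S f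

/-- Discretization of the Barron integral representation by an empirical measure. -/
lemma discretize (hK : IsCompact K) {H : Set C(K, ℝ)} {B : ℝ}
    (h0 : (0 : C(K, ℝ)) ∈ H)
    (hH : ∀ g ∈ H, (∀ x : K, |g x| ≤ B) ∧ (∀ x y : K, |g x - g y| ≤ dist x y))
    (μ : Measure C(K, ℝ)) [IsFiniteMeasure μ] (hμ : μ Hᶜ = 0)
    {ε : ℝ} (hε : 0 < ε) :
    ∃ (k : ℕ) (g : ℕ → C(K, ℝ)) (c : ℕ → ℝ),
      (∀ i < k, g i ∈ H) ∧ (∀ i < k, 0 ≤ c i) ∧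
      (∑ i ∈ Finset.range k, c i) ≤ (μ univ).toReal ∧
      ∀ x : K, |(∫ g' : C(K, ℝ), relu (g' x) ∂μ)
        - ∑ i ∈ Finset.range k, c i * relu (g i x)| ≤ ε := by
  classical
  set M := (μ univ).toReal with hM
  have hM0 : 0 ≤ M := ENNReal.toReal_nonneg
  set δ := ε / (3 * (M + 1)) with hδdef
  have hδ : 0 < δ := by positivity
  -- δ-net of K with centers in K
  obtain ⟨T, hTK, hTfin, hTcov⟩ := totallyBounded_iff_subset.mp hK.totallyBounded
    {p : (Fin d → ℝ) × (Fin d → ℝ) | dist p.1 p.2 < δ} (Metric.dist_mem_uniformity hδ)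
  set ι := ↥hTfin.toFinset with hι
  set yK : ι → K := fun y => ⟨y.1, hTK (hTfin.mem_toFinset.mp y.2)⟩ with hyKdef
  -- cube decomposition
  set S : Finset (ι → ℤ) :=
    Fintype.piFinset (fun _ => Finset.Icc ⌊-B / δ⌋ ⌊B / δ⌋) with hS
  set E : (ι → ℤ) → Set C(K, ℝ) :=
    fun v => ⋂ y : ι, {g : C(K, ℝ) | ⌊g (yK y) / δ⌋ = v y} with hE
  have hEmeas : ∀ v, MeasurableSet (E v) := by
    intro v
    refine MeasurableSet.iInter fun y => ?_
    have hm : Measurable fun g : C(K, ℝ) => ⌊g (yK y) / δ⌋ :=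
      Int.measurable_floor.comp (((continuous_eval_const (yK y)).measurable).div_const δ)
    exact hm (measurableSet_singleton (v y))
  have hEdisj : (↑S : Set (ι → ℤ)).Pairwise (Function.onFun Disjoint E) := by
    intro v _ w _ hvw
    refine Set.disjoint_left.mpr fun g hgv hgw => hvw ?_
    funext y
    have h1 := Set.mem_iInter.mp hgv y
    have h2 := Set.mem_iInter.mp hgw y
    rw [← h1, ← h2]
  have hcover : ∀ g ∈ H, ∃ v ∈ S, g ∈ E v := by
    intro g hg
    refine ⟨fun y => ⌊g (yK y) / δ⌋, ?_, Set.mem_iInter.mpr fun y => rfl⟩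
    rw [hS, Fintype.mem_piFinset]
    intro y
    rw [Finset.mem_Icc]
    have hb := (hH g hg).1 (yK y)
    rw [abs_le] at hb
    exact ⟨Int.floor_le_floor ((div_le_div_iff_of_pos_right hδ).mpr hb.1),
      Int.floor_le_floor ((div_le_div_iff_of_pos_right hδ).mpr hb.2)⟩
  set U : Set C(K, ℝ) := ⋃ v ∈ S, E v with hU
  have hUmeas : MeasurableSet U := MeasurableSet.biUnion S.countable_toSet (fun v _ => hEmeas v)
  have hUc : μ Uᶜ = 0 := by
    refine measure_mono_null ?_ hμ
    intro g hg
    simp only [Set.mem_compl_iff] at hg ⊢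
    intro hgH
    obtain ⟨v, hvS, hgv⟩ := hcover g hgH
    exact hg (Set.mem_biUnion hvS hgv)
  -- per-cube data
  have hEH : ∀ v, μ (E v) ≠ 0 → (E v ∩ H).Nonempty := by
    intro v hv
    by_contra hcon
    rw [Set.not_nonempty_iff_eq_empty] at hcon
    have : E v ⊆ Hᶜ := by
      intro g hg hgH
      exact Set.eq_empty_iff_forall_notMem.mp hcon g ⟨hg, hgH⟩
    exact hv (measure_mono_null this hμ)
  set gv : (ι → ℤ) → C(K, ℝ) :=
    fun v => if hn : (E v ∩ H).Nonempty then hn.choose else 0 with hgv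
  set cv : (ι → ℤ) → ℝ := fun v => (μ (E v)).toReal with hcv
  have hgvH : ∀ v, gv v ∈ H := by
    intro v
    show (if hn : (E v ∩ H).Nonempty then hn.choose else 0) ∈ H
    split
    · next hn => exact hn.choose_spec.2
    · exact h0
  have hInt : ∀ x : K, Integrable (fun g' : C(K, ℝ) => relu (g' x)) μ :=
    fun x => integrable_eval_relu hμ (fun g hg => (hH g hg).1) x
  -- the key per-cube estimate
  have hkey : ∀ x : K, ∀ v ∈ S,
      |(∫ g' in E v, relu (g' x) ∂μ) - cv v * relu (gv v x)| ≤ 3 * δ * (μ (E v)).toReal := by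
    intro x v _
    rcases eq_or_ne (μ (E v)) 0 with hv0 | hv0
    · rw [Measure.restrict_eq_zero.mpr hv0, integral_zero_measure, hcv]
      simp [hv0]
    · have hnE : (E v ∩ H).Nonempty := hEH v hv0
      have hgvE : gv v ∈ E v ∩ H := by
        show (if hn : (E v ∩ H).Nonempty then hn.choose else 0) ∈ E v ∩ H
        rw [dif_pos hnE]
        exact hnE.choose_spec
      have e1 : cv v * relu (gv v x) = ∫ _ in E v, relu (gv v x) ∂μ := by
        rw [setIntegral_const, smul_eq_mul, hcv]; rfl
      rw [e1, ← integral_sub ((hInt x).integrableOn) (integrableOn_const ?fin)]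
      case fin => exact (lt_of_le_of_lt (measure_mono (Set.subset_univ _)) (measure_lt_top μ univ)).ne
      have := norm_setIntegral_le_of_norm_le_const_ae' (μ := μ) (s := E v)
        (f := fun g' => relu (g' x) - relu (gv v x)) (C := 3 * δ)
        (lt_of_le_of_lt (measure_mono (Set.subset_univ _)) (measure_lt_top μ univ))
        ?ae
      · exact this
      case ae =>
        filter_upwards [ae_mem_of_compl_zero hμ] with g' hg'H hg'E
        -- find a net point near x
        obtain ⟨y, hyT, hxy⟩ := Set.mem_iUnion₂.mp (hTcov x.2)
        have hyι : y ∈ hTfin.toFinset := hTfin.mem_toFinset.mpr hyT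
        set yk : K := yK ⟨y, hyι⟩ with hyk
        have hdxy : dist x yk < δ := by
          rw [Subtype.dist_eq]
          exact (hxy : dist (x : Fin d → ℝ) y < δ)
        have hfl : ⌊g' yk / δ⌋ = ⌊(gv v) yk / δ⌋ := by
          have h1 := Set.mem_iInter.mp hg'E ⟨y, hyι⟩
          have h2 := Set.mem_iInter.mp hgvE.1 ⟨y, hyι⟩
          rw [h1, h2]
        have hmid : |g' yk - gv v yk| < δ := floor_eq_abs_lt hδ hfl
        have hl1 : |g' x - g' yk| ≤ dist x yk := (hH g' hg'H).2 x yk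
        have hl2 : |gv v yk - gv v x| ≤ dist yk x := (hH _ hgvE.2).2 yk x
        rw [dist_comm yk x] at hl2
        calc ‖relu (g' x) - relu (gv v x)‖ = |relu (g' x) - relu (gv v x)| := rfl
          _ ≤ |g' x - gv v x| := relu_sub_relu _ _
          _ = |(g' x - g' yk) + (g' yk - gv v yk) + (gv v yk - gv v x)| := by ring_nf
          _ ≤ |g' x - g' yk| + |g' yk - gv v yk| + |gv v yk - gv v x| := abs_add_three _ _ _
          _ ≤ 3 * δ := by nlinarith
  -- split the integral over cubes
  have hsplit : ∀ x : K, ∫ g' : C(K, ℝ), relu (g' x) ∂μ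
      = ∑ v ∈ S, ∫ g' in E v, relu (g' x) ∂μ := by
    intro x
    have h1 : ∫ g' : C(K, ℝ), relu (g' x) ∂μ
        = (∫ g' in U, relu (g' x) ∂μ) + ∫ g' in Uᶜ, relu (g' x) ∂μ :=
      (integral_add_compl hUmeas (hInt x)).symm
    rw [h1, Measure.restrict_eq_zero.mpr hUc, integral_zero_measure, add_zero, hU,
      integral_biUnion_finset S (fun v _ => hEmeas v) hEdisj
        (fun v _ => (hInt x).integrableOn)]
  have hsum_mass : ∑ v ∈ S, (μ (E v)).toReal ≤ M := by
    rw [hM, ← ENNReal.toReal_sum (fun v _ => measure_ne_top μ _)]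
    refine ENNReal.toReal_mono (measure_ne_top μ _) ?_
    rw [← measure_biUnion_finset hEdisj (fun v _ => hEmeas v)]
    exact measure_mono (Set.subset_univ _)
  -- enumerate S
  obtain ⟨φ, hφS, hφsum⟩ := exists_enum (fun _ => (0:ℤ)) S
  refine ⟨S.card, fun i => gv (φ i), fun i => cv (φ i), fun i hi => hgvH _,
    fun i hi => ENNReal.toReal_nonneg, ?_, ?_⟩
  · rw [hφsum (fun v => cv v)]
    exact hsum_mass
  · intro x
    rw [hφsum (fun v => cv v * relu (gv v x)), hsplit x, ← Finset.sum_sub_distrib]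
    calc |∑ v ∈ S, ((∫ g' in E v, relu (g' x) ∂μ) - cv v * relu (gv v x))|
        ≤ ∑ v ∈ S, |(∫ g' in E v, relu (g' x) ∂μ) - cv v * relu (gv v x)| :=
          Finset.abs_sum_le_sum_abs _ _
      _ ≤ ∑ v ∈ S, 3 * δ * (μ (E v)).toReal := Finset.sum_le_sum fun v hv => hkey x v hv
      _ = 3 * δ * ∑ v ∈ S, (μ (E v)).toReal := by rw [Finset.mul_sum]
      _ ≤ 3 * δ * M := by nlinarith
      _ ≤ ε := by
          rw [hδdef]
          have h3 : 3 * (ε / (3 * (M + 1))) * M ≤ 3 * (ε / (3 * (M + 1))) * (M + 1) := by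
            have h0' : (0:ℝ) ≤ 3 * (ε / (3 * (M + 1))) := by positivity
            nlinarith
          have h4 : 3 * (ε / (3 * (M + 1))) * (M + 1) = ε := by field_simp
          linarith

end Dev4
section Dev5
open MeasureTheory Set Filter Topology
open scoped ENNReal NNReal Classical
variable {d : ℕ} {K : Set (Fin d → ℝ)}

lemma continuous_relu : Continuous relu := continuous_id.max continuous_const

lemma continuous_hiddenLayer (m : ℕ → ℕ) (a : ℕ → ℕ → ℕ → ℝ) (ℓ j : ℕ) :
    Continuous fun x : Fin d → ℝ => hiddenLayer d m a x ℓ j := by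
  induction ℓ generalizing j with
  | zero =>
    simp only [hiddenLayer]
    exact continuous_relu.comp ((continuous_finset_sum _ fun i _ =>
      continuous_const.mul (continuous_apply i)).add continuous_const)
  | succ ℓ ih =>
    simp only [hiddenLayer]
    exact continuous_relu.comp (continuous_finset_sum _ fun i _ =>
      continuous_const.mul (ih i))

lemma continuous_netRealize (L : ℕ) (m : ℕ → ℕ) (c : ℕ → ℝ) (a : ℕ → ℕ → ℕ → ℝ) :
    Continuous (netRealize d L m c a) := by
  unfold netRealize
  exact continuous_finset_sum _ fun i _ =>
    continuous_const.mul (continuous_hiddenLayer m a (L-1) i)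

lemma netRealize_base (k : ℕ) (w : ℕ → Fin d → ℝ) (b : ℕ → ℝ) (e : ℕ → ℝ) (x : Fin d → ℝ) :
    netRealize d 1 (fun _ => k) e (fun _ j i => if h : i < d then w j ⟨i, h⟩ else b j) x
      = ∑ j ∈ Finset.range k, e j * relu ((∑ i : Fin d, w j i * x i) + b j) := by
  unfold netRealize
  refine Finset.sum_congr rfl fun j _ => ?_
  congr 1
  show hiddenLayer d _ _ x 0 j = _
  simp only [hiddenLayer]
  congr 2
  · refine Finset.sum_congr rfl fun i _ => ?_
    rw [dif_pos i.2]
  · rw [dif_neg (lt_irrefl d)]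

lemma sum_range_mul {M : Type*} [AddCommMonoid M] (k W : ℕ) (f : ℕ → M) :
    ∑ h ∈ Finset.range (k * W), f h
      = ∑ i ∈ Finset.range k, ∑ j ∈ Finset.range W, f (W * i + j) := by
  induction k with
  | zero => simp
  | succ k ih =>
    rw [Nat.succ_mul, Finset.sum_range_add, ih, Finset.sum_range_succ]
    congr 1
    exact Finset.sum_congr rfl fun j _ => by rw [Nat.mul_comm]

lemma encode_div {W : ℕ} (hW : 0 < W) (i : ℕ) {j : ℕ} (hj : j < W) : (W * i + j) / W = i := by
  rw [Nat.mul_add_div hW, Nat.div_eq_of_lt hj, add_zero]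

lemma encode_mod {W : ℕ} (i : ℕ) {j : ℕ} (hj : j < W) : (W * i + j) % W = j := by
  rw [Nat.mul_add_mod, Nat.mod_eq_of_lt hj]

/-- Weights padded to constant width `W`. -/
def padA (m : ℕ → ℕ) (a : ℕ → ℕ → ℕ → ℝ) : ℕ → ℕ → ℕ → ℝ := fun lam j i =>
  match lam with
  | 0 => if j < m 1 then a 0 j i else 0
  | (l+1) => if j < m (l+2) ∧ i < m (l+1) then a (l+1) j i else 0

lemma hiddenLayer_pad (m : ℕ → ℕ) (a : ℕ → ℕ → ℕ → ℝ) {W : ℕ} (hW : ∀ l, m l ≤ W)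
    (x : Fin d → ℝ) (ℓ j : ℕ) :
    hiddenLayer d (fun _ => W) (padA m a) x ℓ j
      = if j < m (ℓ+1) then hiddenLayer d m a x ℓ j else 0 := by
  induction ℓ generalizing j with
  | zero =>
    by_cases hj : j < m 1
    · simp only [hiddenLayer, padA, if_pos hj]
    · simp only [hiddenLayer, padA, if_neg hj]
      simp [relu]
  | succ ℓ ih =>
    by_cases hj : j < m (ℓ+2)
    · rw [if_pos hj]
      simp only [hiddenLayer]
      congr 1
      rw [← Finset.sum_subset (Finset.range_subset_range.mpr (hW (ℓ+1)))
        (fun i _ hi => ?_)]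
      · refine Finset.sum_congr rfl fun i hi => ?_
        have hi' := Finset.mem_range.mp hi
        rw [padA, if_pos ⟨hj, hi'⟩, ih i, if_pos hi']
      · have hi' := fun h => hi (Finset.mem_range.mpr h)
        have : ¬ i < m (ℓ+1) := fun h => (hi' h)
        rw [padA, if_neg (fun hand => this hand.2), zero_mul]
    · rw [if_neg hj]
      simp only [hiddenLayer]
      have : ∀ i ∈ Finset.range W, padA m a (ℓ+1) j i * hiddenLayer d (fun _ => W) (padA m a) x ℓ i = 0 := by
        intro i _
        rw [padA, if_neg (fun hand => hj hand.1), zero_mul]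
      rw [Finset.sum_congr rfl this]
      simp [relu]

lemma netRealize_pad (l : ℕ) (m : ℕ → ℕ) (c : ℕ → ℝ) (a : ℕ → ℕ → ℕ → ℝ) {W : ℕ}
    (hW : ∀ lam, m lam ≤ W) (x : Fin d → ℝ) :
    netRealize d (l+1) (fun _ => W) (fun i => if i < m (l+1) then c i else 0) (padA m a) x
      = netRealize d (l+1) m c a x := by
  unfold netRealize
  simp only [Nat.add_sub_cancel]
  rw [← Finset.sum_subset (Finset.range_subset_range.mpr (hW (l+1))) (fun i _ hi => ?_)]
  · refine Finset.sum_congr rfl fun i hi => ?_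
    have hi' := Finset.mem_range.mp hi
    rw [hiddenLayer_pad m a hW, if_pos hi', if_pos hi']
  · have : ¬ i < m (l+1) := fun h => hi (Finset.mem_range.mpr h)
    rw [if_neg this, zero_mul]

end Dev5
section Dev6
open MeasureTheory Set Filter Topology
open scoped ENNReal NNReal Classical
variable {d : ℕ} {K : Set (Fin d → ℝ)}

/-- Block-diagonal weights stacking `k` depth-`(l+1)` networks of constant width `W`
into the first `l+1` hidden layers of a depth-`(l+2)` network, whose `(l+2)`-nd hidden
layer has `k` units, the `i`-th one computing `relu` of the output of the `i`-th
subnetwork. -/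
lemma sum_ite_collapse {M : Type*} [AddCommMonoid M] (k i : ℕ) (hik : i < k) (T : ℕ → M) :
    ∑ i' ∈ Finset.range k, (if i' = i then T i' else 0) = T i := by
  rw [Finset.sum_ite_eq' (Finset.range k) i T, if_pos (Finset.mem_range.mpr hik)]

def stackA (l W : ℕ) (aF : ℕ → ℕ → ℕ → ℕ → ℝ) (cF : ℕ → ℕ → ℝ) : ℕ → ℕ → ℕ → ℝ :=
  fun lam g h =>
    if lam = 0 then aF (g / W) 0 (g % W) h
    else if lam < l + 1 then (if g / W = h / W then aF (g / W) lam (g % W) (h % W) else 0)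
    else if lam = l + 1 then (if h / W = g then cF g (h % W) else 0)
    else 0

def stackM (l k W : ℕ) : ℕ → ℕ := fun lam => if lam = l + 2 then k else k * W

lemma hiddenLayer_stack (l k W : ℕ) (hW : 0 < W) (aF : ℕ → ℕ → ℕ → ℕ → ℝ)
    (cF : ℕ → ℕ → ℝ) (x : Fin d → ℝ) :
    ∀ lam ≤ l, ∀ i < k, ∀ j < W,
      hiddenLayer d (stackM l k W) (stackA l W aF cF) x lam (W * i + j)
        = hiddenLayer d (fun _ => W) (aF i) x lam j := by
  intro lam
  induction lam with
  | zero =>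
    intro _ i _ j hj
    simp only [hiddenLayer]
    congr 2
    · refine Finset.sum_congr rfl fun i' _ => ?_
      rw [stackA]
      rw [if_pos rfl, encode_div hW i hj, encode_mod i hj]
    · rw [stackA, if_pos rfl, encode_div hW i hj, encode_mod i hj]
  | succ lam ih =>
    intro hlam i hik j hj
    have hlam' : lam ≤ l := le_trans (Nat.le_succ lam) hlam
    simp only [hiddenLayer]
    congr 1
    have hM : stackM l k W (lam + 1) = k * W := by
      rw [stackM, if_neg (by omega)]
    rw [hM, sum_range_mul k W]
    have hA : ∀ i' < k, ∀ j' < W,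
        stackA l W aF cF (lam+1) (W * i + j) (W * i' + j')
          = if i' = i then aF i (lam+1) j j' else 0 := by
      intro i' _ j' hj'
      rw [stackA, if_neg (Nat.succ_ne_zero lam), if_pos (by omega),
        encode_div hW i hj, encode_mod i hj, encode_div hW i' hj', encode_mod i' hj']
      by_cases h : i' = i
      · rw [if_pos h.symm, if_pos h]
      · rw [if_neg (fun hh => h hh.symm), if_neg h]
    calc ∑ i' ∈ Finset.range k, ∑ j' ∈ Finset.range W,
          stackA l W aF cF (lam+1) (W * i + j) (W * i' + j')
            * hiddenLayer d (stackM l k W) (stackA l W aF cF) x lam (W * i' + j')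
        = ∑ i' ∈ Finset.range k,
            (if i' = i then ∑ j' ∈ Finset.range W, aF i (lam+1) j j'
              * hiddenLayer d (stackM l k W) (stackA l W aF cF) x lam (W * i' + j') else 0) := by
          refine Finset.sum_congr rfl fun i' hi' => ?_
          by_cases h : i' = i
          · rw [if_pos h]
            refine Finset.sum_congr rfl fun j' hj' => ?_
            rw [hA i' (Finset.mem_range.mp hi') j' (Finset.mem_range.mp hj'), if_pos h]
          · rw [if_neg h]
            refine Finset.sum_eq_zero fun j' hj' => ?_
            rw [hA i' (Finset.mem_range.mp hi') j' (Finset.mem_range.mp hj'), if_neg h, zero_mul]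
      _ = ∑ j' ∈ Finset.range W, aF i (lam+1) j j'
            * hiddenLayer d (stackM l k W) (stackA l W aF cF) x lam (W * i + j') :=
          sum_ite_collapse k i hik (fun i' => ∑ j' ∈ Finset.range W, aF i (lam+1) j j'
            * hiddenLayer d (stackM l k W) (stackA l W aF cF) x lam (W * i' + j'))
      _ = ∑ j' ∈ Finset.range W, aF i (lam+1) j j' * hiddenLayer d (fun _ => W) (aF i) x lam j' := by
          refine Finset.sum_congr rfl fun j' hj' => ?_
          rw [ih hlam' i hik j' (Finset.mem_range.mp hj')]

lemma netRealize_stack (l k W : ℕ) (hW : 0 < W) (aF : ℕ → ℕ → ℕ → ℕ → ℝ)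
    (cF : ℕ → ℕ → ℝ) (e : ℕ → ℝ) (x : Fin d → ℝ) :
    netRealize d (l+2) (stackM l k W) e (stackA l W aF cF) x
      = ∑ i ∈ Finset.range k, e i * relu (netRealize d (l+1) (fun _ => W) (cF i) (aF i) x) := by
  unfold netRealize
  simp only [Nat.add_sub_cancel]
  have hMtop : stackM l k W (l+2) = k := by rw [stackM, if_pos rfl]
  rw [hMtop]
  refine Finset.sum_congr rfl fun i hi => ?_
  have hik := Finset.mem_range.mp hi
  congr 1
  show hiddenLayer d (stackM l k W) (stackA l W aF cF) x (l+1) i = _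
  simp only [hiddenLayer]
  congr 1
  have hM : stackM l k W (l+1) = k * W := by rw [stackM, if_neg (by omega)]
  rw [hM, sum_range_mul k W]
  have hA : ∀ i' < k, ∀ j' < W,
      stackA l W aF cF (l+1) i (W * i' + j') = if i' = i then cF i j' else 0 := by
    intro i' _ j' hj'
    rw [stackA, if_neg (Nat.succ_ne_zero l), if_neg (lt_irrefl (l+1)), if_pos rfl,
      encode_div hW i' hj', encode_mod i' hj']
  calc ∑ i' ∈ Finset.range k, ∑ j' ∈ Finset.range W,
        stackA l W aF cF (l+1) i (W * i' + j')
          * hiddenLayer d (stackM l k W) (stackA l W aF cF) x l (W * i' + j')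
      = ∑ i' ∈ Finset.range k,
          (if i' = i then ∑ j' ∈ Finset.range W, cF i j'
            * hiddenLayer d (stackM l k W) (stackA l W aF cF) x l (W * i' + j') else 0) := by
        refine Finset.sum_congr rfl fun i' hi' => ?_
        by_cases h : i' = i
        · rw [if_pos h]
          refine Finset.sum_congr rfl fun j' hj' => ?_
          rw [hA i' (Finset.mem_range.mp hi') j' (Finset.mem_range.mp hj'), if_pos h]
        · rw [if_neg h]
          refine Finset.sum_eq_zero fun j' hj' => ?_
          rw [hA i' (Finset.mem_range.mp hi') j' (Finset.mem_range.mp hj'), if_neg h, zero_mul]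
    _ = ∑ j' ∈ Finset.range W, cF i j'
          * hiddenLayer d (stackM l k W) (stackA l W aF cF) x l (W * i + j') :=
        sum_ite_collapse k i hik (fun i' => ∑ j' ∈ Finset.range W, cF i j'
          * hiddenLayer d (stackM l k W) (stackA l W aF cF) x l (W * i' + j'))
    _ = ∑ j' ∈ Finset.range W, cF i j' * hiddenLayer d (fun _ => W) (aF i) x l j' := by
        refine Finset.sum_congr rfl fun j' hj' => ?_
        rw [hiddenLayer_stack l k W hW aF cF x l (le_refl l) i hik j' (Finset.mem_range.mp hj')]

end Dev6
section Dev7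
set_option maxHeartbeats 1000000
open MeasureTheory Set Filter Topology
open scoped ENNReal NNReal Classical
variable {d : ℕ} {K : Set (Fin d → ℝ)}

lemma assemble (hK : IsCompact K) {R : ℝ} (hR0 : 0 ≤ R)
    (hR : ∀ x : K, ∀ i, |(x : Fin d → ℝ) i| ≤ R)
    (ℓ : ℕ) (P : C(K, ℝ) → Prop)
    (hP : ∀ g : C(K, ℝ), treeNorm K ℓ g ≤ 1 → ∀ δ : ℝ, 0 < δ →
      ∃ h : C(K, ℝ), P h ∧ treeNorm K ℓ h ≤ 1 ∧ ∀ x : K, |h x - g x| ≤ δ)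
    (f : C(K, ℝ)) (hf : treeNorm K (ℓ+1) f ≠ ⊤) {ε : ℝ} (hε : 0 < ε) :
    ∃ (k : ℕ) (h : ℕ → C(K, ℝ)) (e : ℕ → ℝ),
      (∀ i < k, P (h i) ∧ treeNorm K ℓ (h i) ≤ 1) ∧
      ENNReal.ofReal (∑ i ∈ Finset.range k, |e i|) ≤ treeNorm K (ℓ+1) f ∧
      ∀ x : K, |(∑ i ∈ Finset.range k, e i * relu (h i x)) - f x| ≤ ε := by
  classical
  set B : ℝ := max R 1 with hBdef
  have hB1 : (1:ℝ) ≤ B := le_max_right _ _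
  have hB0 : (0:ℝ) ≤ B := le_trans zero_le_one hB1
  set t := treeNorm K (ℓ+1) f with htdef
  rcases eq_or_ne t 0 with ht0 | ht0
  · -- f ≡ 0
    refine ⟨0, fun _ => 0, fun _ => 0, by omega, by simp, ?_⟩
    intro x
    have hb := (treeNorm_bounds hR0 hR ℓ f hf).1 x
    rw [← htdef, ht0] at hb
    simp only [ENNReal.toReal_zero, zero_mul] at hb
    simp only [Finset.range_zero, Finset.sum_empty, zero_sub, abs_neg]
    have : |f x| = 0 := le_antisymm hb (abs_nonneg _)
    rw [this]; exact le_of_lt hε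
  · set tR := t.toReal with htR
    have htRpos : 0 < tR := ENNReal.toReal_pos ht0 hf
    set H : Set C(K, ℝ) := {g : C(K, ℝ) | treeNorm K ℓ g ≤ 1} with hHdef
    have hHb : ∀ g ∈ H, (∀ x : K, |g x| ≤ B) ∧ ∀ x y : K, |g x - g y| ≤ dist x y :=
      fun g hg => unitBall_bounds hR0 hR ℓ g hg
    have h0H : (0 : C(K, ℝ)) ∈ H := by
      show treeNorm K ℓ (0 : C(K, ℝ)) ≤ 1
      rw [treeNorm_zero_fun]; exact zero_le
    -- error budget
    set ε1 : ℝ := ε / 8 with hε1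
    set η : ℝ := min 1 (ε / (4 * (B + 1))) with hη
    set ε3 : ℝ := min 1 (ε / (4 * (tR + 1))) with hε3
    have hε1pos : 0 < ε1 := by rw [hε1]; positivity
    have hηpos : 0 < η := by rw [hη]; positivity
    have hε3pos : 0 < ε3 := by rw [hε3]; positivity
    -- representation
    have hfB : barronNorm K H f ≠ ⊤ := by rw [hHdef, ← treeNorm_succ]; exact hf
    obtain ⟨μp, μn, hrep, hmass⟩ := exists_rep hfB (ε := ENNReal.ofReal η) (by simp [hηpos])
    obtain ⟨hfp, hfn, hcp, hcn, heq⟩ := hrep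
    haveI := hfp; haveI := hfn
    have htB : barronNorm K H f = t := by rw [htdef, treeNorm_succ, hHdef]
    have hmass' : (μp univ).toReal + (μn univ).toReal ≤ tR + η := by
      have h2 : (μp univ + μn univ).toReal ≤ (barronNorm K H f + ENNReal.ofReal η).toReal := by
        refine ENNReal.toReal_mono (ENNReal.add_ne_top.2 ⟨hfB, ENNReal.ofReal_ne_top⟩) hmass.le
      rw [ENNReal.toReal_add (measure_ne_top _ _) (measure_ne_top _ _)] at h2
      rwa [ENNReal.toReal_add hfB ENNReal.ofReal_ne_top, ENNReal.toReal_ofReal hηpos.le,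
        htB] at h2
    -- discretize both parts
    obtain ⟨k1, g1, c1, hg1H, hc1nn, hc1sum, hd1⟩ :=
      discretize hK h0H hHb μp hcp hε1pos
    obtain ⟨k2, g2, c2, hg2H, hc2nn, hc2sum, hd2⟩ :=
      discretize hK h0H hHb μn hcn hε1pos
    -- inner approximation
    have hchoice : ∀ gg : C(K, ℝ), gg ∈ H →
        ∃ hh : C(K, ℝ), P hh ∧ treeNorm K ℓ hh ≤ 1 ∧ ∀ x : K, |hh x - gg x| ≤ ε3 :=
      fun gg hgg => hP gg hgg ε3 hε3pos
    set g : ℕ → C(K, ℝ) := fun i => if i < k1 then g1 i else g2 (i - k1) with hgdef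
    set k := k1 + k2 with hkdef
    have hgH : ∀ i < k, g i ∈ H := by
      intro i hi
      show (if i < k1 then g1 i else g2 (i - k1)) ∈ H
      by_cases h : i < k1
      · rw [if_pos h]; exact hg1H i h
      · rw [if_neg h]; exact hg2H (i - k1) (by omega)
    have hex : ∀ i : ℕ, ∃ hh : C(K, ℝ), P hh ∧ treeNorm K ℓ hh ≤ 1 ∧
        (i < k → ∀ x : K, |hh x - g i x| ≤ ε3) := by
      intro i
      by_cases hi : i < k
      · obtain ⟨hh, h1, h2, h3⟩ := hchoice (g i) (hgH i hi)
        exact ⟨hh, h1, h2, fun _ => h3⟩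
      · obtain ⟨hh, h1, h2, _⟩ := hchoice 0 h0H
        exact ⟨hh, h1, h2, fun h => absurd h hi⟩
    choose h hPh hh1 hclose using hex
    set e0 : ℕ → ℝ := fun i => if i < k1 then c1 i else -(c2 (i - k1)) with he0def
    set S' : ℝ := ∑ i ∈ Finset.range k, |e0 i| with hS'def
    have habs : ∀ i < k, |e0 i| = if i < k1 then c1 i else c2 (i - k1) := by
      intro i hi
      show |if i < k1 then c1 i else -(c2 (i - k1))| = _
      by_cases h : i < k1
      · rw [if_pos h, if_pos h, abs_of_nonneg (hc1nn i h)]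
      · rw [if_neg h, if_neg h, abs_neg, abs_of_nonneg (hc2nn (i - k1) (by omega))]
    have hS'eq : S' = (∑ i ∈ Finset.range k1, c1 i) + ∑ i ∈ Finset.range k2, c2 i := by
      rw [hS'def, hkdef, Finset.sum_range_add]
      congr 1
      · refine Finset.sum_congr rfl fun i hi => ?_
        have hi' := Finset.mem_range.mp hi
        rw [habs i (by omega), if_pos hi']
      · refine Finset.sum_congr rfl fun j hj => ?_
        rw [habs (k1 + j) (by have := Finset.mem_range.mp hj; omega), if_neg (by omega),
          Nat.add_sub_cancel_left]
    have hS'nn : 0 ≤ S' := by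
      rw [hS'def]; exact Finset.sum_nonneg fun i _ => abs_nonneg _
    have hS'le : S' ≤ tR + η := by
      rw [hS'eq]
      exact le_trans (add_le_add hc1sum hc2sum) hmass'
    set lam : ℝ := tR / max S' tR with hlam
    have hmaxpos : 0 < max S' tR := lt_of_lt_of_le htRpos (le_max_right _ _)
    have hlam01 : 0 < lam ∧ lam ≤ 1 := by
      constructor
      · rw [hlam]; positivity
      · rw [hlam, div_le_one hmaxpos]; exact le_max_right _ _
    have hlamS' : lam * S' ≤ tR := by
      rw [hlam, div_mul_eq_mul_div, div_le_iff₀ hmaxpos]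
      have : S' ≤ max S' tR := le_max_left _ _
      nlinarith
    have h1lamS' : (1 - lam) * S' ≤ η := by
      rcases le_or_gt S' tR with hcase | hcase
      · have : lam = tR / max S' tR := hlam
        have hmax : max S' tR = tR := max_eq_right hcase
        have : lam = 1 := by rw [hlam, hmax, div_self (ne_of_gt htRpos)]
        rw [this]; simpa using hηpos.le
      · have hmax : max S' tR = S' := max_eq_left hcase.le
        have hS'ne : S' ≠ 0 := ne_of_gt (lt_trans htRpos hcase)
        have : (1 - lam) * S' = S' - tR := by
          rw [hlam, hmax]
          field_simp
        rw [this]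
        linarith [hS'le]
    set e : ℕ → ℝ := fun i => lam * e0 i with hedef
    refine ⟨k, h, e, fun i hi => ⟨hPh i, hh1 i⟩, ?_, ?_⟩
    · -- mass bound
      have : ∑ i ∈ Finset.range k, |e i| = lam * S' := by
        rw [hS'def, Finset.mul_sum]
        refine Finset.sum_congr rfl fun i _ => ?_
        rw [hedef, abs_mul, abs_of_nonneg hlam01.1.le]
      rw [this]
      calc ENNReal.ofReal (lam * S') ≤ ENNReal.ofReal tR := ENNReal.ofReal_le_ofReal hlamS'
        _ = t := by rw [htR, ENNReal.ofReal_toReal hf]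
    · -- error bound
      intro x
      have hT3p := hd1 x
      have hT3n := hd2 x
      -- |Σ e0 relu(g) − f x| ≤ 2 ε1
      have hsum_split : ∑ i ∈ Finset.range k, e0 i * relu (g i x)
          = (∑ i ∈ Finset.range k1, c1 i * relu (g1 i x))
            - ∑ i ∈ Finset.range k2, c2 i * relu (g2 i x) := by
        rw [hkdef, Finset.sum_range_add, sub_eq_add_neg, ← Finset.sum_neg_distrib]
        congr 1
        · refine Finset.sum_congr rfl fun i hi => ?_
          have hi' := Finset.mem_range.mp hi
          show (if i < k1 then c1 i else -(c2 (i - k1)))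
              * relu ((if i < k1 then g1 i else g2 (i - k1)) x) = _
          rw [if_pos hi', if_pos hi']
        · refine Finset.sum_congr rfl fun j hj => ?_
          show (if k1 + j < k1 then c1 (k1 + j) else -(c2 (k1 + j - k1)))
              * relu ((if k1 + j < k1 then g1 (k1 + j) else g2 (k1 + j - k1)) x) = _
          rw [if_neg (show ¬ k1 + j < k1 by omega), if_neg (show ¬ k1 + j < k1 by omega),
            Nat.add_sub_cancel_left]
          ring
      have hT3 : |(∑ i ∈ Finset.range k, e0 i * relu (g i x)) - f x| ≤ 2 * ε1 := by
        rw [hsum_split, heq x]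
        have : (∑ i ∈ Finset.range k1, c1 i * relu (g1 i x))
            - (∑ i ∈ Finset.range k2, c2 i * relu (g2 i x))
            - ((∫ gg : C(K, ℝ), relu (gg x) ∂μp) - ∫ gg : C(K, ℝ), relu (gg x) ∂μn)
          = ((∑ i ∈ Finset.range k1, c1 i * relu (g1 i x)) - ∫ gg : C(K, ℝ), relu (gg x) ∂μp)
            - ((∑ i ∈ Finset.range k2, c2 i * relu (g2 i x))
              - ∫ gg : C(K, ℝ), relu (gg x) ∂μn) := by ring
        rw [this]
        refine le_trans (abs_sub _ _) ?_
        have hp' : |(∑ i ∈ Finset.range k1, c1 i * relu (g1 i x))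
            - ∫ gg : C(K, ℝ), relu (gg x) ∂μp| ≤ ε1 := by
          rw [abs_sub_comm]; exact hT3p
        have hn' : |(∑ i ∈ Finset.range k2, c2 i * relu (g2 i x))
            - ∫ gg : C(K, ℝ), relu (gg x) ∂μn| ≤ ε1 := by
          rw [abs_sub_comm]; exact hT3n
        linarith
      -- |Σ e0 relu(h) − Σ e0 relu(g)| ≤ S' ε3
      have hT2 : |(∑ i ∈ Finset.range k, e0 i * relu (h i x))
          - ∑ i ∈ Finset.range k, e0 i * relu (g i x)| ≤ S' * ε3 := by
        rw [← Finset.sum_sub_distrib]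
        refine le_trans (Finset.abs_sum_le_sum_abs _ _) ?_
        rw [hS'def, Finset.sum_mul]
        refine Finset.sum_le_sum fun i hi => ?_
        have hi' := Finset.mem_range.mp hi
        rw [← mul_sub, abs_mul]
        refine mul_le_mul_of_nonneg_left ?_ (abs_nonneg _)
        refine le_trans (relu_sub_relu _ _) (hclose i hi' x)
      -- |relu (h i x)| ≤ B + ε3
      have hhb : ∀ i < k, relu (h i x) ≤ B + ε3 := by
        intro i hi
        have h1 : |h i x - g i x| ≤ ε3 := hclose i hi x
        have h2 : |g i x| ≤ B := (hHb (g i) (hgH i hi)).1 x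
        have := relu_abs_le (h i x)
        have h3 : |h i x| ≤ B + ε3 := by
          calc |h i x| ≤ |g i x| + |h i x - g i x| := by
                have := abs_sub_abs_le_abs_sub (h i x) (g i x)
                have h4 := abs_add_le (g i x) (h i x - g i x)
                calc |h i x| = |g i x + (h i x - g i x)| := by ring_nf
                  _ ≤ |g i x| + |h i x - g i x| := abs_add_le _ _
            _ ≤ B + ε3 := add_le_add h2 h1
        exact le_trans (le_trans (le_abs_self _) (relu_abs_le _)) h3
      have hT1 : |(∑ i ∈ Finset.range k, e i * relu (h i x))
          - ∑ i ∈ Finset.range k, e0 i * relu (h i x)| ≤ (1 - lam) * S' * (B + ε3) := by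
        rw [← Finset.sum_sub_distrib]
        refine le_trans (Finset.abs_sum_le_sum_abs _ _) ?_
        have : (1 - lam) * S' * (B + ε3) = ∑ i ∈ Finset.range k, (1 - lam) * |e0 i| * (B + ε3) := by
          rw [hS'def, Finset.mul_sum, Finset.sum_mul]
        rw [this]
        refine Finset.sum_le_sum fun i hi => ?_
        have hi' := Finset.mem_range.mp hi
        rw [hedef]
        have : lam * e0 i * relu (h i x) - e0 i * relu (h i x)
            = -((1 - lam) * e0 i * relu (h i x)) := by ring
        rw [this, abs_neg, abs_mul, abs_mul, abs_of_nonneg (by linarith [hlam01.2] : (0:ℝ) ≤ 1 - lam)]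
        refine mul_le_mul_of_nonneg_left ?_ (mul_nonneg (by linarith [hlam01.2]) (abs_nonneg _))
        rw [abs_of_nonneg (relu_nonneg _)]
        exact hhb i hi'
      -- combine
      have hcomb : |(∑ i ∈ Finset.range k, e i * relu (h i x)) - f x|
          ≤ (1 - lam) * S' * (B + ε3) + S' * ε3 + 2 * ε1 := by
        calc |(∑ i ∈ Finset.range k, e i * relu (h i x)) - f x|
            = |((∑ i ∈ Finset.range k, e i * relu (h i x))
                - ∑ i ∈ Finset.range k, e0 i * relu (h i x))
              + ((∑ i ∈ Finset.range k, e0 i * relu (h i x))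
                - ∑ i ∈ Finset.range k, e0 i * relu (g i x))
              + ((∑ i ∈ Finset.range k, e0 i * relu (g i x)) - f x)| := by
              congr 1
              ring
          _ ≤ _ + _ + _ := abs_add_three _ _ _
          _ ≤ (1 - lam) * S' * (B + ε3) + S' * ε3 + 2 * ε1 :=
              add_le_add (add_le_add hT1 hT2) hT3
      refine le_trans hcomb ?_
      -- budget arithmetic
      have hb1 : (1 - lam) * S' * (B + ε3) ≤ η * (B + 1) := by
        have hε3le1 : ε3 ≤ 1 := by rw [hε3]; exact min_le_left _ _
        have h1l : 0 ≤ (1 - lam) := by linarith [hlam01.2]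
        have h1 : (1 - lam) * S' * (B + ε3) ≤ (1 - lam) * S' * (B + 1) := by
          have : (0:ℝ) ≤ (1 - lam) * S' := mul_nonneg h1l hS'nn
          nlinarith
        refine le_trans h1 ?_
        exact mul_le_mul_of_nonneg_right h1lamS' (by linarith)
      have hb2 : η * (B + 1) ≤ ε / 4 := by
        have : η ≤ ε / (4 * (B + 1)) := by rw [hη]; exact min_le_right _ _
        calc η * (B + 1) ≤ (ε / (4 * (B + 1))) * (B + 1) :=
              mul_le_mul_of_nonneg_right this (by linarith)
          _ = ε / 4 := by field_simp
      have hb3 : S' * ε3 ≤ ε / 4 + ε3 := by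
        have hε3' : ε3 ≤ ε / (4 * (tR + 1)) := by rw [hε3]; exact min_le_right _ _
        have hη1 : η ≤ 1 := by rw [hη]; exact min_le_left _ _
        have h1 : S' * ε3 ≤ (tR + 1) * ε3 := by
          refine mul_le_mul_of_nonneg_right ?_ hε3pos.le
          linarith [hS'le]
        refine le_trans h1 ?_
        have : (tR + 1) * ε3 ≤ (tR + 1) * (ε / (4 * (tR + 1))) := by
          refine mul_le_mul_of_nonneg_left hε3' (by linarith)
        refine le_trans this ?_
        have : (tR + 1) * (ε / (4 * (tR + 1))) = ε / 4 := by
          field_simp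
        rw [this]
        linarith [hε3pos.le]
      have hb4 : 2 * ε1 = ε / 4 := by rw [hε1]; ring
      have hε3le : ε3 ≤ ε / 4 := by
        rw [hε3]
        refine le_trans (min_le_right _ _) ?_
        rw [div_le_div_iff₀ (by positivity) (by norm_num)]
        nlinarith
      linarith
end Dev7
section Dev8
set_option maxHeartbeats 1000000
open MeasureTheory Set Filter Topology
open scoped ENNReal NNReal Classical
variable {d : ℕ} {K : Set (Fin d → ℝ)}

/-- `h` is the restriction to `K` of a finite ReLU network with `L` hidden layers
(of constant width). -/
def RealizableDepth (K : Set (Fin d → ℝ)) (L : ℕ) (h : C(K, ℝ)) : Prop :=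
  ∃ (W : ℕ) (c : ℕ → ℝ) (a : ℕ → ℕ → ℕ → ℝ),
    ∀ x : K, h x = netRealize d L (fun _ => W) c a (x : Fin d → ℝ)

/-- The continuous map on `K` determined by a network. -/
def netCM (K : Set (Fin d → ℝ)) (L : ℕ) (m : ℕ → ℕ) (c : ℕ → ℝ) (a : ℕ → ℕ → ℕ → ℝ) :
    C(K, ℝ) :=
  ⟨fun x : K => netRealize d L m c a (x : Fin d → ℝ),
    (continuous_netRealize L m c a).comp continuous_subtype_val⟩

lemma main_approx (hK : IsCompact K) {R : ℝ} (hR0 : 0 ≤ R)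
    (hR : ∀ x : K, ∀ i, |(x : Fin d → ℝ) i| ≤ R) :
    ∀ l : ℕ, ∀ f : C(K, ℝ), treeNorm K (l+1) f ≠ ⊤ → ∀ ε : ℝ, 0 < ε →
      ∃ G : C(K, ℝ), RealizableDepth K (l+1) G ∧
        treeNorm K (l+1) G ≤ treeNorm K (l+1) f ∧ ∀ x : K, |G x - f x| ≤ ε := by
  intro l
  induction l with
  | zero =>
    intro f hf ε hε
    set P : C(K, ℝ) → Prop := fun g =>
      ∃ (w : Fin d → ℝ) (b : ℝ), ∀ x : K, g x = (∑ i : Fin d, w i * (x : Fin d → ℝ) i) + b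
      with hPdef
    have hP : ∀ g : C(K, ℝ), treeNorm K 0 g ≤ 1 → ∀ δ : ℝ, 0 < δ →
        ∃ h : C(K, ℝ), P h ∧ treeNorm K 0 h ≤ 1 ∧ ∀ x : K, |h x - g x| ≤ δ := by
      intro g hg δ hδ
      refine ⟨g, ?_, hg, fun x => by simp [hδ.le]⟩
      have h1 : treeNorm K 0 g < ⊤ := lt_of_le_of_lt hg ENNReal.one_lt_top
      rw [treeNorm] at h1
      obtain ⟨⟨⟨w, b⟩, hrep⟩, _⟩ := iInf_lt_iff.mp h1
      exact ⟨w, b, hrep⟩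
    obtain ⟨k, h, e, hPn, hmassb, herr⟩ := assemble hK hR0 hR 0 P hP f hf hε
    have hex : ∀ i : ℕ, ∃ (w : Fin d → ℝ) (b : ℝ), i < k →
        ∀ x : K, h i x = (∑ j : Fin d, w j * (x : Fin d → ℝ) j) + b := by
      intro i
      by_cases hi : i < k
      · obtain ⟨w, b, hw⟩ := (hPn i hi).1
        exact ⟨w, b, fun _ => hw⟩
      · exact ⟨0, 0, fun hcon => absurd hcon hi⟩
    choose wv bv hwb using hex
    set G : C(K, ℝ) := netCM K 1 (fun _ => k) e
      (fun _ j i' => if hlt : i' < d then wv j ⟨i', hlt⟩ else bv j) with hGdef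
    have hGeq : ∀ x : K, G x = ∑ i ∈ Finset.range k, e i * relu (h i x) := by
      intro x
      show netRealize d 1 (fun _ => k) e _ (x : Fin d → ℝ) = _
      rw [netRealize_base k wv bv e (x : Fin d → ℝ)]
      refine Finset.sum_congr rfl fun j hj => ?_
      rw [← hwb j (Finset.mem_range.mp hj) x]
    refine ⟨G, ⟨k, e, _, fun x => rfl⟩, ?_, fun x => by rw [hGeq x]; exact herr x⟩
    exact le_trans (treeNorm_comb_le (fun i hi => (hPn i hi).2) G hGeq) hmassb
  | succ l ih =>
    intro f hf ε hε
    have hP : ∀ g : C(K, ℝ), treeNorm K (l+1) g ≤ 1 → ∀ δ : ℝ, 0 < δ →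
        ∃ h : C(K, ℝ), RealizableDepth K (l+1) h ∧ treeNorm K (l+1) h ≤ 1 ∧
          ∀ x : K, |h x - g x| ≤ δ := by
      intro g hg δ hδ
      have hgfin : treeNorm K (l+1) g ≠ ⊤ := ne_top_of_le_ne_top ENNReal.one_ne_top hg
      obtain ⟨G', hreal, hnorm, herr⟩ := ih g hgfin δ hδ
      exact ⟨G', hreal, le_trans hnorm hg, herr⟩
    obtain ⟨k, h, e, hPn, hmassb, herr⟩ :=
      assemble hK hR0 hR (l+1) (RealizableDepth K (l+1)) hP f hf hε
    have hex : ∀ i : ℕ, ∃ (W : ℕ) (c : ℕ → ℝ) (a : ℕ → ℕ → ℕ → ℝ), i < k →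
        ∀ x : K, h i x = netRealize d (l+1) (fun _ => W) c a (x : Fin d → ℝ) := by
      intro i
      by_cases hi : i < k
      · obtain ⟨W, c, a, hwca⟩ := (hPn i hi).1
        exact ⟨W, c, a, fun _ => hwca⟩
      · exact ⟨0, 0, 0, fun hcon => absurd hcon hi⟩
    choose WF cF aF hF using hex
    set W0 : ℕ := 1 + (Finset.range k).sup WF with hW0
    have hW0pos : 0 < W0 := by omega
    have hWle : ∀ i, i < k → ∀ lam : ℕ, WF i ≤ W0 := by
      intro i hi lam
      have := Finset.le_sup (f := WF) (Finset.mem_range.mpr hi)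
      omega
    set cP : ℕ → ℕ → ℝ := fun i jj => if jj < WF i then cF i jj else 0 with hcP
    set aP : ℕ → ℕ → ℕ → ℕ → ℝ := fun i => padA (fun _ => WF i) (aF i) with haP
    set W1 : ℕ := k * W0 + k with hW1
    set cQ : ℕ → ℝ := fun i => if i < stackM l k W0 (l+2) then e i else 0 with hcQ
    set G : C(K, ℝ) := netCM K (l+2) (fun _ => W1) cQ
      (padA (stackM l k W0) (stackA l W0 aP cP)) with hGdef
    have hGeq : ∀ x : K, G x = ∑ i ∈ Finset.range k, e i * relu (h i x) := by
      intro x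
      show netRealize d (l+2) (fun _ => W1) cQ _ (x : Fin d → ℝ) = _
      rw [netRealize_pad (l+1) (stackM l k W0) e (stackA l W0 aP cP)
        (fun lam => by rw [stackM]; split <;> omega) (x : Fin d → ℝ)]
      rw [netRealize_stack l k W0 hW0pos aP cP e (x : Fin d → ℝ)]
      refine Finset.sum_congr rfl fun i hi => ?_
      have hik := Finset.mem_range.mp hi
      congr 1
      rw [netRealize_pad l (fun _ => WF i) (cF i) (aF i) (hWle i hik) (x : Fin d → ℝ)]
      rw [← hF i hik x]
    refine ⟨G, ⟨W1, cQ, _, fun x => rfl⟩, ?_, fun x => by rw [hGeq x]; exact herr x⟩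
    exact le_trans (treeNorm_comb_le (fun i hi => (hPn i hi).2) G hGeq) hmassb
end Dev8
section Dev9
set_option maxHeartbeats 1000000
open MeasureTheory Set Filter Topology
open scoped ENNReal NNReal Classical
variable {d : ℕ} {K : Set (Fin d → ℝ)}

lemma holderNorm_le_bound {u : K → ℝ} {C s α : ℝ} (hC : 0 ≤ C) (hs : 0 ≤ s)
    (hα : α ∈ Set.Ioo (0:ℝ) 1)
    (hsup : ∀ x : K, |u x| ≤ s)
    (hlip : ∀ x y : K, |u x - u y| ≤ C * dist x y) :
    holderNorm K α u ≤ ENNReal.ofReal s + ENNReal.ofReal ((2*s)^(1-α) * C^α) := by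
  rw [holderNorm]
  refine add_le_add ?_ ?_
  · refine iSup_le fun x => ?_
    rw [← enorm_eq_nnnorm, ← ofReal_norm]
    exact ENNReal.ofReal_le_ofReal (hsup x)
  · refine iSup_le fun x => iSup_le fun y => ?_
    by_cases hxy : x = y
    · rw [if_pos hxy]; exact zero_le
    rw [if_neg hxy]
    refine ENNReal.div_le_of_le_mul ?_
    have hreal : |u x - u y| ≤ (2*s)^(1-α) * C^α * dist x y ^ α := by
      set a := |u x - u y| with ha
      have ha0 : (0:ℝ) ≤ a := abs_nonneg _
      rcases eq_or_lt_of_le ha0 with h0 | h0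
      · rw [← h0]; positivity
      have h1 : a ≤ 2*s := by
        have hx := hsup x; have hy := hsup y
        calc a ≤ |u x| + |u y| := abs_sub _ _
          _ ≤ 2*s := by linarith
      have h2 : a ≤ C * dist x y := hlip x y
      have heq : a = a^(1-α) * a^α := by
        rw [← Real.rpow_add h0, sub_add_cancel, Real.rpow_one]
      rw [heq]
      have hr1 : a^(1-α) ≤ (2*s)^(1-α) := Real.rpow_le_rpow ha0 h1 (by linarith [hα.2])
      have hr2 : a^α ≤ (C * dist x y)^α := Real.rpow_le_rpow ha0 h2 (le_of_lt hα.1)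
      calc a^(1-α) * a^α ≤ (2*s)^(1-α) * (C*dist x y)^α :=
            mul_le_mul hr1 hr2 (Real.rpow_nonneg ha0 _) (Real.rpow_nonneg (by linarith) _)
        _ = (2*s)^(1-α) * C^α * dist x y ^ α := by
            rw [Real.mul_rpow hC dist_nonneg]; ring
    rw [← enorm_eq_nnnorm, ← ofReal_norm]
    have hedist : edist x y = ENNReal.ofReal (dist x y) := edist_dist x y
    rw [hedist, ENNReal.ofReal_rpow_of_nonneg dist_nonneg (le_of_lt hα.1),
      ← ENNReal.ofReal_mul (by positivity)]
    exact ENNReal.ofReal_le_ofReal hreal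

lemma tendsto_holderNorm {u : ℕ → K → ℝ} {C : ℝ} (hC : 0 ≤ C)
    (hsup : ∀ n : ℕ, ∀ x : K, |u n x| ≤ 1 / ((n : ℝ) + 1))
    (hlip : ∀ n : ℕ, ∀ x y : K, |u n x - u n y| ≤ C * dist x y)
    {α : ℝ} (hα : α ∈ Set.Ioo (0:ℝ) 1) :
    Tendsto (fun n => holderNorm K α (u n)) atTop (𝓝 0) := by
  have hb : ∀ n : ℕ, holderNorm K α (u n) ≤
      ENNReal.ofReal (1 / ((n:ℝ)+1)) + ENNReal.ofReal ((2*(1/((n:ℝ)+1)))^(1-α) * C^α) :=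
    fun n => holderNorm_le_bound hC (by positivity) hα (hsup n) (hlip n)
  have h1 : Tendsto (fun n : ℕ => 1 / ((n:ℝ) + 1)) atTop (𝓝 0) :=
    tendsto_one_div_add_atTop_nhds_zero_nat
  have h2 : Tendsto (fun n : ℕ => (2*(1/((n:ℝ)+1)))^(1-α) * C^α) atTop (𝓝 0) := by
    have h2a : Tendsto (fun n : ℕ => 2*(1/((n:ℝ)+1))) atTop (𝓝 0) := by
      have := h1.const_mul (2:ℝ)
      simpa using this
    have hcont : Tendsto (fun x : ℝ => x^(1-α)) (𝓝 0) (𝓝 0) := by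
      have hc : ContinuousAt (fun x : ℝ => x^(1-α)) 0 :=
        Real.continuousAt_rpow_const 0 (1-α) (Or.inr (by linarith [hα.2]))
      have h0 : (0:ℝ)^(1-α) = 0 := Real.zero_rpow (by linarith [hα.2])
      simpa [h0] using hc.tendsto
    have := (hcont.comp h2a).mul_const (C^α)
    simpa using this
  have hlim : Tendsto (fun n : ℕ => ENNReal.ofReal (1/((n:ℝ)+1))
      + ENNReal.ofReal ((2*(1/((n:ℝ)+1)))^(1-α) * C^α)) atTop (𝓝 0) := by
    have e1 := ENNReal.tendsto_ofReal h1
    have e2 := ENNReal.tendsto_ofReal h2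
    have := e1.add e2
    simpa using this
  exact tendsto_of_tendsto_of_tendsto_of_le_of_le tendsto_const_nhds hlim
    (fun n => zero_le) hb
end Dev9
/-- For every compact `K ⊆ ℝ^d`, `L ≥ 1` and `f ∈ W^L(K)`, there is a
sequence of finite ReLU networks `f_n` with `L` hidden layers such that
`‖f_n‖_{W^L(K)} ≤ ‖f‖_{W^L(K)}` for all `n` and `f_n → f` in `C^{0,α}(K)` for every
`α < 1`. -/
theorem direct_approximation_holder {d : ℕ} (K : Set (Fin d → ℝ)) (hK : IsCompact K)
    (L : ℕ) (hL : 1 ≤ L) (F : C(K, ℝ)) (hF : treeNorm K L F ≠ ⊤) :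
    ∃ (m : ℕ → ℕ → ℕ) (c : ℕ → ℕ → ℝ) (a : ℕ → ℕ → ℕ → ℕ → ℝ) (G : ℕ → C(K, ℝ)),
      (∀ n, ∀ x : K, G n x = netRealize d L (m n) (c n) (a n) (x : Fin d → ℝ)) ∧
      (∀ n, treeNorm K L (G n) ≤ treeNorm K L F) ∧
      ∀ α ∈ Set.Ioo (0 : ℝ) 1,
        Tendsto (fun n => holderNorm K α (fun x : K => G n x - F x)) atTop (𝓝 0) := by
  classical
  obtain ⟨l, rfl⟩ : ∃ l, L = l + 1 := ⟨L - 1, by omega⟩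
  -- a bound on K
  obtain ⟨C0, hC0⟩ := hK.isBounded.exists_norm_le
  set R : ℝ := max C0 0 with hRdef
  have hR0 : 0 ≤ R := le_max_right _ _
  have hR : ∀ x : K, ∀ i, |(x : Fin d → ℝ) i| ≤ R := by
    intro x i
    calc |(x : Fin d → ℝ) i| = ‖(x : Fin d → ℝ) i‖ := rfl
      _ ≤ ‖(x : Fin d → ℝ)‖ := norm_le_pi_norm _ i
      _ ≤ C0 := hC0 _ x.2
      _ ≤ R := le_max_left _ _
  -- the approximating sequence
  have happrox : ∀ n : ℕ, ∃ G : C(K, ℝ), RealizableDepth K (l+1) G ∧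
      treeNorm K (l+1) G ≤ treeNorm K (l+1) F ∧
      ∀ x : K, |G x - F x| ≤ 1 / ((n : ℝ) + 1) :=
    fun n => main_approx hK hR0 hR l F hF (1 / ((n : ℝ) + 1)) (by positivity)
  choose G hreal hnorm herr using happrox
  choose Wn cn an hn using hreal
  refine ⟨fun n _ => Wn n, cn, an, G, fun n x => hn n x, hnorm, ?_⟩
  intro α hα
  -- uniform Lipschitz bound
  set tF : ℝ := (treeNorm K (l+1) F).toReal with htF
  have htF0 : 0 ≤ tF := ENNReal.toReal_nonneg
  have hGfin : ∀ n, treeNorm K (l+1) (G n) ≠ ⊤ :=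
    fun n => ne_top_of_le_ne_top hF (hnorm n)
  have hlip : ∀ n : ℕ, ∀ x y : K, |G n x - F x - (G n y - F y)| ≤ (2 * tF) * dist x y := by
    intro n x y
    have h1 := (treeNorm_bounds hR0 hR l (G n) (hGfin n)).2 x y
    have h2 := (treeNorm_bounds hR0 hR l F hF).2 x y
    have h3 : (treeNorm K (l+1) (G n)).toReal ≤ tF := ENNReal.toReal_mono hF (hnorm n)
    have h4 : |G n x - G n y| ≤ tF * dist x y := by
      refine le_trans h1 (mul_le_mul_of_nonneg_right h3 dist_nonneg)
    calc |G n x - F x - (G n y - F y)| = |(G n x - G n y) + (F y - F x)| := by ring_nf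
      _ ≤ |G n x - G n y| + |F y - F x| := abs_add_le _ _
      _ ≤ tF * dist x y + tF * dist x y := by
          refine add_le_add h4 ?_
          rw [abs_sub_comm]
          exact h2
      _ = (2 * tF) * dist x y := by ring
  exact tendsto_holderNorm (by linarith) (fun n x => herr n x) hlip hα
end
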